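/- arXiv:1707.05475 — 3 statements merged into one kernel-verified Lean document; each statement's English description precedes it below -/
import Mathlib

section
/- If the set {A_{i,j} : i,j ∈ H} is irreducible and aperiodic, then for all z, w ∈ ℂ∖{0} such that z ≠ |z| or w ≠ |w| (i.e. z or w is not a positive real), spr(C(z,w)) < spr(C(|z|,|w|)). -/
namespace QBD

/-- The index set `H = {-1, 0, 1}`. -/
def Hs : Finset ℤ := {-1, 0, 1}

/-- A nonnegative matrix with unit row sums. -/
def IsStochastic {n : ℕ} (M : Matrix (Fin n) (Fin n) ℝ) : Prop :=
  (∀ i j, 0 ≤ M i j) ∧ ∀ i, ∑ j, M i j = 1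

/-- `μ` is an eigenvalue of the complex matrix `M`. -/
def IsEigC {n : ℕ} (M : Matrix (Fin n) (Fin n) ℂ) (μ : ℂ) : Prop :=
  ∃ v : Fin n → ℂ, v ≠ 0 ∧ M.mulVec v = μ • v

/-- Spectral radius of a complex matrix. -/
noncomputable def spr {n : ℕ} (M : Matrix (Fin n) (Fin n) ℂ) : ℝ :=
  sSup {r : ℝ | ∃ μ : ℂ, IsEigC M μ ∧ r = ‖μ‖}

/-- Spectral radius of a real matrix. -/
noncomputable def sprR {n : ℕ} (M : Matrix (Fin n) (Fin n) ℝ) : ℝ :=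
  spr (M.map Complex.ofReal)

open Classical in
/-- `n`-step transition probabilities of a Markov kernel on a countable state space. -/
noncomputable def stepN {S : Type*} (P : S → S → ℝ) : ℕ → S → S → ℝ
  | 0, s, t => if s = t then 1 else 0
  | n + 1, s, t => ∑' u, stepN P n s u * P u t

/-- Irreducibility of a Markov kernel. -/
def ChainIrreducible {S : Type*} (P : S → S → ℝ) : Prop :=
  ∀ s t : S, ∃ n : ℕ, 1 ≤ n ∧ 0 < stepN P n s t

/-- Aperiodicity of a Markov kernel: for every state, the gcd of return times is one. -/
def ChainAperiodic {S : Type*} (P : S → S → ℝ) : Prop :=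
  ∀ s : S, ∀ d : ℕ, (∀ n : ℕ, 1 ≤ n → 0 < stepN P n s s → d ∣ n) → d = 1

/-- Kernel of the chain on `ℤ² × S0` governed everywhere by `{A_{k,l}}`. -/
def fullKernel (s0 : ℕ) (A : ℤ → ℤ → Matrix (Fin s0) (Fin s0) ℝ) :
    (ℤ × ℤ × Fin s0) → (ℤ × ℤ × Fin s0) → ℝ := fun x y =>
  A (y.1 - x.1) (y.2.1 - x.2.1) x.2.2 y.2.2

/-- `C(z,w) = Σ_{i,j∈H} A_{i,j} z^i w^j` (real arguments). -/
noncomputable def CmatR (s0 : ℕ) (A : ℤ → ℤ → Matrix (Fin s0) (Fin s0) ℝ) (z w : ℝ) :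
    Matrix (Fin s0) (Fin s0) ℝ :=
  ∑ i ∈ Hs, ∑ j ∈ Hs, (z ^ i * w ^ j) • A i j

/-- `C(z,w) = Σ_{i,j∈H} A_{i,j} z^i w^j` (complex arguments). -/
noncomputable def CmatC (s0 : ℕ) (A : ℤ → ℤ → Matrix (Fin s0) (Fin s0) ℝ) (z w : ℂ) :
    Matrix (Fin s0) (Fin s0) ℂ :=
  ∑ i ∈ Hs, ∑ j ∈ Hs, (z ^ i * w ^ j) • (A i j).map Complex.ofReal

/-- `χ(z,w) = spr(C(z,w))`. -/
noncomputable def chi (s0 : ℕ) (A : ℤ → ℤ → Matrix (Fin s0) (Fin s0) ℝ) (z w : ℝ) : ℝ :=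
  sprR (CmatR s0 A z w)

/-- `Γ̄ = {(s1,s2) : χ(e^{s1}, e^{s2}) ≤ 1}`. -/
def GammaBar (s0 : ℕ) (A : ℤ → ℤ → Matrix (Fin s0) (Fin s0) ℝ) : Set (ℝ × ℝ) :=
  {p | chi s0 A (Real.exp p.1) (Real.exp p.2) ≤ 1}

end QBD

/-- Compatibility: the complex absolute value as an `AbsoluteValue`. -/
noncomputable def Complex.abs : AbsoluteValue ℂ ℝ where
  toFun z := ‖z‖
  map_mul' := norm_mul
  nonneg' := norm_nonneg
  eq_zero' _ := norm_eq_zero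
  add_le' := norm_add_le

lemma Complex.norm_eq_abs (z : ℂ) : ‖z‖ = Complex.abs z := rfl

lemma Complex.abs_ofReal (r : ℝ) : Complex.abs (r : ℂ) = |r| := by
  rw [← Complex.norm_eq_abs, Complex.norm_real, Real.norm_eq_abs]

namespace QBDProof
open QBD Finset

lemma mem_Hs_iff (i : ℤ) : i ∈ Hs ↔ i = -1 ∨ i = 0 ∨ i = 1 := by
  simp [Hs]

section Chain
variable {s0 : ℕ} {A : ℤ → ℤ → Matrix (Fin s0) (Fin s0) ℝ}

abbrev St (s0 : ℕ) := ℤ × ℤ × Fin s0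

lemma stepN_zero {S : Type*} (P : S → S → ℝ) (s t : S) [Decidable (s = t)] :
    stepN P 0 s t = if s = t then 1 else 0 := by
  unfold stepN; congr

lemma stepN_succ {S : Type*} (P : S → S → ℝ) (n : ℕ) (s t : S) :
    stepN P (n+1) s t = ∑' u, stepN P n s u * P u t := rfl

lemma kernel_nonneg (hAnn : ∀ i j : ℤ, ∀ k l, 0 ≤ A i j k l) (x y : St s0) :
    0 ≤ fullKernel s0 A x y := hAnn _ _ _ _

lemma stepN_nonneg (hAnn : ∀ i j : ℤ, ∀ k l, 0 ≤ A i j k l) :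
    ∀ (n : ℕ) (x y : St s0), 0 ≤ stepN (fullKernel s0 A) n x y := by
  intro n
  induction n with
  | zero => intro x y; classical rw [stepN_zero]; positivity
  | succ n ih =>
    intro x y
    rw [stepN_succ]
    exact tsum_nonneg fun u => mul_nonneg (ih x u) (kernel_nonneg hAnn u y)

lemma A_far (hAsupp : ∀ i j : ℤ, ¬(i ∈ Hs ∧ j ∈ Hs) → A i j = 0)
    {i j : ℤ} (h : 1 < |i| ∨ 1 < |j|) : A i j = 0 := by
  apply hAsupp
  rw [mem_Hs_iff, mem_Hs_iff]
  simp only [lt_abs] at h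
  omega

lemma stepN_far (hAsupp : ∀ i j : ℤ, ¬(i ∈ Hs ∧ j ∈ Hs) → A i j = 0) :
    ∀ (n : ℕ) (x y : St s0), ((n : ℤ) < |y.1 - x.1| ∨ (n : ℤ) < |y.2.1 - x.2.1|) →
      stepN (fullKernel s0 A) n x y = 0 := by
  intro n
  induction n with
  | zero =>
    intro x y h
    classical rw [stepN_zero]
    rcases eq_or_ne x y with rfl | hne
    · simp at h
    · simp [hne]
  | succ n ih =>
    intro x y h
    rw [stepN_succ]
    have : ∀ u : St s0, stepN (fullKernel s0 A) n x u * fullKernel s0 A u y = 0 := by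
      intro u
      by_cases hu : ((n : ℤ) < |u.1 - x.1| ∨ (n : ℤ) < |u.2.1 - x.2.1|)
      · rw [ih x u hu, zero_mul]
      · push_neg at hu
        simp only [abs_le] at hu
        have : fullKernel s0 A u y = 0 := by
          unfold fullKernel
          rw [A_far hAsupp]
          · rfl
          · push_cast at h ⊢
            simp only [lt_abs] at h ⊢
            omega
        rw [this, mul_zero]
    simp only [this, tsum_zero]

end Chain
end QBDProof

section Chain2
namespace QBDProof
open QBD Finset
variable {s0 : ℕ} {A : ℤ → ℤ → Matrix (Fin s0) (Fin s0) ℝ}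

/-- Finset containing the support of `stepN n x ·`. -/
noncomputable def ballF (n : ℕ) (x : St s0) : Finset (St s0) :=
  (Finset.Icc (x.1 - n) (x.1 + n)) ×ˢ ((Finset.Icc (x.2.1 - n) (x.2.1 + n)) ×ˢ Finset.univ)

lemma stepN_eq_zero_of_not_mem_ballF (hAsupp : ∀ i j : ℤ, ¬(i ∈ Hs ∧ j ∈ Hs) → A i j = 0)
    (n : ℕ) (x : St s0) {y : St s0} (hy : y ∉ ballF n x) :
    stepN (fullKernel s0 A) n x y = 0 := by
  apply stepN_far hAsupp
  simp only [ballF, Finset.mem_product, Finset.mem_Icc, Finset.mem_univ, and_true] at hy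
  simp only [lt_abs]
  omega

lemma summable_step (hAsupp : ∀ i j : ℤ, ¬(i ∈ Hs ∧ j ∈ Hs) → A i j = 0)
    (n : ℕ) (x : St s0) (g : St s0 → ℝ) :
    Summable (fun u => stepN (fullKernel s0 A) n x u * g u) := by
  apply summable_of_ne_finset_zero (s := ballF n x)
  intro u hu
  rw [stepN_eq_zero_of_not_mem_ballF hAsupp n x hu, zero_mul]

lemma stepN_succ_sum (hAsupp : ∀ i j : ℤ, ¬(i ∈ Hs ∧ j ∈ Hs) → A i j = 0)
    (n : ℕ) (x y : St s0) :
    stepN (fullKernel s0 A) (n+1) x y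
      = ∑ u ∈ ballF n x, stepN (fullKernel s0 A) n x u * fullKernel s0 A u y := by
  rw [stepN_succ]
  apply tsum_eq_sum
  intro u hu
  rw [stepN_eq_zero_of_not_mem_ballF hAsupp n x hu, zero_mul]

lemma chapman (hAsupp : ∀ i j : ℤ, ¬(i ∈ Hs ∧ j ∈ Hs) → A i j = 0)
    (hAnn : ∀ i j : ℤ, ∀ k l, 0 ≤ A i j k l) :
    ∀ (n m : ℕ) (x u y : St s0),
      stepN (fullKernel s0 A) m x u * stepN (fullKernel s0 A) n u y
        ≤ stepN (fullKernel s0 A) (m + n) x y := by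
  intro n
  induction n with
  | zero =>
    intro m x u y
    classical
    rw [stepN_zero]
    rcases eq_or_ne u y with rfl | hne
    · simp
    · simp [hne, stepN_nonneg hAnn]
  | succ n ih =>
    intro m x u y
    have h1 : stepN (fullKernel s0 A) m x u * stepN (fullKernel s0 A) (n+1) u y
        = ∑' v, stepN (fullKernel s0 A) m x u *
            (stepN (fullKernel s0 A) n u v * fullKernel s0 A v y) := by
      rw [stepN_succ, tsum_mul_left]
    rw [h1, show m + (n+1) = (m+n)+1 by ring, stepN_succ]
    apply Summable.tsum_le_tsum
    · intro v
      rw [← mul_assoc]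
      exact mul_le_mul_of_nonneg_right (ih m x u v) (kernel_nonneg hAnn v y)
    · exact (summable_step hAsupp n u _).mul_left _
    · exact summable_step hAsupp (m+n) x _
  
lemma stepN_pos_trans (hAsupp : ∀ i j : ℤ, ¬(i ∈ Hs ∧ j ∈ Hs) → A i j = 0)
    (hAnn : ∀ i j : ℤ, ∀ k l, 0 ≤ A i j k l)
    {m n : ℕ} {x u y : St s0} (h1 : 0 < stepN (fullKernel s0 A) m x u)
    (h2 : 0 < stepN (fullKernel s0 A) n u y) :
    0 < stepN (fullKernel s0 A) (m + n) x y :=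
  lt_of_lt_of_le (mul_pos h1 h2) (chapman hAsupp hAnn n m x u y)

/-- Translation equivalence on the state space. -/
def trEquiv (s0 : ℕ) (d : ℤ × ℤ) : St s0 ≃ St s0 :=
  (Equiv.addRight d.1).prodCongr ((Equiv.addRight d.2).prodCongr (Equiv.refl _))

lemma trEquiv_apply (d : ℤ × ℤ) (x : St s0) :
    trEquiv s0 d x = (x.1 + d.1, x.2.1 + d.2, x.2.2) := rfl

lemma kernel_tr (d : ℤ × ℤ) (u v : St s0) :
    fullKernel s0 A (trEquiv s0 d u) (trEquiv s0 d v) = fullKernel s0 A u v := by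
  simp [fullKernel, trEquiv_apply]

lemma stepN_tr (d : ℤ × ℤ) :
    ∀ (n : ℕ) (x y : St s0),
      stepN (fullKernel s0 A) n (trEquiv s0 d x) (trEquiv s0 d y)
        = stepN (fullKernel s0 A) n x y := by
  intro n
  induction n with
  | zero =>
    intro x y
    classical
    rw [stepN_zero, stepN_zero]
    simp [Equiv.apply_eq_iff_eq]
  | succ n ih =>
    intro x y
    rw [stepN_succ, stepN_succ]
    rw [← Equiv.tsum_eq (trEquiv s0 d) (fun u => stepN (fullKernel s0 A) n (trEquiv s0 d x) u * fullKernel s0 A u (trEquiv s0 d y))]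
    congr 1
    funext u
    rw [ih, kernel_tr]

end QBDProof
end Chain2

namespace QBDProof

section NumSemigroup

variable {R : Set ℕ}

/-- The subgroup of differences of elements of `R ∪ {0}`. -/
def diffGroup (R : Set ℕ) (hadd : ∀ a ∈ R, ∀ b ∈ R, a + b ∈ R) : AddSubgroup ℤ where
  carrier := {z : ℤ | ∃ a ∈ insert 0 R, ∃ b ∈ insert 0 R, z = (a : ℤ) - b}
  zero_mem' := ⟨0, Set.mem_insert _ _, 0, Set.mem_insert _ _, by simp⟩
  add_mem' := by
    rintro x y ⟨a, ha, b, hb, rfl⟩ ⟨c, hc, d, hd, rfl⟩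
    have hT : ∀ p ∈ insert 0 R, ∀ q ∈ insert 0 R, p + q ∈ insert 0 R := by
      rintro p (rfl | hp) q (rfl | hq)
      · simp
      · simpa using Set.mem_insert_iff.2 (Or.inr hq)
      · simpa using Set.mem_insert_iff.2 (Or.inr hp)
      · exact Set.mem_insert_iff.2 (Or.inr (hadd p hp q hq))
    exact ⟨a + c, hT a ha c hc, b + d, hT b hb d hd, by push_cast; ring⟩
  neg_mem' := by
    rintro x ⟨a, ha, b, hb, rfl⟩
    exact ⟨b, hb, a, ha, by ring⟩

/-- A subset of `ℕ` closed under addition whose elements have no common divisor `> 1`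
contains all sufficiently large naturals. -/
lemma numerical_semigroup (hadd : ∀ a ∈ R, ∀ b ∈ R, a + b ∈ R)
    (hgcd : ∀ d : ℕ, (∀ n ∈ R, d ∣ n) → d = 1) :
    ∃ N : ℕ, ∀ n, N ≤ n → n ∈ R := by
  classical
  set G := diffGroup R hadd with hG
  -- G is cyclic
  obtain ⟨g, hg⟩ := Int.subgroup_cyclic G
  have hmemG : ∀ n ∈ R, (n : ℤ) ∈ G := fun n hn =>
    ⟨n, Set.mem_insert_iff.2 (Or.inr hn), 0, Set.mem_insert _ _, by simp⟩
  have hdvd : ∀ x ∈ G, g ∣ x := by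
    intro x hx
    rw [hg, AddSubgroup.mem_closure_singleton] at hx
    obtain ⟨k, rfl⟩ := hx
    exact ⟨k, by simp [smul_eq_mul, mul_comm]⟩
  have hg1 : g.natAbs = 1 := by
    apply hgcd
    intro n hn
    have := hdvd _ (hmemG n hn)
    exact Int.ofNat_dvd.mp (Int.natAbs_dvd.mpr this : (g.natAbs : ℤ) ∣ n)
  -- 1 ∈ G
  have h1G : (1 : ℤ) ∈ G := by
    rw [hg, AddSubgroup.mem_closure_singleton]
    rcases Int.natAbs_eq g with h | h
    · exact ⟨1, by rw [one_smul, h, hg1]; norm_num⟩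
    · exact ⟨-1, by rw [neg_smul, one_smul, h, hg1]; norm_num⟩
  obtain ⟨p, hp, q, hq, hpq⟩ := h1G
  have hpq' : p = q + 1 := by omega
  -- helper: sums of copies
  have hmul : ∀ a ∈ R, ∀ k : ℕ, 1 ≤ k → k * a ∈ R := by
    intro a ha k
    induction k with
    | zero => omega
    | succ k ih =>
      intro _
      rcases Nat.eq_zero_or_pos k with hk0 | hk
      · subst hk0; simpa using ha
      · have := hadd _ (ih hk) _ ha
        rw [show (k+1) * a = k * a + a by ring]
        exact this
  have haddmem : ∀ a ∈ R, ∀ b, b = 0 ∨ b ∈ R → a + b ∈ R := by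
    rintro a ha b (rfl | hb)
    · simpa using ha
    · exact hadd a ha b hb
  rcases Nat.eq_zero_or_pos q with hq0 | hq1
  · -- q = 0, so p = 1 ∈ R
    subst hq0
    have hp1 : p = 1 := by omega
    have h1R : (1 : ℕ) ∈ R := by
      rcases Set.mem_insert_iff.1 hp with h0 | h
      · omega
      · rwa [hp1] at h
    refine ⟨1, fun n hn => ?_⟩
    have := hmul 1 h1R n hn
    simpa using this
  · -- q ≥ 1
    have hqR : q ∈ R := by
      rcases Set.mem_insert_iff.1 hq with h0 | h
      · omega
      · exact h
    have hpR : p ∈ R := by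
      rcases Set.mem_insert_iff.1 hp with h0 | h
      · omega
      · exact h
    refine ⟨q * q, fun n hn => ?_⟩
    set c := n / q with hc
    set rr := n % q with hrr
    have h1 : q * c + rr = n := Nat.div_add_mod n q
    have hcq : q ≤ c := (Nat.le_div_iff_mul_le hq1).2 hn
    have hrrq : rr < q := Nat.mod_lt _ hq1
    have hle : rr ≤ c := le_of_lt (lt_of_lt_of_le hrrq hcq)
    have h3 : rr * q ≤ c * q := Nat.mul_le_mul_right _ hle
    have heq : n = (c - rr) * q + rr * p := by
      rw [hpq', Nat.sub_mul, mul_add, mul_one, ← add_assoc, Nat.sub_add_cancel h3,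
        ← mul_comm q c]
      omega
    have hmem1 : (c - rr) * q ∈ R := hmul q hqR (c - rr) (by omega)
    rcases Nat.eq_zero_or_pos rr with h0 | hrpos
    · rw [heq, h0]
      simp only [zero_mul, add_zero]
      exact hmul q hqR (c - 0) (by omega)
    · rw [heq]
      exact hadd _ hmem1 _ (hmul p hpR rr hrpos)

end NumSemigroup
end QBDProof

namespace QBDProof
open QBD Finset

section Pos
variable {s0 : ℕ} {A : ℤ → ℤ → Matrix (Fin s0) (Fin s0) ℝ}
variable (hAsupp : ∀ i j : ℤ, ¬(i ∈ Hs ∧ j ∈ Hs) → A i j = 0)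
variable (hAnn : ∀ i j : ℤ, ∀ k l, 0 ≤ A i j k l)
variable (hfull_i : ChainIrreducible (fullKernel s0 A))
variable (hfull_a : ChainAperiodic (fullKernel s0 A))

include hAsupp hAnn hfull_i hfull_a in
/-- Eventually all return probabilities at a state are positive. -/
lemma eventually_return (x : St s0) :
    ∃ N : ℕ, ∀ n, N ≤ n → 0 < stepN (fullKernel s0 A) n x x := by
  set R : Set ℕ := {n : ℕ | 1 ≤ n ∧ 0 < stepN (fullKernel s0 A) n x x} with hR
  have hadd : ∀ a ∈ R, ∀ b ∈ R, a + b ∈ R := by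
    rintro a ⟨ha1, ha2⟩ b ⟨hb1, hb2⟩
    exact ⟨by omega, stepN_pos_trans hAsupp hAnn ha2 hb2⟩
  have hgcd : ∀ d : ℕ, (∀ n ∈ R, d ∣ n) → d = 1 := by
    intro d hd
    exact hfull_a x d (fun n h1 h2 => hd n ⟨h1, h2⟩)
  obtain ⟨N, hN⟩ := numerical_semigroup hadd hgcd
  exact ⟨N + 1, fun n hn => ((hN n (by omega)).2)⟩

include hAsupp hAnn hfull_i hfull_a in
/-- Eventually the chain reaches any given state from any given state. -/
lemma eventually_reach (x y : St s0) :
    ∃ N : ℕ, ∀ n, N ≤ n → 0 < stepN (fullKernel s0 A) n x y := by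
  obtain ⟨n1, hn1, hpos⟩ := hfull_i x y
  obtain ⟨N, hN⟩ := eventually_return hAsupp hAnn hfull_i hfull_a y
  refine ⟨n1 + N, fun n hn => ?_⟩
  have h2 : 0 < stepN (fullKernel s0 A) (n - n1) y y := hN _ (by omega)
  have := stepN_pos_trans hAsupp hAnn hpos h2
  rwa [show n1 + (n - n1) = n by omega] at this

end Pos
end QBDProof

namespace QBDProof
open QBD Finset

section Box
variable {s0 : ℕ} {A : ℤ → ℤ → Matrix (Fin s0) (Fin s0) ℝ}

noncomputable def box (n : ℕ) : Finset (ℤ × ℤ) := Finset.Icc (-(n:ℤ)) n ×ˢ Finset.Icc (-(n:ℤ)) n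

lemma mem_box {n : ℕ} {v : ℤ × ℤ} :
    v ∈ box n ↔ (-(n:ℤ) ≤ v.1 ∧ v.1 ≤ n) ∧ (-(n:ℤ) ≤ v.2 ∧ v.2 ≤ n) := by
  simp [box, Finset.mem_product, Finset.mem_Icc]

lemma CmatC_apply (z w : ℂ) (a l : Fin s0) :
    CmatC s0 A z w a l = ∑ d ∈ Hs ×ˢ Hs, ((A d.1 d.2 a l : ℝ) : ℂ) * (z ^ d.1 * w ^ d.2) := by
  unfold CmatC
  rw [Finset.sum_product]
  simp only [Matrix.sum_apply, Matrix.smul_apply, Matrix.map_apply, smul_eq_mul]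
  exact Finset.sum_congr rfl fun i _ => Finset.sum_congr rfl fun j _ => by ring

lemma sum_box_reindex (hAsupp : ∀ i j : ℤ, ¬(i ∈ Hs ∧ j ∈ Hs) → A i j = 0)
    {n : ℕ} {u : ℤ × ℤ} (hu : u ∈ box n) (a l : Fin s0) (h : ℤ × ℤ → ℂ) :
    ∑ v ∈ box (n+1), ((A (v.1-u.1) (v.2-u.2) a l : ℝ) : ℂ) * h v
      = ∑ d ∈ Hs ×ˢ Hs, ((A d.1 d.2 a l : ℝ) : ℂ) * h (u.1+d.1, u.2+d.2) := by
  classical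
  have hinj : ∀ x ∈ Hs ×ˢ Hs, ∀ y ∈ Hs ×ˢ Hs,
      (fun d : ℤ×ℤ => (u.1+d.1, u.2+d.2)) x = (fun d : ℤ×ℤ => (u.1+d.1, u.2+d.2)) y → x = y := by
    intro x _ y _ hxy
    simp only [Prod.mk.injEq] at hxy
    ext <;> omega
  have h1 : ∑ d ∈ Hs ×ˢ Hs, ((A d.1 d.2 a l : ℝ) : ℂ) * h (u.1+d.1, u.2+d.2)
      = ∑ v ∈ (Hs ×ˢ Hs).image (fun d : ℤ×ℤ => (u.1+d.1, u.2+d.2)),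
          ((A (v.1-u.1) (v.2-u.2) a l : ℝ) : ℂ) * h v := by
    rw [Finset.sum_image hinj]
    apply Finset.sum_congr rfl
    intro d _
    simp
  rw [h1]
  refine (Finset.sum_subset ?_ ?_).symm
  · -- image ⊆ box (n+1)
    intro v hv
    rw [Finset.mem_image] at hv
    obtain ⟨d, hd, rfl⟩ := hv
    rw [Finset.mem_product] at hd
    simp only [mem_Hs_iff] at hd
    have hu' := mem_box.1 hu
    rw [mem_box]
    obtain ⟨hd1, hd2⟩ := hd
    obtain ⟨⟨h1, h2⟩, h3, h4⟩ := hu'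
    dsimp only
    push_cast
    omega
  · -- vanishing off the image
    intro v hv hvim
    have hA : A (v.1-u.1) (v.2-u.2) = 0 := by
      by_contra hA
      apply hvim
      rw [Finset.mem_image]
      refine ⟨(v.1-u.1, v.2-u.2), ?_, by simp⟩
      rw [Finset.mem_product]
      by_contra hmem
      apply hA
      apply hAsupp
      rw [not_and_or] at hmem ⊢
      exact hmem
    rw [hA]
    simp

lemma powEntry (hAsupp : ∀ i j : ℤ, ¬(i ∈ Hs ∧ j ∈ Hs) → A i j = 0)
    (z w : ℂ) (hz : z ≠ 0) (hw : w ≠ 0) :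
    ∀ (n : ℕ) (k l : Fin s0), ((CmatC s0 A z w) ^ n) k l
      = ∑ v ∈ box n, ((stepN (fullKernel s0 A) n ((0:ℤ),(0:ℤ),k) (v.1,v.2,l) : ℝ) : ℂ)
          * (z ^ v.1 * w ^ v.2) := by
  classical
  intro n
  induction n with
  | zero =>
    intro k l
    have hb : box 0 = {((0:ℤ),(0:ℤ))} := by
      ext v
      simp [mem_box, Prod.ext_iff]
      omega
    rw [pow_zero, hb, Finset.sum_singleton, stepN_zero]
    by_cases hkl : k = l
    · subst hkl
      simp [Matrix.one_apply_eq]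
    · have : ¬(((0:ℤ),(0:ℤ),k) = ((0:ℤ),(0:ℤ),l)) := by
        simp [Prod.ext_iff, hkl]
      simp [Matrix.one_apply_ne hkl, this]
  | succ n ih =>
    intro k l
    rw [pow_succ, Matrix.mul_apply]
    -- LHS = ∑ a, (∑ v ∈ box n, st * z^ * w^) * (∑ d ∈ Hs×Hs, A * z^ * w^)
    have hL : ∀ a : Fin s0, ((CmatC s0 A z w) ^ n) k a * CmatC s0 A z w a l
        = ∑ v ∈ box n, ∑ d ∈ Hs ×ˢ Hs,
            ((stepN (fullKernel s0 A) n ((0:ℤ),(0:ℤ),k) (v.1,v.2,a) : ℝ) : ℂ)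
              * ((A d.1 d.2 a l : ℝ) : ℂ) * (z ^ (v.1 + d.1) * w ^ (v.2 + d.2)) := by
      intro a
      rw [ih k a, CmatC_apply, Finset.sum_mul_sum]
      apply Finset.sum_congr rfl
      intro v _
      apply Finset.sum_congr rfl
      intro d _
      rw [zpow_add₀ hz, zpow_add₀ hw]
      ring
    simp only [hL]
    -- RHS: expand stepN (n+1)
    have hb0 : ballF n ((0:ℤ),(0:ℤ),k) = (Finset.Icc (-(n:ℤ)) n) ×ˢ ((Finset.Icc (-(n:ℤ)) n) ×ˢ (Finset.univ : Finset (Fin s0))) := by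
      simp [ballF, zero_sub, zero_add]
    have hR : ∀ v : ℤ × ℤ,
        ((stepN (fullKernel s0 A) (n+1) ((0:ℤ),(0:ℤ),k) (v.1,v.2,l) : ℝ) : ℂ)
        = ∑ u ∈ box n, ∑ a : Fin s0,
            ((stepN (fullKernel s0 A) n ((0:ℤ),(0:ℤ),k) (u.1,u.2,a) : ℝ) : ℂ)
              * ((A (v.1-u.1) (v.2-u.2) a l : ℝ) : ℂ) := by
      intro v
      rw [stepN_succ_sum hAsupp, hb0]
      push_cast
      simp only [Finset.sum_product, box]
      apply Finset.sum_congr rfl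
      intro x _
      apply Finset.sum_congr rfl
      intro y _
      apply Finset.sum_congr rfl
      intro a _
      unfold fullKernel
      push_cast
      ring_nf
    simp only [hR]
    -- now both sides are finite triple sums; reorganize
    rw [Finset.sum_comm]
    simp only [Finset.sum_mul]
    conv_rhs => rw [Finset.sum_comm]
    apply Finset.sum_congr rfl
    intro u hu
    conv_rhs => rw [Finset.sum_comm]
    apply Finset.sum_congr rfl
    intro a _
    have hre := sum_box_reindex hAsupp hu a l
      (fun v : ℤ × ℤ => ((stepN (fullKernel s0 A) n ((0:ℤ),(0:ℤ),k) (u.1,u.2,a) : ℝ) : ℂ)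
        * (z ^ v.1 * w ^ v.2))
    dsimp only at hre
    rw [show (∑ x ∈ box (n + 1),
        ((stepN (fullKernel s0 A) n ((0:ℤ),(0:ℤ),k) (u.1,u.2,a) : ℝ) : ℂ)
          * ((A (x.1 - u.1) (x.2 - u.2) a l : ℝ) : ℂ) * (z ^ x.1 * w ^ x.2))
      = ∑ x ∈ box (n + 1), ((A (x.1 - u.1) (x.2 - u.2) a l : ℝ) : ℂ)
          * (((stepN (fullKernel s0 A) n ((0:ℤ),(0:ℤ),k) (u.1,u.2,a) : ℝ) : ℂ)
            * (z ^ x.1 * w ^ x.2)) from Finset.sum_congr rfl fun x _ => by ring]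
    rw [hre]
    apply Finset.sum_congr rfl
    intro d _
    ring

end Box
end QBDProof

namespace QBDProof
open QBD Finset

section RealSide
variable {s0 : ℕ} {A : ℤ → ℤ → Matrix (Fin s0) (Fin s0) ℝ}

lemma CmatC_ofReal (r s : ℝ) :
    CmatC s0 A (r : ℂ) (s : ℂ) = (CmatR s0 A r s).map Complex.ofReal := by
  unfold CmatC CmatR
  ext a b
  simp only [Matrix.sum_apply, Matrix.map_apply, Matrix.smul_apply, Matrix.map_apply,
    smul_eq_mul]
  push_cast
  apply Finset.sum_congr rfl
  intro i _
  apply Finset.sum_congr rfl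
  intro j _
  push_cast
  ring

lemma map_matrix_pow (M : Matrix (Fin s0) (Fin s0) ℝ) (n : ℕ) :
    (M.map Complex.ofReal) ^ n = (M ^ n).map Complex.ofReal := by
  have h1 : M.map Complex.ofReal = Complex.ofRealHom.mapMatrix M := rfl
  have h2 : (M ^ n).map Complex.ofReal = Complex.ofRealHom.mapMatrix (M ^ n) := rfl
  rw [h1, h2, map_pow]

lemma powEntryR (hAsupp : ∀ i j : ℤ, ¬(i ∈ Hs ∧ j ∈ Hs) → A i j = 0)
    (r s : ℝ) (hr : r ≠ 0) (hs : s ≠ 0) (n : ℕ) (k l : Fin s0) :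
    ((CmatR s0 A r s) ^ n) k l
      = ∑ v ∈ box n, stepN (fullKernel s0 A) n ((0:ℤ),(0:ℤ),k) (v.1,v.2,l)
          * (r ^ v.1 * s ^ v.2) := by
  have hz : (r : ℂ) ≠ 0 := Complex.ofReal_ne_zero.mpr hr
  have hw : (s : ℂ) ≠ 0 := Complex.ofReal_ne_zero.mpr hs
  have h := powEntry hAsupp (r : ℂ) (s : ℂ) hz hw n k l
  rw [CmatC_ofReal, map_matrix_pow] at h
  apply Complex.ofReal_injective
  rw [show ((((CmatR s0 A r s) ^ n) k l : ℝ) : ℂ) = ((CmatR s0 A r s ^ n).map Complex.ofReal) k l from rfl, h]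
  push_cast
  apply Finset.sum_congr rfl
  intro v _
  push_cast
  ring

lemma powR_entry_nonneg (hAsupp : ∀ i j : ℤ, ¬(i ∈ Hs ∧ j ∈ Hs) → A i j = 0)
    (hAnn : ∀ i j : ℤ, ∀ k l, 0 ≤ A i j k l)
    {r s : ℝ} (hr : 0 < r) (hs : 0 < s) (n : ℕ) (k l : Fin s0) :
    0 ≤ ((CmatR s0 A r s) ^ n) k l := by
  rw [powEntryR hAsupp r s (ne_of_gt hr) (ne_of_gt hs)]
  apply Finset.sum_nonneg
  intro v _
  have := stepN_nonneg hAnn n ((0:ℤ),(0:ℤ),k) (v.1,v.2,l)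
  positivity

lemma powR_entry_ge (hAsupp : ∀ i j : ℤ, ¬(i ∈ Hs ∧ j ∈ Hs) → A i j = 0)
    (hAnn : ∀ i j : ℤ, ∀ k l, 0 ≤ A i j k l)
    {r s : ℝ} (hr : 0 < r) (hs : 0 < s) (n : ℕ) (k l : Fin s0)
    {v : ℤ × ℤ} (hv : v ∈ box n) :
    stepN (fullKernel s0 A) n ((0:ℤ),(0:ℤ),k) (v.1,v.2,l) * (r ^ v.1 * s ^ v.2)
      ≤ ((CmatR s0 A r s) ^ n) k l := by
  rw [powEntryR hAsupp r s (ne_of_gt hr) (ne_of_gt hs)]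
  apply Finset.single_le_sum (f := fun v : ℤ × ℤ =>
    stepN (fullKernel s0 A) n ((0:ℤ),(0:ℤ),k) (v.1,v.2,l) * (r ^ v.1 * s ^ v.2)) ?_ hv
  intro u _
  have := stepN_nonneg hAnn n ((0:ℤ),(0:ℤ),k) (u.1,u.2,l)
  positivity

/-- Entrywise domination of `C(z,w)^n` by `C(|z|,|w|)^n`. -/
lemma absEntry (hAsupp : ∀ i j : ℤ, ¬(i ∈ Hs ∧ j ∈ Hs) → A i j = 0)
    (hAnn : ∀ i j : ℤ, ∀ k l, 0 ≤ A i j k l)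
    {z w : ℂ} (hz : z ≠ 0) (hw : w ≠ 0) (n : ℕ) (k l : Fin s0) :
    Complex.abs (((CmatC s0 A z w) ^ n) k l)
      ≤ ((CmatR s0 A (Complex.abs z) (Complex.abs w)) ^ n) k l := by
  rw [powEntry hAsupp z w hz hw n k l,
    powEntryR hAsupp _ _ (Complex.abs.ne_zero hz) (Complex.abs.ne_zero hw)]
  refine le_trans (AbsoluteValue.sum_le _ _ _) (le_of_eq ?_)
  apply Finset.sum_congr rfl
  intro v _
  rw [map_mul, map_mul, map_zpow₀, map_zpow₀, Complex.abs_ofReal,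
    abs_of_nonneg (stepN_nonneg hAnn n _ _)]

end RealSide
end QBDProof

namespace QBDProof
open QBD Finset

section Strict
variable {s0 : ℕ} {A : ℤ → ℤ → Matrix (Fin s0) (Fin s0) ℝ}

/-- Primitivity: some power of `C(r,s)` is entrywise positive. -/
lemma powR_pos (hAsupp : ∀ i j : ℤ, ¬(i ∈ Hs ∧ j ∈ Hs) → A i j = 0)
    (hAnn : ∀ i j : ℤ, ∀ k l, 0 ≤ A i j k l)
    (hfull_i : ChainIrreducible (fullKernel s0 A))
    (hfull_a : ChainAperiodic (fullKernel s0 A))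
    {r s : ℝ} (hr : 0 < r) (hs : 0 < s) :
    ∃ m : ℕ, 1 ≤ m ∧ ∀ k l : Fin s0, 0 < ((CmatR s0 A r s) ^ m) k l := by
  classical
  have hN : ∀ p : Fin s0 × Fin s0, ∃ N : ℕ, ∀ n, N ≤ n →
      0 < stepN (fullKernel s0 A) n ((0:ℤ),(0:ℤ),p.1) ((0:ℤ),(0:ℤ),p.2) :=
    fun p => eventually_reach hAsupp hAnn hfull_i hfull_a _ _
  choose N hNs using hN
  refine ⟨(Finset.univ.sup N) + 1, by omega, fun k l => ?_⟩
  have hpos : 0 < stepN (fullKernel s0 A) ((Finset.univ.sup N) + 1)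
      ((0:ℤ),(0:ℤ),k) ((0:ℤ),(0:ℤ),l) := by
    apply hNs (k, l)
    exact le_trans (Finset.le_sup (Finset.mem_univ (k, l))) (Nat.le_succ _)
  have h00 : ((0:ℤ),(0:ℤ)) ∈ box ((Finset.univ.sup N) + 1) := by
    rw [mem_box]; push_cast; omega
  have := powR_entry_ge hAsupp hAnn hr hs ((Finset.univ.sup N) + 1) k l h00
  simp only [zpow_zero, mul_one] at this
  exact lt_of_lt_of_le hpos this

/-- Strict inequality at a diagonal entry for some power. -/
lemma strictEntry (hs0 : 1 ≤ s0)
    (hAsupp : ∀ i j : ℤ, ¬(i ∈ Hs ∧ j ∈ Hs) → A i j = 0)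
    (hAnn : ∀ i j : ℤ, ∀ k l, 0 ≤ A i j k l)
    (hfull_i : ChainIrreducible (fullKernel s0 A))
    (hfull_a : ChainAperiodic (fullKernel s0 A))
    {z w : ℂ} (hz : z ≠ 0) (hw : w ≠ 0)
    (hzw : z ≠ (Complex.abs z : ℂ) ∨ w ≠ (Complex.abs w : ℂ)) :
    ∃ (n : ℕ) (k : Fin s0),
      Complex.abs (((CmatC s0 A z w) ^ n) k k)
        < ((CmatR s0 A (Complex.abs z) (Complex.abs w)) ^ n) k k := by
  classical
  set k : Fin s0 := ⟨0, hs0⟩ with hk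
  obtain ⟨e, ζ, hζne, hζeq, hebnd⟩ :
      ∃ (e : ℤ × ℤ) (ζ : ℂ), ζ ≠ (Complex.abs ζ : ℂ) ∧ z ^ e.1 * w ^ e.2 = ζ ∧
        (e ≠ (0, 0) ∧ -1 ≤ e.1 ∧ e.1 ≤ 1 ∧ -1 ≤ e.2 ∧ e.2 ≤ 1) := by
    rcases hzw with h | h
    · exact ⟨(1, 0), z, h, by simp, by simp, by norm_num⟩
    · exact ⟨(0, 1), w, h, by simp, by simp, by norm_num⟩
  obtain ⟨N₁, hN₁⟩ := eventually_reach hAsupp hAnn hfull_i hfull_a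
    ((0:ℤ),(0:ℤ),k) ((0:ℤ),(0:ℤ),k)
  obtain ⟨N₂, hN₂⟩ := eventually_reach hAsupp hAnn hfull_i hfull_a
    ((0:ℤ),(0:ℤ),k) (e.1,e.2,k)
  set n := max N₁ N₂ + 1 with hn
  have hp1 : 0 < stepN (fullKernel s0 A) n ((0:ℤ),(0:ℤ),k) ((0:ℤ),(0:ℤ),k) :=
    hN₁ n (by omega)
  have hp2 : 0 < stepN (fullKernel s0 A) n ((0:ℤ),(0:ℤ),k) (e.1,e.2,k) :=
    hN₂ n (by omega)
  set c : ℤ × ℤ → ℂ := fun v =>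
    ((stepN (fullKernel s0 A) n ((0:ℤ),(0:ℤ),k) (v.1,v.2,k) : ℝ) : ℂ)
      * (z ^ v.1 * w ^ v.2) with hc
  have hcabs : ∀ v : ℤ × ℤ, Complex.abs (c v)
      = stepN (fullKernel s0 A) n ((0:ℤ),(0:ℤ),k) (v.1,v.2,k)
          * ((Complex.abs z) ^ v.1 * (Complex.abs w) ^ v.2) := by
    intro v
    rw [hc]
    simp only [map_mul, map_zpow₀, Complex.abs_ofReal,
      abs_of_nonneg (stepN_nonneg hAnn n _ _)]
  have hEq : ((CmatC s0 A z w) ^ n) k k = ∑ v ∈ box n, c v :=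
    powEntry hAsupp z w hz hw n k k
  have hEqR : ((CmatR s0 A (Complex.abs z) (Complex.abs w)) ^ n) k k
      = ∑ v ∈ box n, Complex.abs (c v) := by
    rw [powEntryR hAsupp _ _ (Complex.abs.ne_zero hz) (Complex.abs.ne_zero hw)]
    exact Finset.sum_congr rfl fun v _ => (hcabs v).symm
  have hv0 : ((0:ℤ),(0:ℤ)) ∈ box n := by rw [mem_box]; push_cast; omega
  have hv1 : e ∈ box n := by
    rw [mem_box]; push_cast; omega
  have hne : e ≠ ((0:ℤ),(0:ℤ)) := hebnd.1
  -- split the sums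
  have h1 : c ((0:ℤ),(0:ℤ)) + ∑ v ∈ (box n).erase ((0:ℤ),(0:ℤ)), c v
      = ∑ v ∈ box n, c v := Finset.add_sum_erase _ c hv0
  have h2 : c e + ∑ v ∈ ((box n).erase ((0:ℤ),(0:ℤ))).erase e, c v
      = ∑ v ∈ (box n).erase ((0:ℤ),(0:ℤ)), c v :=
    Finset.add_sum_erase _ c (Finset.mem_erase.mpr ⟨hne, hv1⟩)
  have h1a : Complex.abs (c ((0:ℤ),(0:ℤ)))
        + ∑ v ∈ (box n).erase ((0:ℤ),(0:ℤ)), Complex.abs (c v)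
      = ∑ v ∈ box n, Complex.abs (c v) :=
    Finset.add_sum_erase _ (fun v => Complex.abs (c v)) hv0
  have h2a : Complex.abs (c e)
        + ∑ v ∈ ((box n).erase ((0:ℤ),(0:ℤ))).erase e, Complex.abs (c v)
      = ∑ v ∈ (box n).erase ((0:ℤ),(0:ℤ)), Complex.abs (c v) :=
    Finset.add_sum_erase _ (fun v => Complex.abs (c v)) (Finset.mem_erase.mpr ⟨hne, hv1⟩)
  -- the two distinguished terms are not on the same ray
  have hc0 : c ((0:ℤ),(0:ℤ))
      = ((stepN (fullKernel s0 A) n ((0:ℤ),(0:ℤ),k) ((0:ℤ),(0:ℤ),k) : ℝ) : ℂ) := by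
    simp [hc]
  have hc0ne : c ((0:ℤ),(0:ℤ)) ≠ 0 := by
    rw [hc0]
    exact_mod_cast ne_of_gt hp1
  have hc1 : c e = ((stepN (fullKernel s0 A) n ((0:ℤ),(0:ℤ),k) (e.1,e.2,k) : ℝ) : ℂ) * ζ := by
    simp only [hc]
    rw [hζeq]
  have hc1ne : c e ≠ 0 := by
    rw [hc1]
    apply mul_ne_zero
    · exact_mod_cast ne_of_gt hp2
    · intro h0
      apply hζne
      rw [h0]
      simp
  have hnot : ¬ SameRay ℝ (c ((0:ℤ),(0:ℤ))) (c e) := by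
    intro hsr
    obtain ⟨rr, ss, hrr, hss, hsmul⟩ := hsr.exists_pos hc0ne hc1ne
    rw [hc0, hc1] at hsmul
    have hp2' : (0:ℝ) < stepN (fullKernel s0 A) n ((0:ℤ),(0:ℤ),k) (e.1,e.2,k) := hp2
    set p1 := stepN (fullKernel s0 A) n ((0:ℤ),(0:ℤ),k) ((0:ℤ),(0:ℤ),k)
    set p2 := stepN (fullKernel s0 A) n ((0:ℤ),(0:ℤ),k) (e.1,e.2,k)
    have hζval : ζ = (((rr * p1) / (ss * p2) : ℝ) : ℂ) := by
      have hss' : (ss : ℂ) ≠ 0 := by exact_mod_cast ne_of_gt hss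
      have hp2'' : ((p2 : ℝ) : ℂ) ≠ 0 := by exact_mod_cast ne_of_gt hp2'
      rw [Complex.real_smul, Complex.real_smul] at hsmul
      push_cast
      rw [eq_div_iff (mul_ne_zero hss' hp2'')]
      linear_combination -hsmul
    apply hζne
    rw [hζval, Complex.abs_ofReal, abs_of_pos (by positivity)]
  have hstrict : Complex.abs (c ((0:ℤ),(0:ℤ)) + c e)
      < Complex.abs (c ((0:ℤ),(0:ℤ))) + Complex.abs (c e) := by
    have := norm_add_lt_of_not_sameRay hnot
    simpa [Complex.norm_eq_abs] using this
  refine ⟨n, k, ?_⟩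
  rw [hEq, hEqR, ← h1, ← h2, ← h1a, ← h2a]
  calc Complex.abs (c ((0:ℤ),(0:ℤ)) + (c e + ∑ v ∈ ((box n).erase ((0:ℤ),(0:ℤ))).erase e, c v))
      ≤ Complex.abs (c ((0:ℤ),(0:ℤ)) + c e)
        + Complex.abs (∑ v ∈ ((box n).erase ((0:ℤ),(0:ℤ))).erase e, c v) := by
        rw [← add_assoc]
        exact Complex.abs.add_le _ _
    _ ≤ Complex.abs (c ((0:ℤ),(0:ℤ)) + c e)
        + ∑ v ∈ ((box n).erase ((0:ℤ),(0:ℤ))).erase e, Complex.abs (c v) := by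
        gcongr
        exact Complex.abs.sum_le _ _
    _ < Complex.abs (c ((0:ℤ),(0:ℤ))) + Complex.abs (c e)
        + ∑ v ∈ ((box n).erase ((0:ℤ),(0:ℤ))).erase e, Complex.abs (c v) := by
        gcongr
    _ = Complex.abs (c ((0:ℤ),(0:ℤ)))
        + (Complex.abs (c e) + ∑ v ∈ ((box n).erase ((0:ℤ),(0:ℤ))).erase e, Complex.abs (c v)) := by
        ring

end Strict
end QBDProof

namespace QBDProof
open QBD Finset

section Quant
variable {s0 : ℕ} {A : ℤ → ℤ → Matrix (Fin s0) (Fin s0) ℝ}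

lemma entry_mul_dom {X X' : Matrix (Fin s0) (Fin s0) ℂ} {U V : Matrix (Fin s0) (Fin s0) ℝ}
    (hXU : ∀ i j, Complex.abs (X i j) ≤ U i j)
    (hXV : ∀ i j, Complex.abs (X' i j) ≤ V i j) :
    ∀ i j, Complex.abs ((X * X') i j) ≤ (U * V) i j := by
  intro i j
  rw [Matrix.mul_apply, Matrix.mul_apply]
  refine le_trans (Complex.abs.sum_le _ _) (Finset.sum_le_sum fun a _ => ?_)
  rw [map_mul]
  exact mul_le_mul (hXU i a) (hXV a j) (Complex.abs.nonneg _)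
    (le_trans (Complex.abs.nonneg _) (hXU i a))

lemma triple_applyR (X Y Z : Matrix (Fin s0) (Fin s0) ℝ) (i j : Fin s0) :
    (X * Y * Z) i j = ∑ p : Fin s0 × Fin s0, X i p.1 * Y p.1 p.2 * Z p.2 j := by
  rw [Fintype.sum_prod_type]
  simp only [Matrix.mul_apply, Finset.sum_mul]
  rw [Finset.sum_comm]

lemma triple_applyC (X Y Z : Matrix (Fin s0) (Fin s0) ℂ) (i j : Fin s0) :
    (X * Y * Z) i j = ∑ p : Fin s0 × Fin s0, X i p.1 * Y p.1 p.2 * Z p.2 j := by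
  rw [Fintype.sum_prod_type]
  simp only [Matrix.mul_apply, Finset.sum_mul]
  rw [Finset.sum_comm]

/-- Quantitative entrywise domination with a uniform loss factor. -/
lemma eps_dom (hs0 : 1 ≤ s0)
    (hAsupp : ∀ i j : ℤ, ¬(i ∈ Hs ∧ j ∈ Hs) → A i j = 0)
    (hAnn : ∀ i j : ℤ, ∀ k l, 0 ≤ A i j k l)
    (hfull_i : ChainIrreducible (fullKernel s0 A))
    (hfull_a : ChainAperiodic (fullKernel s0 A))
    {z w : ℂ} (hz : z ≠ 0) (hw : w ≠ 0)
    (hzw : z ≠ (Complex.abs z : ℂ) ∨ w ≠ (Complex.abs w : ℂ)) :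
    ∃ (Nb : ℕ) (ε : ℝ), 1 ≤ Nb ∧ 0 < ε ∧ ε ≤ 1 ∧ ∀ i j : Fin s0,
      Complex.abs (((CmatC s0 A z w) ^ Nb) i j)
        ≤ (1 - ε) * ((CmatR s0 A (Complex.abs z) (Complex.abs w)) ^ Nb) i j := by
  classical
  have hr : 0 < Complex.abs z := Complex.abs.pos hz
  have hs : 0 < Complex.abs w := Complex.abs.pos hw
  set r := Complex.abs z
  set s := Complex.abs w
  set M := CmatC s0 A z w with hM
  set B := CmatR s0 A r s with hB
  obtain ⟨n0, k0, hstrict⟩ := strictEntry hs0 hAsupp hAnn hfull_i hfull_a hz hw hzw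
  obtain ⟨m, hm1, hmpos⟩ := powR_pos hAsupp hAnn hfull_i hfull_a hr hs
  set G : Matrix (Fin s0) (Fin s0) ℝ := Matrix.of (fun a b => Complex.abs ((M ^ n0) a b)) with hG
  have hGB : ∀ a b, G a b ≤ (B ^ n0) a b := fun a b => absEntry hAsupp hAnn hz hw n0 a b
  set δ : ℝ := (B ^ n0) k0 k0 - G k0 k0 with hδ
  have hδpos : 0 < δ := sub_pos.mpr hstrict
  set Nb := m + n0 + m with hNb
  have hMN : M ^ Nb = M ^ m * M ^ n0 * M ^ m := by
    rw [hNb, pow_add, pow_add]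
  have hBN : B ^ Nb = B ^ m * B ^ n0 * B ^ m := by
    rw [hNb, pow_add, pow_add]
  -- entrywise: |M^Nb| ≤ B^m G B^m entrywise
  have habs : ∀ i j, Complex.abs ((M ^ Nb) i j) ≤ (B ^ m * G * B ^ m) i j := by
    intro i j
    rw [hMN]
    have h1 : ∀ a b, Complex.abs ((M ^ m) a b) ≤ (B ^ m) a b :=
      fun a b => absEntry hAsupp hAnn hz hw m a b
    have h2 : ∀ a b, Complex.abs ((M ^ n0) a b) ≤ G a b := fun a b => le_refl _
    exact entry_mul_dom (entry_mul_dom h1 h2) h1 i j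
  -- comparison with the subtracted rank-one term
  have hcomp : ∀ i j, (B ^ m * G * B ^ m) i j + δ * ((B ^ m) i k0 * (B ^ m) k0 j)
      ≤ (B ^ Nb) i j := by
    intro i j
    rw [hBN, triple_applyR, triple_applyR]
    have hk0mem : ((k0, k0) : Fin s0 × Fin s0) ∈ (Finset.univ : Finset (Fin s0 × Fin s0)) :=
      Finset.mem_univ _
    rw [← Finset.add_sum_erase _ _ hk0mem, ← Finset.add_sum_erase _
      (fun p : Fin s0 × Fin s0 => (B ^ m) i p.1 * (B ^ n0) p.1 p.2 * (B ^ m) p.2 j) hk0mem]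
    have hterm : (B ^ m) i k0 * G k0 k0 * (B ^ m) k0 j + δ * ((B ^ m) i k0 * (B ^ m) k0 j)
        = (B ^ m) i k0 * (B ^ n0) k0 k0 * (B ^ m) k0 j := by
      rw [hδ]; ring
    have hrest : ∑ p ∈ (Finset.univ : Finset (Fin s0 × Fin s0)).erase (k0, k0),
          (B ^ m) i p.1 * G p.1 p.2 * (B ^ m) p.2 j
        ≤ ∑ p ∈ (Finset.univ : Finset (Fin s0 × Fin s0)).erase (k0, k0),
          (B ^ m) i p.1 * (B ^ n0) p.1 p.2 * (B ^ m) p.2 j := by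
      apply Finset.sum_le_sum
      intro p _
      have hBm1 : 0 ≤ (B ^ m) i p.1 := powR_entry_nonneg hAsupp hAnn hr hs m i p.1
      have hBm2 : 0 ≤ (B ^ m) p.2 j := powR_entry_nonneg hAsupp hAnn hr hs m p.2 j
      exact mul_le_mul_of_nonneg_right
        (mul_le_mul_of_nonneg_left (hGB p.1 p.2) hBm1) hBm2
    calc (B ^ m) i k0 * G k0 k0 * (B ^ m) k0 j
          + ∑ p ∈ (Finset.univ : Finset (Fin s0 × Fin s0)).erase (k0, k0),
            (B ^ m) i p.1 * G p.1 p.2 * (B ^ m) p.2 j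
          + δ * ((B ^ m) i k0 * (B ^ m) k0 j)
        = ((B ^ m) i k0 * G k0 k0 * (B ^ m) k0 j + δ * ((B ^ m) i k0 * (B ^ m) k0 j))
          + ∑ p ∈ (Finset.univ : Finset (Fin s0 × Fin s0)).erase (k0, k0),
            (B ^ m) i p.1 * G p.1 p.2 * (B ^ m) p.2 j := by ring
      _ ≤ (B ^ m) i k0 * (B ^ n0) k0 k0 * (B ^ m) k0 j
          + ∑ p ∈ (Finset.univ : Finset (Fin s0 × Fin s0)).erase (k0, k0),
            (B ^ m) i p.1 * (B ^ n0) p.1 p.2 * (B ^ m) p.2 j := by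
          rw [hterm]
          exact add_le_add (le_refl _) hrest
  -- min and max quantities
  haveI : Nonempty (Fin s0) := ⟨⟨0, hs0⟩⟩
  have hne : (Finset.univ : Finset (Fin s0 × Fin s0)).Nonempty := Finset.univ_nonempty
  set c0 : ℝ := Finset.univ.inf' hne (fun p : Fin s0 × Fin s0 => (B ^ m) p.1 k0 * (B ^ m) k0 p.2)
    with hc0
  have hc0pos : 0 < c0 := by
    rw [hc0, Finset.lt_inf'_iff]
    intro p _
    exact mul_pos (hmpos p.1 k0) (hmpos k0 p.2)
  have hc0le : ∀ i j : Fin s0, c0 ≤ (B ^ m) i k0 * (B ^ m) k0 j := by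
    intro i j
    exact Finset.inf'_le _ (Finset.mem_univ ((i, j) : Fin s0 × Fin s0))
  set T : ℝ := Finset.univ.sup' hne (fun p : Fin s0 × Fin s0 => (B ^ Nb) p.1 p.2) with hT
  have hTle : ∀ i j : Fin s0, (B ^ Nb) i j ≤ T := fun i j =>
    Finset.le_sup' (f := fun p : Fin s0 × Fin s0 => (B ^ Nb) p.1 p.2)
      (Finset.mem_univ ((i, j) : Fin s0 × Fin s0))
  have hlow : ∀ i j : Fin s0, δ * c0 ≤ (B ^ Nb) i j := by
    intro i j
    have h1 := hcomp i j
    have h2 : 0 ≤ (B ^ m * G * B ^ m) i j :=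
      le_trans (Complex.abs.nonneg _) (habs i j)
    have h3 := hc0le i j
    nlinarith
  have hTpos : 0 < T := lt_of_lt_of_le (lt_of_lt_of_le (mul_pos hδpos hc0pos) (hlow k0 k0)) (hTle k0 k0)
  refine ⟨Nb, δ * c0 / T, by omega, by positivity, ?_, ?_⟩
  · rw [div_le_one hTpos]
    exact le_trans (hlow k0 k0) (hTle k0 k0)
  · intro i j
    have h1 := habs i j
    have h2 := hcomp i j
    have h3 := hc0le i j
    have h4 := hTle i j
    have h5 : (1 - δ * c0 / T) * (B ^ Nb) i j
        = (B ^ Nb) i j - (δ * c0 / T) * (B ^ Nb) i j := by ring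
    rw [h5]
    have h6 : (δ * c0 / T) * (B ^ Nb) i j ≤ δ * c0 := by
      rw [div_mul_eq_mul_div, div_le_iff₀ hTpos]
      exact mul_le_mul_of_nonneg_left h4 (mul_pos hδpos hc0pos).le
    nlinarith

end Quant
end QBDProof

namespace QBDProof
open QBD Finset
open scoped NNReal

section Norms
variable {s0 : ℕ}

attribute [local instance] Matrix.linftyOpNormedRing Matrix.linftyOpNormedAlgebra

lemma eps_pow {M : Matrix (Fin s0) (Fin s0) ℂ} {B : Matrix (Fin s0) (Fin s0) ℝ} {ε : ℝ}
    (hε1 : ε ≤ 1)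
    (hd : ∀ i j, Complex.abs (M i j) ≤ (1 - ε) * B i j) :
    ∀ (t : ℕ) (i j : Fin s0), Complex.abs ((M ^ t) i j) ≤ (1 - ε) ^ t * (B ^ t) i j := by
  intro t
  induction t with
  | zero =>
    intro i j
    simp only [pow_zero, one_mul]
    rcases eq_or_ne i j with rfl | hij
    · simp [Matrix.one_apply_eq]
    · simp [Matrix.one_apply_ne hij]
  | succ t ih =>
    intro i j
    rw [pow_succ, pow_succ, pow_succ]
    have h1 : ∀ i j, Complex.abs ((M ^ t) i j) ≤ (((1 - ε) ^ t) • (B ^ t)) i j := by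
      intro i j
      rw [Matrix.smul_apply, smul_eq_mul]
      exact ih i j
    have h2 : ∀ i j, Complex.abs (M i j) ≤ ((1 - ε) • B) i j := by
      intro i j
      rw [Matrix.smul_apply, smul_eq_mul]
      exact hd i j
    have h3 := entry_mul_dom h1 h2 i j
    have h4 : ((((1 - ε) ^ t) • (B ^ t)) * ((1 - ε) • B)) i j
        = (1 - ε) ^ t * (1 - ε) * ((B ^ t * B) i j) := by
      rw [smul_mul_assoc, mul_smul_comm, Matrix.smul_apply, Matrix.smul_apply,
        smul_eq_mul, smul_eq_mul]
      ring
    rw [h4] at h3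
    exact h3

lemma entry_norm_le (X : Matrix (Fin s0) (Fin s0) ℂ) (i j : Fin s0) :
    ‖X i j‖ ≤ ‖X‖ := by
  have h : ‖X i j‖₊ ≤ ‖X‖₊ := by
    rw [Matrix.linfty_opNNNorm_def]
    refine le_trans ?_ (Finset.le_sup (Finset.mem_univ i))
    exact Finset.single_le_sum (f := fun j => ‖X i j‖₊) (fun _ _ => zero_le)
      (Finset.mem_univ j)
  exact_mod_cast h

lemma norm_dom {X : Matrix (Fin s0) (Fin s0) ℂ} {Y : Matrix (Fin s0) (Fin s0) ℝ} {c : ℝ}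
    (hc : 0 ≤ c) (h : ∀ i j, Complex.abs (X i j) ≤ c * Y i j) :
    ‖X‖ ≤ c * ‖Y.map Complex.ofReal‖ := by
  set cn : ℝ≥0 := ⟨c, hc⟩ with hcn
  have key : ‖X‖₊ ≤ cn * ‖Y.map Complex.ofReal‖₊ := by
    rw [Matrix.linfty_opNNNorm_def, Matrix.linfty_opNNNorm_def]
    apply Finset.sup_le
    intro i _
    calc ∑ j, ‖X i j‖₊
        ≤ ∑ j, cn * ‖(Y.map Complex.ofReal) i j‖₊ := by
          apply Finset.sum_le_sum
          intro j _
          rw [← NNReal.coe_le_coe]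
          push_cast
          have hcc : (cn : ℝ) = c := rfl
          rw [hcc]
          calc ‖X i j‖ = Complex.abs (X i j) := rfl
            _ ≤ c * Y i j := h i j
            _ ≤ c * ‖(Y.map Complex.ofReal) i j‖ := by
                apply mul_le_mul_of_nonneg_left ?_ hc
                rw [Matrix.map_apply]
                calc Y i j ≤ |Y i j| := le_abs_self _
                  _ = Complex.abs ((Y i j : ℝ) : ℂ) := (Complex.abs_ofReal _).symm
                  _ = ‖((Y i j : ℝ) : ℂ)‖ := rfl
      _ = cn * ∑ j, ‖(Y.map Complex.ofReal) i j‖₊ := by rw [Finset.mul_sum]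
      _ ≤ cn * Finset.univ.sup fun i => ∑ j, ‖(Y.map Complex.ofReal) i j‖₊ := by
          exact mul_le_mul_right (Finset.le_sup (f := fun i => ∑ j, ‖(Y.map Complex.ofReal) i j‖₊) (Finset.mem_univ i)) cn
  calc ‖X‖ = (‖X‖₊ : ℝ) := rfl
    _ ≤ ((cn * ‖Y.map Complex.ofReal‖₊ : ℝ≥0) : ℝ) := by exact_mod_cast key
    _ = c * ‖Y.map Complex.ofReal‖ := by push_cast [hcn]; rfl

lemma eig_pow_le_norm {M : Matrix (Fin s0) (Fin s0) ℂ} {μ : ℂ} (hμ : IsEigC M μ) (n : ℕ) :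
    (Complex.abs μ) ^ n ≤ ‖M ^ n‖ := by
  obtain ⟨v, hv, hMv⟩ := hμ
  have hpow : ∀ n : ℕ, (M ^ n).mulVec v = (μ ^ n) • v := by
    intro n
    induction n with
    | zero => simp
    | succ n ih =>
      rw [pow_succ', pow_succ', ← Matrix.mulVec_mulVec, ih, Matrix.mulVec_smul, hMv,
        smul_smul, mul_comm]
  have hvn : 0 < ‖v‖ := norm_pos_iff.mpr hv
  have h1 : ‖(μ ^ n) • v‖ ≤ ‖M ^ n‖ * ‖v‖ := by
    rw [← hpow n]
    exact Matrix.linfty_opNorm_mulVec _ _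
  rw [norm_smul, norm_pow] at h1
  have h2 : ‖μ‖ ^ n * ‖v‖ ≤ ‖M ^ n‖ * ‖v‖ := h1
  have := le_of_mul_le_mul_right h2 hvn
  simpa [Complex.norm_eq_abs] using this

end Norms
end QBDProof

namespace QBDProof
open QBD Finset Filter
open scoped NNReal ENNReal Topology

section Spectral
variable {s0 : ℕ}

attribute [local instance] Matrix.linftyOpNormedRing Matrix.linftyOpNormedAlgebra

lemma isEigC_iff_mem_spectrum (M : Matrix (Fin s0) (Fin s0) ℂ) (μ : ℂ) :
    IsEigC M μ ↔ μ ∈ spectrum ℂ M := by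
  classical
  rw [spectrum.mem_iff]
  have hmv : ∀ v : Fin s0 → ℂ,
      (algebraMap ℂ (Matrix (Fin s0) (Fin s0) ℂ) μ - M).mulVec v = 0
        ↔ M.mulVec v = μ • v := by
    intro v
    rw [Matrix.sub_mulVec, Algebra.algebraMap_eq_smul_one, Matrix.smul_mulVec,
      Matrix.one_mulVec, sub_eq_zero, eq_comm]
  constructor
  · rintro ⟨v, hv, hMv⟩
    intro hunit
    have hdet : IsUnit (algebraMap ℂ (Matrix (Fin s0) (Fin s0) ℂ) μ - M).det :=
      (Matrix.isUnit_iff_isUnit_det _).mp hunit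
    have h0 : (algebraMap ℂ (Matrix (Fin s0) (Fin s0) ℂ) μ - M).det = 0 := by
      rw [← Matrix.exists_mulVec_eq_zero_iff]
      exact ⟨v, hv, (hmv v).mpr hMv⟩
    rw [h0] at hdet
    exact (not_isUnit_zero : ¬ IsUnit (0:ℂ)) hdet
  · intro hunit
    have h0 : (algebraMap ℂ (Matrix (Fin s0) (Fin s0) ℂ) μ - M).det = 0 := by
      by_contra h
      exact hunit ((Matrix.isUnit_iff_isUnit_det _).mpr (isUnit_iff_ne_zero.mpr h))
    obtain ⟨v, hv, hv0⟩ := (Matrix.exists_mulVec_eq_zero_iff).mpr h0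
    exact ⟨v, hv, (hmv v).mp hv0⟩

lemma eig_abs_le_norm {M : Matrix (Fin s0) (Fin s0) ℂ} {μ : ℂ} (hμ : IsEigC M μ) :
    Complex.abs μ ≤ ‖M‖ := by
  have := eig_pow_le_norm hμ 1
  simpa using this

lemma spr_bddAbove (M : Matrix (Fin s0) (Fin s0) ℂ) :
    BddAbove {r : ℝ | ∃ μ : ℂ, IsEigC M μ ∧ r = Complex.abs μ} := by
  refine ⟨‖M‖, ?_⟩
  rintro x ⟨μ, hμ, rfl⟩
  exact eig_abs_le_norm hμ

lemma le_spr {M : Matrix (Fin s0) (Fin s0) ℂ} {μ : ℂ} (hμ : IsEigC M μ) :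
    Complex.abs μ ≤ spr M :=
  le_csSup (spr_bddAbove M) ⟨μ, hμ, rfl⟩

lemma spr_le {M : Matrix (Fin s0) (Fin s0) ℂ} {b : ℝ} (hb : 0 ≤ b)
    (h : ∀ μ : ℂ, IsEigC M μ → Complex.abs μ ≤ b) : spr M ≤ b := by
  apply Real.sSup_le _ hb
  rintro x ⟨μ, hμ, rfl⟩
  exact h μ hμ

lemma tendsto_mul_succ (m : ℕ) (hm : 1 ≤ m) :
    Tendsto (fun t : ℕ => m * (t + 1)) atTop atTop := by
  apply tendsto_atTop_mono (f := id)
  · intro t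
    calc id t = t := rfl
      _ ≤ t + 1 := Nat.le_succ t
      _ ≤ m * (t + 1) := Nat.le_mul_of_pos_left _ (by omega)
  · exact tendsto_id

end Spectral
end QBDProof

namespace QBDProof
open QBD Finset Filter
open scoped NNReal ENNReal Topology

section Main
variable {s0 : ℕ} {A : ℤ → ℤ → Matrix (Fin s0) (Fin s0) ℝ}

attribute [local instance] Matrix.linftyOpNormedRing Matrix.linftyOpNormedAlgebra

lemma main_lemma (hs0 : 1 ≤ s0)
    (hAsupp : ∀ i j : ℤ, ¬(i ∈ Hs ∧ j ∈ Hs) → A i j = 0)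
    (hAnn : ∀ i j : ℤ, ∀ k l, 0 ≤ A i j k l)
    (hfull_i : ChainIrreducible (fullKernel s0 A))
    (hfull_a : ChainAperiodic (fullKernel s0 A))
    {z w : ℂ} (hz : z ≠ 0) (hw : w ≠ 0)
    (hzw : z ≠ (Complex.abs z : ℂ) ∨ w ≠ (Complex.abs w : ℂ)) :
    spr (CmatC s0 A z w)
      < spr (CmatC s0 A ((Complex.abs z : ℝ) : ℂ) ((Complex.abs w : ℝ) : ℂ)) := by
  classical
  haveI : Nonempty (Fin s0) := ⟨⟨0, hs0⟩⟩
  haveI : CompleteSpace (Matrix (Fin s0) (Fin s0) ℂ) := FiniteDimensional.complete ℂ _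
  have hr : 0 < Complex.abs z := Complex.abs.pos hz
  have hs : 0 < Complex.abs w := Complex.abs.pos hw
  set r := Complex.abs z with hrdef
  set s := Complex.abs w with hsdef
  set M := CmatC s0 A z w with hM
  set B := CmatR s0 A r s with hB
  set Bc := B.map Complex.ofReal with hBc
  have hBcC : CmatC s0 A ((r : ℝ) : ℂ) ((s : ℝ) : ℂ) = Bc := CmatC_ofReal r s
  rw [hBcC]
  -- quantitative domination
  obtain ⟨Nb, ε, hNb1, hε0, hε1, hdom⟩ :=
    eps_dom hs0 hAsupp hAnn hfull_i hfull_a hz hw hzw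
  -- Gelfand's formula for Bc
  have hρtop : spectralRadius ℂ Bc ≠ ⊤ :=
    ne_top_of_le_ne_top ENNReal.coe_ne_top (spectrum.spectralRadius_le_nnnorm (𝕜 := ℂ) Bc)
  set ρ : ℝ := (spectralRadius ℂ Bc).toReal with hρ
  have hGel0 := spectrum.pow_nnnorm_pow_one_div_tendsto_nhds_spectralRadius Bc
  have hGel : Tendsto (fun n : ℕ => ‖Bc ^ n‖ ^ (1/(n:ℝ))) atTop (𝓝 ρ) := by
    have h1 := (ENNReal.tendsto_toReal hρtop).comp hGel0
    apply h1.congr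
    intro n
    simp only [Function.comp_apply]
    rw [← ENNReal.toReal_rpow, ENNReal.coe_toReal, coe_nnnorm]
  -- lower bound: ρ > 0
  obtain ⟨m, hm1, hmpos⟩ := powR_pos hAsupp hAnn hfull_i hfull_a hr hs
  set k00 : Fin s0 := ⟨0, hs0⟩ with hk00
  set c1 : ℝ := (B ^ m) k00 k00 with hc1def
  have hc1 : 0 < c1 := hmpos k00 k00
  have hdiagpow : ∀ t : ℕ, c1 ^ (t+1) ≤ (B ^ (m*(t+1))) k00 k00 := by
    intro t
    induction t with
    | zero => simp [hc1def]
    | succ t ih =>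
      have heq : m * (t+2) = m * (t+1) + m := by ring
      have hBexp : (B ^ (m*(t+2))) k00 k00 = ∑ a, (B ^ (m*(t+1))) k00 a * (B ^ m) a k00 := by
        rw [heq, pow_add, Matrix.mul_apply]
      rw [hBexp]
      have hterm : c1 ^ (t+1) * c1 ≤ (B ^ (m*(t+1))) k00 k00 * (B ^ m) k00 k00 :=
        mul_le_mul ih (le_refl c1) hc1.le
          (powR_entry_nonneg hAsupp hAnn hr hs _ _ _)
      calc c1 ^ (t+2) = c1 ^ (t+1) * c1 := by ring
        _ ≤ (B ^ (m*(t+1))) k00 k00 * (B ^ m) k00 k00 := hterm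
        _ ≤ ∑ a, (B ^ (m*(t+1))) k00 a * (B ^ m) a k00 := by
            apply Finset.single_le_sum (f := fun a => (B ^ (m*(t+1))) k00 a * (B ^ m) a k00)
              ?_ (Finset.mem_univ k00)
            intro a _
            exact mul_nonneg (powR_entry_nonneg hAsupp hAnn hr hs _ _ _)
              (powR_entry_nonneg hAsupp hAnn hr hs _ _ _)
  have hBcnorm : ∀ t : ℕ, c1 ^ (t+1) ≤ ‖Bc ^ (m*(t+1))‖ := by
    intro t
    have h1 : Bc ^ (m*(t+1)) = (B ^ (m*(t+1))).map Complex.ofReal := map_matrix_pow B _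
    calc c1 ^ (t+1) ≤ (B ^ (m*(t+1))) k00 k00 := hdiagpow t
      _ ≤ ‖(Bc ^ (m*(t+1))) k00 k00‖ := by
          rw [h1, Matrix.map_apply, Complex.norm_eq_abs, Complex.abs_ofReal]
          exact le_abs_self _
      _ ≤ ‖Bc ^ (m*(t+1))‖ := entry_norm_le _ _ _
  have hρpos : 0 < ρ := by
    have hsub : Tendsto (fun t : ℕ => ‖Bc ^ (m*(t+1))‖ ^ (1/((m*(t+1) : ℕ):ℝ)))
        atTop (𝓝 ρ) := hGel.comp (tendsto_mul_succ m hm1)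
    have hlb : ∀ t : ℕ, c1 ^ ((1:ℝ)/m) ≤ ‖Bc ^ (m*(t+1))‖ ^ (1/((m*(t+1) : ℕ):ℝ)) := by
      intro t
      have hgt : (0:ℝ) < ((m*(t+1) : ℕ):ℝ) := by
        have h0 : 0 < m*(t+1) := Nat.mul_pos (by omega) (by omega)
        exact_mod_cast h0
      have he : (0:ℝ) < 1/((m*(t+1) : ℕ):ℝ) := one_div_pos.mpr hgt
      have h1 : (c1 ^ (t+1) : ℝ) ^ (1/((m*(t+1) : ℕ):ℝ))
          ≤ ‖Bc ^ (m*(t+1))‖ ^ (1/((m*(t+1) : ℕ):ℝ)) :=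
        Real.rpow_le_rpow (pow_nonneg hc1.le _) (hBcnorm t) he.le
      calc c1 ^ ((1:ℝ)/m) = (c1 ^ (t+1) : ℝ) ^ (1/((m*(t+1) : ℕ):ℝ)) := by
            rw [← Real.rpow_natCast c1 (t+1), ← Real.rpow_mul hc1.le]
            congr 1
            push_cast
            field_simp
        _ ≤ _ := h1
    have := ge_of_tendsto hsub (Filter.Eventually.of_forall hlb)
    exact lt_of_lt_of_le (Real.rpow_pos_of_pos hc1 _) this
  -- upper bound for eigenvalues of M
  have hfac0 : (0:ℝ) ≤ 1 - ε := by linarith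
  have hbound : ∀ μ : ℂ, IsEigC M μ
      → Complex.abs μ ≤ (1-ε) ^ ((1:ℝ)/Nb) * ρ := by
    intro μ hμ
    have hstep : ∀ t : ℕ, Complex.abs μ
        ≤ (1-ε) ^ ((1:ℝ)/Nb) * ‖Bc ^ (Nb*(t+1))‖ ^ (1/((Nb*(t+1) : ℕ):ℝ)) := by
      intro t
      have h1 : (Complex.abs μ) ^ (Nb*(t+1)) ≤ ‖M ^ (Nb*(t+1))‖ := eig_pow_le_norm hμ _
      have h2 : ∀ i j, Complex.abs ((M ^ (Nb*(t+1))) i j)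
          ≤ (1-ε)^(t+1) * (B ^ (Nb*(t+1))) i j := by
        intro i j
        have h := eps_pow hε1 hdom (t+1) i j
        rwa [← pow_mul, ← pow_mul] at h
      have h3 : ‖M ^ (Nb*(t+1))‖ ≤ (1-ε)^(t+1) * ‖Bc ^ (Nb*(t+1))‖ := by
        have := norm_dom (pow_nonneg hfac0 _) h2
        rwa [← map_matrix_pow] at this
      have hgt : (0:ℝ) < ((Nb*(t+1) : ℕ):ℝ) := by
        have h0 : 0 < Nb*(t+1) := Nat.mul_pos (by omega) (by omega)
        exact_mod_cast h0
      have he : (0:ℝ) < 1/((Nb*(t+1) : ℕ):ℝ) := one_div_pos.mpr hgt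
      have h4 : ((Complex.abs μ) ^ (Nb*(t+1))) ^ (1/((Nb*(t+1) : ℕ):ℝ))
          ≤ ((1-ε)^(t+1) * ‖Bc ^ (Nb*(t+1))‖) ^ (1/((Nb*(t+1) : ℕ):ℝ)) :=
        Real.rpow_le_rpow (pow_nonneg (Complex.abs.nonneg μ) _) (h1.trans h3) he.le
      have h5 : ((Complex.abs μ) ^ (Nb*(t+1))) ^ (1/((Nb*(t+1) : ℕ):ℝ)) = Complex.abs μ := by
        rw [← Real.rpow_natCast (Complex.abs μ) (Nb*(t+1)), ← Real.rpow_mul (Complex.abs.nonneg μ)]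
        rw [show ((Nb*(t+1) : ℕ):ℝ) * (1/((Nb*(t+1) : ℕ):ℝ)) = 1 by
          field_simp]
        exact Real.rpow_one _
      have h6 : ((1-ε)^(t+1) * ‖Bc ^ (Nb*(t+1))‖) ^ (1/((Nb*(t+1) : ℕ):ℝ))
          = (1-ε) ^ ((1:ℝ)/Nb) * ‖Bc ^ (Nb*(t+1))‖ ^ (1/((Nb*(t+1) : ℕ):ℝ)) := by
        rw [Real.mul_rpow (pow_nonneg hfac0 _) (norm_nonneg _)]
        congr 1
        rw [← Real.rpow_natCast (1-ε) (t+1), ← Real.rpow_mul hfac0]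
        congr 1
        push_cast
        field_simp
      rw [h5, h6] at h4
      exact h4
    have hsub : Tendsto (fun t : ℕ =>
        (1-ε) ^ ((1:ℝ)/Nb) * ‖Bc ^ (Nb*(t+1))‖ ^ (1/((Nb*(t+1) : ℕ):ℝ)))
        atTop (𝓝 ((1-ε) ^ ((1:ℝ)/Nb) * ρ)) :=
      (hGel.comp (tendsto_mul_succ Nb hNb1)).const_mul _
    exact ge_of_tendsto hsub (Filter.Eventually.of_forall hstep)
  have hsprM : spr M ≤ (1-ε) ^ ((1:ℝ)/Nb) * ρ :=
    spr_le (mul_nonneg (Real.rpow_nonneg hfac0 _) hρpos.le) hbound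
  have hfac1 : (1-ε) ^ ((1:ℝ)/Nb) < 1 := by
    apply Real.rpow_lt_one hfac0 (by linarith)
    have : (0:ℝ) < (Nb:ℝ) := by exact_mod_cast (by omega : 0 < Nb)
    positivity
  have hlt : (1-ε) ^ ((1:ℝ)/Nb) * ρ < ρ := by
    nlinarith [Real.rpow_nonneg hfac0 ((1:ℝ)/Nb)]
  -- ρ ≤ spr Bc
  have hρle : ρ ≤ spr Bc := by
    have hub : spectralRadius ℂ Bc ≤ ENNReal.ofReal (spr Bc) := by
      rw [show spectralRadius ℂ Bc = ⨆ μ ∈ spectrum ℂ Bc, (‖μ‖₊ : ℝ≥0∞) from rfl]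
      apply iSup₂_le
      intro μ hμ
      rw [show ((‖μ‖₊ : ℝ≥0∞)) = ENNReal.ofReal ‖μ‖ from (ofReal_norm μ).symm]
      apply ENNReal.ofReal_le_ofReal
      rw [Complex.norm_eq_abs]
      exact le_spr ((isEigC_iff_mem_spectrum Bc μ).mpr hμ)
    have hsprBc0 : 0 ≤ spr Bc := by
      haveI : Nontrivial (Matrix (Fin s0) (Fin s0) ℂ) := by
        refine ⟨1, 0, fun h => ?_⟩
        have := congrFun (congrFun h k00) k00
        simp [Matrix.one_apply_eq] at this
      obtain ⟨μ0, hμ0⟩ := spectrum.nonempty Bc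
      exact le_trans (Complex.abs.nonneg μ0) (le_spr ((isEigC_iff_mem_spectrum Bc μ0).mpr hμ0))
    exact ENNReal.toReal_le_of_le_ofReal hsprBc0 hub
  calc spr M ≤ (1-ε) ^ ((1:ℝ)/Nb) * ρ := hsprM
    _ < ρ := hlt
    _ ≤ spr Bc := hρle

end Main
end QBDProof

open QBD in
/-- strict decrease of the spectral radius of `C(z,w)` off the
positive reals. -/
theorem statement13
    (s0 : ℕ) (hs0 : 1 ≤ s0)
    (A : ℤ → ℤ → Matrix (Fin s0) (Fin s0) ℝ)
    (hAsupp : ∀ i j : ℤ, ¬(i ∈ Hs ∧ j ∈ Hs) → A i j = 0)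
    (hAnn : ∀ i j : ℤ, ∀ k l, 0 ≤ A i j k l)
    (hAst : IsStochastic (∑ i ∈ Hs, ∑ j ∈ Hs, A i j))
    (hfull_i : ChainIrreducible (fullKernel s0 A))
    (hfull_a : ChainAperiodic (fullKernel s0 A)) :
    ∀ z w : ℂ, z ≠ 0 → w ≠ 0 → (z ≠ (‖z‖ : ℂ) ∨ w ≠ (‖w‖ : ℂ)) →
      spr (CmatC s0 A z w) <
        spr (CmatC s0 A ((‖z‖ : ℝ) : ℂ) ((‖w‖ : ℝ) : ℂ)) := by
  intro z w hz hw hzw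
  exact QBDProof.main_lemma hs0 hAsupp hAnn hfull_i hfull_a hz hw hzw
end

section
/- Suppose z ∈ ℂ∖{0} is such that the nonnegative matrix series N1(|z|), G1(|z|) and R1(|z|) converge entrywise. Then for every w ∈ ℂ∖{0}: det(I − C(z,w)) = 0 if and only if w is an eigenvalue of G1(z) or w^{−1} is an eigenvalue of R1(z). -/
namespace QBDSeries

/-- The index set `H = {-1, 0, 1}`. -/
def Hs : Finset ℤ := {-1, 0, 1}

/-- Partial sum of the first `k` entries of a sequence `σ : Fin n → ℤ`. -/
def psum {n : ℕ} (σ : Fin n → ℤ) (k : ℕ) : ℤ :=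
  ∑ i ∈ Finset.univ.filter (fun i : Fin n => (i : ℕ) < k), σ i

/-- Condition defining the index set `𝓘_n`. -/
def condQ (n : ℕ) (σ : Fin n → ℤ) : Prop :=
  (∀ k : ℕ, 1 ≤ k → k ≤ n - 1 → 0 ≤ psum σ k) ∧ psum σ n = 0

/-- Condition defining the index set `𝓘_{D,n}`. -/
def condD (n : ℕ) (σ : Fin n → ℤ) : Prop :=
  (∀ k : ℕ, 1 ≤ k → k ≤ n - 1 → 0 ≤ psum σ k) ∧ psum σ n = -1

/-- Condition defining the index set `𝓘_{U,n}`. -/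
def condU (n : ℕ) (σ : Fin n → ℤ) : Prop :=
  (∀ k : ℕ, 1 ≤ k → k ≤ n - 1 → 1 ≤ psum σ k) ∧ psum σ n = 1

/-- `A_{*,i}(z) = Σ_{j∈H} A_{j,i} z^j` over `ℂ`. -/
noncomputable def AstarC (s0 : ℕ) (A : ℤ → ℤ → Matrix (Fin s0) (Fin s0) ℝ) (z : ℂ) (i : ℤ) :
    Matrix (Fin s0) (Fin s0) ℂ :=
  ∑ j ∈ Hs, (z ^ j) • (A j i).map Complex.ofReal

/-- `A_{*,i}(z) = Σ_{j∈H} A_{j,i} z^j` over `ℝ`. -/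
noncomputable def AstarR (s0 : ℕ) (A : ℤ → ℤ → Matrix (Fin s0) (Fin s0) ℝ) (z : ℝ) (i : ℤ) :
    Matrix (Fin s0) (Fin s0) ℝ :=
  ∑ j ∈ Hs, (z ^ j) • A j i

open Classical in
/-- `Σ_{σ ∈ cond} A_{*,σ1}(z)⋯A_{*,σn}(z)` over `ℂ`. -/
noncomputable def pathSumC (s0 : ℕ) (A : ℤ → ℤ → Matrix (Fin s0) (Fin s0) ℝ) (z : ℂ) (n : ℕ)
    (cond : (Fin n → ℤ) → Prop) : Matrix (Fin s0) (Fin s0) ℂ :=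
  ∑ σ : Fin n → {x : ℤ // x ∈ Hs},
    if cond (fun k => (σ k : ℤ)) then (List.ofFn fun k : Fin n => AstarC s0 A z (σ k : ℤ)).prod
    else 0

open Classical in
/-- `Σ_{σ ∈ cond} A_{*,σ1}(z)⋯A_{*,σn}(z)` over `ℝ`. -/
noncomputable def pathSumR (s0 : ℕ) (A : ℤ → ℤ → Matrix (Fin s0) (Fin s0) ℝ) (z : ℝ) (n : ℕ)
    (cond : (Fin n → ℤ) → Prop) : Matrix (Fin s0) (Fin s0) ℝ :=
  ∑ σ : Fin n → {x : ℤ // x ∈ Hs},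
    if cond (fun k => (σ k : ℤ)) then (List.ofFn fun k : Fin n => AstarR s0 A z (σ k : ℤ)).prod
    else 0

/-- `Q^{(n)}(z)` (complex); `Q^{(0)}(z) = I`. -/
noncomputable def QmatC (s0 : ℕ) (A : ℤ → ℤ → Matrix (Fin s0) (Fin s0) ℝ) (z : ℂ) (n : ℕ) :
    Matrix (Fin s0) (Fin s0) ℂ := pathSumC s0 A z n (condQ n)

/-- `D^{(n)}(z)` (complex); it vanishes for `n = 0`. -/
noncomputable def DmatC (s0 : ℕ) (A : ℤ → ℤ → Matrix (Fin s0) (Fin s0) ℝ) (z : ℂ) (n : ℕ) :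
    Matrix (Fin s0) (Fin s0) ℂ := pathSumC s0 A z n (condD n)

/-- `U^{(n)}(z)` (complex); it vanishes for `n = 0`. -/
noncomputable def UmatC (s0 : ℕ) (A : ℤ → ℤ → Matrix (Fin s0) (Fin s0) ℝ) (z : ℂ) (n : ℕ) :
    Matrix (Fin s0) (Fin s0) ℂ := pathSumC s0 A z n (condU n)

/-- `Q^{(n)}(z)` (real). -/
noncomputable def QmatR (s0 : ℕ) (A : ℤ → ℤ → Matrix (Fin s0) (Fin s0) ℝ) (z : ℝ) (n : ℕ) :
    Matrix (Fin s0) (Fin s0) ℝ := pathSumR s0 A z n (condQ n)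

/-- `D^{(n)}(z)` (real). -/
noncomputable def DmatR (s0 : ℕ) (A : ℤ → ℤ → Matrix (Fin s0) (Fin s0) ℝ) (z : ℝ) (n : ℕ) :
    Matrix (Fin s0) (Fin s0) ℝ := pathSumR s0 A z n (condD n)

/-- `U^{(n)}(z)` (real). -/
noncomputable def UmatR (s0 : ℕ) (A : ℤ → ℤ → Matrix (Fin s0) (Fin s0) ℝ) (z : ℝ) (n : ℕ) :
    Matrix (Fin s0) (Fin s0) ℝ := pathSumR s0 A z n (condU n)

/-- `N1(z) = Σ_{n≥0} Q^{(n)}(z)`, entrywise (complex). -/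
noncomputable def N1C (s0 : ℕ) (A : ℤ → ℤ → Matrix (Fin s0) (Fin s0) ℝ) (z : ℂ) :
    Matrix (Fin s0) (Fin s0) ℂ := Matrix.of fun i j => ∑' n : ℕ, QmatC s0 A z n i j

/-- `G1(z) = Σ_{n≥1} D^{(n)}(z)`, entrywise (complex). -/
noncomputable def G1C (s0 : ℕ) (A : ℤ → ℤ → Matrix (Fin s0) (Fin s0) ℝ) (z : ℂ) :
    Matrix (Fin s0) (Fin s0) ℂ := Matrix.of fun i j => ∑' n : ℕ, DmatC s0 A z n i j

/-- `R1(z) = Σ_{n≥1} U^{(n)}(z)`, entrywise (complex). -/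
noncomputable def R1C (s0 : ℕ) (A : ℤ → ℤ → Matrix (Fin s0) (Fin s0) ℝ) (z : ℂ) :
    Matrix (Fin s0) (Fin s0) ℂ := Matrix.of fun i j => ∑' n : ℕ, UmatC s0 A z n i j

/-- `N1(z)` (real). -/
noncomputable def N1R (s0 : ℕ) (A : ℤ → ℤ → Matrix (Fin s0) (Fin s0) ℝ) (z : ℝ) :
    Matrix (Fin s0) (Fin s0) ℝ := Matrix.of fun i j => ∑' n : ℕ, QmatR s0 A z n i j

/-- `G1(z)` (real). -/
noncomputable def G1R (s0 : ℕ) (A : ℤ → ℤ → Matrix (Fin s0) (Fin s0) ℝ) (z : ℝ) :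
    Matrix (Fin s0) (Fin s0) ℝ := Matrix.of fun i j => ∑' n : ℕ, DmatR s0 A z n i j

/-- `R1(z)` (real). -/
noncomputable def R1R (s0 : ℕ) (A : ℤ → ℤ → Matrix (Fin s0) (Fin s0) ℝ) (z : ℝ) :
    Matrix (Fin s0) (Fin s0) ℝ := Matrix.of fun i j => ∑' n : ℕ, UmatR s0 A z n i j

/-- `C(z,w) = Σ_{i,j∈H} A_{i,j} z^i w^j` over `ℂ`. -/
noncomputable def CmatC (s0 : ℕ) (A : ℤ → ℤ → Matrix (Fin s0) (Fin s0) ℝ) (z w : ℂ) :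
    Matrix (Fin s0) (Fin s0) ℂ :=
  ∑ i ∈ Hs, ∑ j ∈ Hs, (z ^ i * w ^ j) • (A i j).map Complex.ofReal

/-- `H1(z) = A_{*,0}(z) + A_{*,1}(z) N1(z) A_{*,-1}(z)` (complex). -/
noncomputable def H1C (s0 : ℕ) (A : ℤ → ℤ → Matrix (Fin s0) (Fin s0) ℝ) (z : ℂ) :
    Matrix (Fin s0) (Fin s0) ℂ :=
  AstarC s0 A z 0 + AstarC s0 A z 1 * N1C s0 A z * AstarC s0 A z (-1)

/-- A matrix with row sums one and nonnegative entries. -/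
def IsStochastic {n : ℕ} (M : Matrix (Fin n) (Fin n) ℝ) : Prop :=
  (∀ i j, 0 ≤ M i j) ∧ ∀ i, ∑ j, M i j = 1

open Finset

lemma mem_Hs_iff {x : ℤ} : x ∈ Hs ↔ x = -1 ∨ x = 0 ∨ x = 1 := by
  simp [Hs]

/-- Extension of a finite sequence by zeros. -/
def extF {n : ℕ} (σ : Fin n → ℤ) (i : ℕ) : ℤ := if h : i < n then σ ⟨i, h⟩ else 0

lemma psum_eq {n : ℕ} (σ : Fin n → ℤ) (k : ℕ) :
    psum σ k = ∑ i ∈ Finset.range k, extF σ i := by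
  induction k with
  | zero =>
    rw [psum]
    have : Finset.univ.filter (fun i : Fin n => (i : ℕ) < 0) = ∅ := by
      apply Finset.filter_false_of_mem; intro i _; omega
    simp [this]
  | succ k ih =>
    rw [Finset.sum_range_succ, ← ih, psum, psum]
    by_cases h : k < n
    · have hins : Finset.univ.filter (fun i : Fin n => (i : ℕ) < k + 1)
          = insert ⟨k, h⟩ (Finset.univ.filter (fun i : Fin n => (i : ℕ) < k)) := by
        ext i
        simp only [Finset.mem_filter, Finset.mem_univ, true_and, Finset.mem_insert]
        constructor
        · intro hi
          rcases Nat.lt_succ_iff_lt_or_eq.mp hi with h' | h'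
          · exact Or.inr h'
          · exact Or.inl (Fin.ext h')
        · rintro (rfl | hi)
          · simp
          · omega
      rw [hins, Finset.sum_insert (by simp)]
      rw [extF, dif_pos h]
      ring
    · have : Finset.univ.filter (fun i : Fin n => (i : ℕ) < k + 1)
          = Finset.univ.filter (fun i : Fin n => (i : ℕ) < k) := by
        ext i
        simp only [Finset.mem_filter, Finset.mem_univ, true_and]
        have := i.2; omega
      rw [this, extF, dif_neg h, add_zero]

lemma psum_zero {n : ℕ} (σ : Fin n → ℤ) : psum σ 0 = 0 := by
  rw [psum_eq]; simp

lemma extF_cons_zero {n : ℕ} (c : ℤ) (τ : Fin n → ℤ) : extF (Fin.cons c τ) 0 = c := by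
  rw [extF, dif_pos (Nat.succ_pos n)]
  simp

lemma extF_cons_succ {n : ℕ} (c : ℤ) (τ : Fin n → ℤ) (i : ℕ) :
    extF (Fin.cons c τ) (i + 1) = extF τ i := by
  rw [extF, extF]
  by_cases h : i < n
  · rw [dif_pos (by omega : i + 1 < n + 1), dif_pos h]
    exact Fin.cons_succ (α := fun _ => ℤ) c τ ⟨i, h⟩
  · rw [dif_neg (by omega), dif_neg h]

lemma psum_cons {n : ℕ} (c : ℤ) (τ : Fin n → ℤ) (k : ℕ) :
    psum (Fin.cons c τ) (k + 1) = c + psum τ k := by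
  rw [psum_eq, psum_eq, Finset.sum_range_succ']
  rw [extF_cons_zero]
  rw [add_comm]
  congr 1
  exact Finset.sum_congr rfl fun i _ => extF_cons_succ c τ i

lemma psum_snoc_le {n : ℕ} (τ : Fin n → ℤ) (c : ℤ) (k : ℕ) (hk : k ≤ n) :
    psum (Fin.snoc τ c) k = psum τ k := by
  rw [psum_eq, psum_eq]
  refine Finset.sum_congr rfl fun i hi => ?_
  rw [Finset.mem_range] at hi
  have hin : i < n := by omega
  rw [extF, extF, dif_pos (by omega : i < n + 1), dif_pos hin]
  exact Fin.snoc_castSucc (α := fun _ => ℤ) c τ ⟨i, hin⟩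

lemma psum_snoc_top {n : ℕ} (τ : Fin n → ℤ) (c : ℤ) :
    psum (Fin.snoc τ c) (n + 1) = psum τ n + c := by
  rw [psum_eq, Finset.sum_range_succ, ← psum_eq, psum_snoc_le τ c n le_rfl]
  congr 1
  rw [extF, dif_pos (Nat.lt_succ_self n)]
  exact Fin.snoc_last (α := fun _ => ℤ) c τ

/-- Concatenation of two finite sequences, as a function `Fin n`. -/
def glueF {n : ℕ} {γ : Type*} (m : ℕ) (σ1 : Fin m → γ) (σ2 : Fin (n - m) → γ) : Fin n → γ :=
  fun i => if h : (i : ℕ) < m then σ1 ⟨i, h⟩ else σ2 ⟨(i : ℕ) - m, by omega⟩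

/-- Initial segment (with junk zeros). -/
def preZ {n : ℕ} (m : ℕ) (τ : Fin n → ℤ) : Fin m → ℤ := fun i => extF τ i

/-- Final segment (with junk zeros). -/
def sufZ {n : ℕ} (m : ℕ) (τ : Fin n → ℤ) : Fin (n - m) → ℤ := fun i => extF τ (m + i)

lemma psum_preZ {n m : ℕ} (τ : Fin n → ℤ) (k : ℕ) (hk : k ≤ m) (hm : m ≤ n) :
    psum (preZ m τ) k = psum τ k := by
  rw [psum_eq, psum_eq]
  refine Finset.sum_congr rfl fun i hi => ?_
  rw [Finset.mem_range] at hi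
  rw [extF, dif_pos (by omega : i < m)]
  rfl

lemma psum_sufZ {n m : ℕ} (τ : Fin n → ℤ) (k : ℕ) (hk : k ≤ n - m) (hm : m ≤ n) :
    psum (sufZ m τ) k = psum τ (m + k) - psum τ m := by
  rw [psum_eq, psum_eq, psum_eq, Finset.sum_range_add]
  have : ∑ i ∈ Finset.range k, extF (sufZ m τ) i
      = ∑ i ∈ Finset.range k, extF τ (m + i) := by
    refine Finset.sum_congr rfl fun i hi => ?_
    rw [Finset.mem_range] at hi
    rw [extF, dif_pos (by omega : i < n - m)]
    rfl
  rw [this]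
  ring

lemma preZ_glue {n m : ℕ} (hm : m ≤ n) {γ : Type*} (f : γ → ℤ)
    (σ1 : Fin m → γ) (σ2 : Fin (n - m) → γ) :
    preZ m (fun k => f (glueF m σ1 σ2 k)) = fun i => f (σ1 i) := by
  funext i
  have hin : (i : ℕ) < n := by omega
  rw [preZ, extF, dif_pos hin, glueF]
  rw [dif_pos (by exact i.2 : ((⟨(i : ℕ), hin⟩ : Fin n) : ℕ) < m)]

lemma sufZ_glue {n m : ℕ} (hm : m ≤ n) {γ : Type*} (f : γ → ℤ)
    (σ1 : Fin m → γ) (σ2 : Fin (n - m) → γ) :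
    sufZ m (fun k => f (glueF m σ1 σ2 k)) = fun i => f (σ2 i) := by
  funext i
  have hin : m + (i : ℕ) < n := by omega
  rw [sufZ, extF, dif_pos hin, glueF]
  rw [dif_neg (show ¬ ((⟨m + (i : ℕ), hin⟩ : Fin n) : ℕ) < m from Nat.not_lt.2 (Nat.le_add_right m (i : ℕ)))]
  exact congrArg (fun x => f (σ2 x)) (Fin.ext (by simp))

lemma glueF_bijective {n m : ℕ} (hm : m ≤ n) {γ : Type*} :
    Function.Bijective (fun p : (Fin m → γ) × (Fin (n - m) → γ) => glueF m p.1 p.2) := by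
  constructor
  · rintro ⟨σ1, σ2⟩ ⟨σ1', σ2'⟩ h
    have h' : ∀ i : Fin n, glueF m σ1 σ2 i = glueF m σ1' σ2' i := fun i => congrFun h i
    refine Prod.ext ?_ ?_
    · funext i
      have := h' ⟨(i : ℕ), by omega⟩
      rwa [glueF, glueF, dif_pos (by exact i.2), dif_pos (by exact i.2),
        show (⟨((⟨(i : ℕ), by omega⟩ : Fin n) : ℕ), by exact i.2⟩ : Fin m) = i from Fin.ext rfl] at this
    · funext i
      have hin : m + (i : ℕ) < n := by omega
      have := h' ⟨m + (i : ℕ), hin⟩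
      rw [glueF, glueF, dif_neg (show ¬ ((⟨m + (i : ℕ), hin⟩ : Fin n) : ℕ) < m from Nat.not_lt.2 (Nat.le_add_right m (i : ℕ))), dif_neg (show ¬ ((⟨m + (i : ℕ), hin⟩ : Fin n) : ℕ) < m from Nat.not_lt.2 (Nat.le_add_right m (i : ℕ)))] at this
      simp only at this
      rwa [show (⟨m + (i : ℕ) - m, by omega⟩ : Fin (n - m)) = i from Fin.ext (by simp)] at this
  · intro σ
    refine ⟨⟨fun i => σ ⟨(i : ℕ), by omega⟩, fun i => σ ⟨m + (i : ℕ), by omega⟩⟩, ?_⟩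
    funext i
    simp only [glueF]
    split
    · exact congrArg σ (Fin.ext rfl)
    · exact congrArg σ (Fin.ext (show m + ((i : ℕ) - m) = (i : ℕ) by omega))

lemma ofFn_glue {n m : ℕ} (hm : m ≤ n) {γ : Type*} {M : Type*} [Monoid M] (g : γ → M)
    (σ1 : Fin m → γ) (σ2 : Fin (n - m) → γ) :
    (List.ofFn fun k : Fin n => g (glueF m σ1 σ2 k))
      = (List.ofFn fun k => g (σ1 k)) ++ (List.ofFn fun k => g (σ2 k)) := by
  apply List.ext_getElem
  · simp; omega
  · intro i h1 h2
    rw [List.getElem_ofFn, List.getElem_append]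
    have hlen : (List.ofFn fun k => g (σ1 k)).length = m := by simp
    by_cases him : i < m
    · rw [dif_pos (by rw [hlen]; exact him), List.getElem_ofFn]
      simp only [glueF]
      rw [dif_pos (by simpa using him)]
    · rw [dif_neg (by rw [hlen]; exact him), List.getElem_ofFn]
      simp only [glueF]
      rw [dif_neg (by simpa using him)]
      exact congrArg (fun x => g (σ2 x)) (Fin.ext (by simp [hlen]))

/-- Condition defining paths from level 1 to level 0 staying nonnegative. -/
def condL (n : ℕ) (σ : Fin n → ℤ) : Prop :=
  (∀ k : ℕ, 1 ≤ k → k ≤ n - 1 → -1 ≤ psum σ k) ∧ psum σ n = -1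

lemma condU_cons {n : ℕ} {c : ℤ} (hc1 : -1 ≤ c) (hc2 : c ≤ 1) {τ : Fin n → ℤ} :
    condU (n + 1) (Fin.cons c τ) ↔ (c = 1 ∧ condQ n τ) := by
  constructor
  · rintro ⟨hk, hs⟩
    rw [show n + 1 - 1 = n from rfl] at hk
    rw [psum_cons] at hs
    rcases Nat.eq_zero_or_pos n with rfl | hn
    · rw [psum_zero] at hs
      exact ⟨by omega, fun k h1 h2 => by omega, psum_zero τ⟩
    · have h1 := hk 1 le_rfl (by omega)
      have h1' : psum (Fin.cons c τ) 1 = c := by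
        have h2 := psum_cons c τ 0
        rw [psum_zero] at h2
        simpa using h2
      have hc : c = 1 := by omega
      refine ⟨hc, fun k hk1 hk2 => ?_, by omega⟩
      have := hk (k + 1) (by omega) (by omega)
      rw [psum_cons] at this
      omega
  · rintro ⟨hc, hq, hs⟩
    constructor
    · intro k h1 h2
      rw [show n + 1 - 1 = n from rfl] at h2
      obtain ⟨k', rfl⟩ : ∃ k', k = k' + 1 := ⟨k - 1, by omega⟩
      rw [psum_cons]
      rcases Nat.eq_zero_or_pos k' with rfl | hk'
      · rw [psum_zero]; omega
      · by_cases hk'n : k' = n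
        · subst hk'n; omega
        · have := hq k' hk' (by omega); omega
    · rw [psum_cons, hs]; omega

lemma condD_snoc {n : ℕ} {c : ℤ} (hc1 : -1 ≤ c) {τ : Fin n → ℤ} :
    condD (n + 1) (Fin.snoc τ c) ↔ (condQ n τ ∧ c = -1) := by
  constructor
  · rintro ⟨hk, hs⟩
    rw [show n + 1 - 1 = n from rfl] at hk
    rw [psum_snoc_top] at hs
    rcases Nat.eq_zero_or_pos n with rfl | hn
    · rw [psum_zero] at hs
      exact ⟨⟨fun k h1 h2 => by omega, psum_zero τ⟩, by omega⟩
    · have hnn := hk n (by omega) le_rfl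
      rw [psum_snoc_le τ c n le_rfl] at hnn
      refine ⟨⟨fun k hk1 hk2 => ?_, by omega⟩, by omega⟩
    
      have := hk k hk1 (by omega)
      rwa [psum_snoc_le τ c k (by omega)] at this
  · rintro ⟨⟨hq, hs⟩, hc⟩
    refine ⟨fun k h1 h2 => ?_, ?_⟩
    · rw [show n + 1 - 1 = n from rfl] at h2
      rw [psum_snoc_le τ c k (by omega)]
      by_cases hkn : k = n
      · subst hkn; omega
      · exact hq k h1 (by omega)
    · rw [psum_snoc_top, hs, hc]; ring

lemma condQ_cons {n : ℕ} {c : ℤ} (hc1 : -1 ≤ c) (hc2 : c ≤ 1) {τ : Fin n → ℤ} :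
    condQ (n + 1) (Fin.cons c τ) ↔ ((c = 0 ∧ condQ n τ) ∨ (c = 1 ∧ condL n τ)) := by
  constructor
  · rintro ⟨hk, hs⟩
    rw [show n + 1 - 1 = n from rfl] at hk
    rw [psum_cons] at hs
    rcases Nat.eq_zero_or_pos n with rfl | hn
    · rw [psum_zero] at hs
      exact Or.inl ⟨by omega, fun k h1 h2 => by omega, psum_zero τ⟩
    · have h1 := hk 1 le_rfl (by omega)
      have h1' : psum (Fin.cons c τ) 1 = c := by
        have h2 := psum_cons c τ 0
        rw [psum_zero] at h2
        simpa using h2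
      have hc : c = 0 ∨ c = 1 := by omega
      rcases hc with hc | hc
      · refine Or.inl ⟨hc, fun k hk1 hk2 => ?_, by omega⟩
        have := hk (k + 1) (by omega) (by omega)
        rw [psum_cons] at this
        omega
      · refine Or.inr ⟨hc, fun k hk1 hk2 => ?_, by omega⟩
        have := hk (k + 1) (by omega) (by omega)
        rw [psum_cons] at this
        omega
  · rintro (⟨hc, hq, hs⟩ | ⟨hc, hq, hs⟩) <;>
    · constructor
      · intro k h1 h2
        rw [show n + 1 - 1 = n from rfl] at h2
        obtain ⟨k', rfl⟩ : ∃ k', k = k' + 1 := ⟨k - 1, by omega⟩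
        rw [psum_cons]
        rcases Nat.eq_zero_or_pos k' with rfl | hk'
        · rw [psum_zero]; omega
        · by_cases hk'n : k' = n
          · subst hk'n; omega
          · have := hq k' hk' (by omega); omega
      · rw [psum_cons, hs]; omega

open Classical in
lemma count_first_passage {n : ℕ} (τ : Fin n → ℤ) {M : Type*} [AddCommMonoid M] (w : M) :
    ∑ m ∈ Finset.range (n + 1),
      (if condD m (preZ m τ) ∧ condQ (n - m) (sufZ m τ) then w else 0)
      = if condL n τ then w else 0 := by
  have key : ∀ m, m ∈ Finset.range (n + 1) →
      (condD m (preZ m τ) ∧ condQ (n - m) (sufZ m τ)) →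
      (condL n τ ∧ psum τ m = -1 ∧ ∀ k, k < m → psum τ k ≠ -1) := by
    rintro m hm ⟨⟨hD1, hD2⟩, ⟨hQ1, hQ2⟩⟩
    have hmn : m ≤ n := by rw [Finset.mem_range] at hm; omega
    have hpm : psum τ m = -1 := by rwa [psum_preZ τ m le_rfl hmn] at hD2
    have hpre : ∀ k, 1 ≤ k → k < m → 0 ≤ psum τ k := by
      intro k h1 h2
      have := hD1 k h1 (by omega)
      rwa [psum_preZ τ k (by omega) hmn] at this
    have hsuf : ∀ k, 1 ≤ k → k ≤ n - m - 1 → 0 ≤ psum τ (m + k) + 1 := by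
      intro k h1 h2
      have := hQ1 k h1 (by omega)
      rw [psum_sufZ τ k (by omega) hmn, hpm] at this
      omega
    have htot : psum τ n = -1 := by
      have h5 := hQ2
      rw [psum_sufZ τ (n - m) le_rfl hmn, hpm] at h5
      have hnm : m + (n - m) = n := by omega
      rw [hnm] at h5; omega
    refine ⟨⟨?_, htot⟩, hpm, ?_⟩
    · intro k h1 h2
      rcases lt_trichotomy k m with h | h | h
      · have := hpre k h1 h; omega
      · subst h; omega
      · have h3 := hsuf (k - m) (by omega) (by omega)
        have h4 : m + (k - m) = k := by omega
        rw [h4] at h3; omega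
    · intro k hk
      rcases Nat.eq_zero_or_pos k with rfl | h
      · rw [psum_zero]; omega
      · have := hpre k h hk; omega
  by_cases hL : condL n τ
  · have hex : ∃ m, psum τ m = -1 := ⟨n, hL.2⟩
    have hm0 : psum τ (Nat.find hex) = -1 := Nat.find_spec hex
    have hmin : ∀ k, k < Nat.find hex → psum τ k ≠ -1 := fun k hk => Nat.find_min hex hk
    have hm0n : Nat.find hex ≤ n := Nat.find_min' hex hL.2
    have hm0pos : 1 ≤ Nat.find hex := by
      rcases Nat.eq_zero_or_pos (Nat.find hex) with h | h
      · rw [h, psum_zero] at hm0; omega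
      · exact h
    rw [if_pos hL, Finset.sum_eq_single (Nat.find hex)]
    · rw [if_pos]
      refine ⟨⟨?_, ?_⟩, ?_, ?_⟩
      · intro k h1 h2
        rw [psum_preZ τ k (by omega) hm0n]
        have h3 := hL.1 k h1 (by omega)
        have h4 := hmin k (by omega)
        omega
      · rw [psum_preZ τ (Nat.find hex) le_rfl hm0n]; exact hm0
      · intro k h1 h2
        rw [psum_sufZ τ k (by omega) hm0n, hm0]
        have h3 := hL.1 (Nat.find hex + k) (by omega) (by omega)
        omega
      · rw [psum_sufZ τ (n - Nat.find hex) le_rfl hm0n, hm0]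
        have h4 : Nat.find hex + (n - Nat.find hex) = n := by omega
        rw [h4, hL.2]; ring
    · intro m hm hne
      rw [if_neg]
      intro hcond
      obtain ⟨_, hpm, hminm⟩ := key m hm hcond
      rcases lt_or_gt_of_ne hne with h | h
      · exact (hmin m h) hpm
      · exact (hminm (Nat.find hex) h) hm0
    · intro h
      exact absurd (Finset.mem_range.mpr (by omega)) h
  · rw [if_neg hL]
    apply Finset.sum_eq_zero
    intro m hm
    rw [if_neg]
    intro hcond
    exact hL (key m hm hcond).1

section PathSums

variable (s0 : ℕ) (A : ℤ → ℤ → Matrix (Fin s0) (Fin s0) ℝ) (z : ℂ)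

open Classical

lemma pathSumC_zero_Q : pathSumC s0 A z 0 (condQ 0) = 1 := by
  rw [pathSumC, Fintype.sum_unique]
  rw [if_pos ⟨fun k h1 h2 => by omega, psum_zero _⟩]
  simp

lemma DmatC_zero : DmatC s0 A z 0 = 0 := by
  rw [DmatC, pathSumC]
  apply Finset.sum_eq_zero
  intro σ _
  rw [if_neg]
  rintro ⟨-, h⟩
  rw [psum_zero] at h
  omega

lemma UmatC_zero : UmatC s0 A z 0 = 0 := by
  rw [UmatC, pathSumC]
  apply Finset.sum_eq_zero
  intro σ _
  rw [if_neg]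
  rintro ⟨-, h⟩
  rw [psum_zero] at h
  omega

lemma coe_cons {n : ℕ} (x : {x : ℤ // x ∈ Hs}) (τ : Fin n → {x : ℤ // x ∈ Hs}) :
    (fun k : Fin (n + 1) => ((Fin.cons (α := fun _ => {x : ℤ // x ∈ Hs}) x τ k) : ℤ))
      = Fin.cons (x : ℤ) (fun k => (τ k : ℤ)) := by
  funext k
  refine Fin.cases ?_ (fun i => ?_) k
  · simp
  · simp

lemma coe_snoc {n : ℕ} (x : {x : ℤ // x ∈ Hs}) (τ : Fin n → {x : ℤ // x ∈ Hs}) :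
    (fun k : Fin (n + 1) => ((Fin.snoc (α := fun _ => {x : ℤ // x ∈ Hs}) τ x k) : ℤ))
      = Fin.snoc (fun k => (τ k : ℤ)) (x : ℤ) := by
  funext k
  refine Fin.lastCases ?_ (fun i => ?_) k
  · simp
  · simp

lemma ofFn_cons_astar {n : ℕ} (x : {x : ℤ // x ∈ Hs}) (τ : Fin n → {x : ℤ // x ∈ Hs}) :
    (List.ofFn fun k : Fin (n + 1) => AstarC s0 A z ((Fin.cons (α := fun _ => {x : ℤ // x ∈ Hs}) x τ k) : ℤ))
      = AstarC s0 A z (x : ℤ) :: List.ofFn (fun k => AstarC s0 A z ((τ k : {x : ℤ // x ∈ Hs}) : ℤ)) := by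
  simp [List.ofFn_succ]

lemma ofFn_snoc_astar {n : ℕ} (x : {x : ℤ // x ∈ Hs}) (τ : Fin n → {x : ℤ // x ∈ Hs}) :
    (List.ofFn fun k : Fin (n + 1) => AstarC s0 A z ((Fin.snoc (α := fun _ => {x : ℤ // x ∈ Hs}) τ x k) : ℤ))
      = (List.ofFn (fun k => AstarC s0 A z ((τ k : {x : ℤ // x ∈ Hs}) : ℤ))).concat
          (AstarC s0 A z (x : ℤ)) := by
  rw [List.ofFn_succ',
    show (fun i : Fin n => AstarC s0 A z ((Fin.snoc (α := fun _ => {x : ℤ // x ∈ Hs}) τ x i.castSucc) : ℤ))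
        = (fun k => AstarC s0 A z ((τ k : {x : ℤ // x ∈ Hs}) : ℤ)) from funext fun i => by simp,
    show ((Fin.snoc (α := fun _ => {x : ℤ // x ∈ Hs}) τ x (Fin.last n)) : ℤ) = (x : ℤ) from by simp]

lemma hb_bounds (x : {x : ℤ // x ∈ Hs}) : -1 ≤ (x : ℤ) ∧ (x : ℤ) ≤ 1 := by
  rcases mem_Hs_iff.mp x.2 with h | h | h <;> rw [h] <;> omega

lemma UmatC_succ (n : ℕ) :
    UmatC s0 A z (n + 1) = AstarC s0 A z 1 * QmatC s0 A z n := by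
  rw [UmatC, pathSumC, ← Equiv.sum_comp (Fin.consEquiv fun _ : Fin (n + 1) => {x : ℤ // x ∈ Hs}),
    Fintype.sum_prod_type]
  simp only [Fin.consEquiv_apply]
  have step : ∀ x : {x : ℤ // x ∈ Hs},
      (∑ τ : Fin n → {x : ℤ // x ∈ Hs},
        if condU (n + 1) (fun k => ((Fin.cons (α := fun _ => {x : ℤ // x ∈ Hs}) x τ k) : ℤ))
        then (List.ofFn fun k : Fin (n + 1) =>
          AstarC s0 A z ((Fin.cons (α := fun _ => {x : ℤ // x ∈ Hs}) x τ k) : ℤ)).prod else 0)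
      = if x = (⟨1, by decide⟩ : {x : ℤ // x ∈ Hs})
        then AstarC s0 A z 1 * QmatC s0 A z n else 0 := by
    intro x
    obtain ⟨hx1, hx2⟩ := hb_bounds x
    by_cases hx : (x : ℤ) = 1
    · rw [if_pos (Subtype.ext hx), QmatC, pathSumC, Finset.mul_sum]
      refine Finset.sum_congr rfl fun τ _ => ?_
      rw [coe_cons, ofFn_cons_astar, List.prod_cons]
      rw [if_congr (condU_cons hx1 hx2) rfl rfl, hx, mul_ite, mul_zero]
      simp
    · rw [if_neg (fun h => hx (by rw [h]))]
      refine Finset.sum_eq_zero fun τ _ => ?_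
      rw [coe_cons, if_neg]
      rw [condU_cons hx1 hx2]
      rintro ⟨h1, -⟩
      exact hx h1
  rw [Finset.sum_congr rfl fun x _ => step x]
  rw [Finset.sum_ite_eq' Finset.univ (⟨1, by decide⟩ : {x : ℤ // x ∈ Hs})]
  simp

lemma DmatC_succ (n : ℕ) :
    DmatC s0 A z (n + 1) = QmatC s0 A z n * AstarC s0 A z (-1) := by
  rw [DmatC, pathSumC, ← Equiv.sum_comp (Fin.snocEquiv fun _ : Fin (n + 1) => {x : ℤ // x ∈ Hs}),
    Fintype.sum_prod_type]
  simp only [Fin.snocEquiv_apply]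
  have step : ∀ x : {x : ℤ // x ∈ Hs},
      (∑ τ : Fin n → {x : ℤ // x ∈ Hs},
        if condD (n + 1) (fun k => ((Fin.snoc (α := fun _ => {x : ℤ // x ∈ Hs}) τ x k) : ℤ))
        then (List.ofFn fun k : Fin (n + 1) =>
          AstarC s0 A z ((Fin.snoc (α := fun _ => {x : ℤ // x ∈ Hs}) τ x k) : ℤ)).prod else 0)
      = if x = (⟨-1, by decide⟩ : {x : ℤ // x ∈ Hs})
        then QmatC s0 A z n * AstarC s0 A z (-1) else 0 := by
    intro x
    obtain ⟨hx1, hx2⟩ := hb_bounds x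
    by_cases hx : (x : ℤ) = -1
    · rw [if_pos (Subtype.ext hx), QmatC, pathSumC, Finset.sum_mul]
      refine Finset.sum_congr rfl fun τ _ => ?_
      rw [coe_snoc, ofFn_snoc_astar, List.prod_concat]
      rw [if_congr (condD_snoc hx1) rfl rfl, hx, ite_mul, zero_mul]
      simp
    · rw [if_neg (fun h => hx (by rw [h]))]
      refine Finset.sum_eq_zero fun τ _ => ?_
      rw [coe_snoc, if_neg]
      rw [condD_snoc hx1]
      rintro ⟨-, h1⟩
      exact hx h1
  rw [Finset.sum_congr rfl fun x _ => step x]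
  rw [Finset.sum_ite_eq' Finset.univ (⟨-1, by decide⟩ : {x : ℤ // x ∈ Hs})]
  simp

end PathSums

open Classical in
lemma QmatC_succ (s0 : ℕ) (A : ℤ → ℤ → Matrix (Fin s0) (Fin s0) ℝ) (z : ℂ) (n : ℕ) :
    QmatC s0 A z (n + 1) = AstarC s0 A z 0 * QmatC s0 A z n
      + AstarC s0 A z 1 * pathSumC s0 A z n (condL n) := by
  rw [QmatC, pathSumC, ← Equiv.sum_comp (Fin.consEquiv fun _ : Fin (n + 1) => {x : ℤ // x ∈ Hs}),
    Fintype.sum_prod_type]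
  simp only [Fin.consEquiv_apply]
  have step : ∀ x : {x : ℤ // x ∈ Hs},
      (∑ τ : Fin n → {x : ℤ // x ∈ Hs},
        if condQ (n + 1) (fun k => ((Fin.cons (α := fun _ => {x : ℤ // x ∈ Hs}) x τ k) : ℤ))
        then (List.ofFn fun k : Fin (n + 1) =>
          AstarC s0 A z ((Fin.cons (α := fun _ => {x : ℤ // x ∈ Hs}) x τ k) : ℤ)).prod else 0)
      = (if x = (⟨0, by decide⟩ : {x : ℤ // x ∈ Hs})
          then AstarC s0 A z 0 * QmatC s0 A z n else 0)
        + (if x = (⟨1, by decide⟩ : {x : ℤ // x ∈ Hs})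
          then AstarC s0 A z 1 * pathSumC s0 A z n (condL n) else 0) := by
    intro x
    obtain ⟨hx1, hx2⟩ := hb_bounds x
    rcases mem_Hs_iff.mp x.2 with hx | hx | hx
    · rw [if_neg (fun h => by have h2 := congrArg Subtype.val h; rw [hx] at h2; exact absurd h2 (by decide)),
        if_neg (fun h => by have h2 := congrArg Subtype.val h; rw [hx] at h2; exact absurd h2 (by decide)),
        add_zero]
      refine Finset.sum_eq_zero fun τ _ => ?_
      rw [coe_cons, if_neg]
      rw [condQ_cons hx1 hx2]
      rintro (⟨h, -⟩ | ⟨h, -⟩) <;> omega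
    · rw [if_pos (Subtype.ext hx),
        if_neg (fun h => by have h2 := congrArg Subtype.val h; rw [hx] at h2; exact absurd h2 (by decide)),
        add_zero, QmatC, pathSumC, Finset.mul_sum]
      refine Finset.sum_congr rfl fun τ _ => ?_
      rw [coe_cons, ofFn_cons_astar, List.prod_cons]
      rw [if_congr (condQ_cons hx1 hx2) rfl rfl, hx, mul_ite, mul_zero]
      norm_num
    · rw [if_neg (fun h => by have h2 := congrArg Subtype.val h; rw [hx] at h2; exact absurd h2 (by decide)),
        if_pos (Subtype.ext hx),
        zero_add, pathSumC, Finset.mul_sum]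
      refine Finset.sum_congr rfl fun τ _ => ?_
      rw [coe_cons, ofFn_cons_astar, List.prod_cons]
      rw [if_congr (condQ_cons hx1 hx2) rfl rfl, hx, mul_ite, mul_zero]
      norm_num
  rw [Finset.sum_congr rfl fun x _ => step x, Finset.sum_add_distrib,
    Finset.sum_ite_eq' Finset.univ (⟨0, by decide⟩ : {x : ℤ // x ∈ Hs}),
    Finset.sum_ite_eq' Finset.univ (⟨1, by decide⟩ : {x : ℤ // x ∈ Hs})]
  simp

open Classical in
lemma pathSumC_condL (s0 : ℕ) (A : ℤ → ℤ → Matrix (Fin s0) (Fin s0) ℝ) (z : ℂ) (n : ℕ) :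
    pathSumC s0 A z n (condL n)
      = ∑ m ∈ Finset.range (n + 1), DmatC s0 A z m * QmatC s0 A z (n - m) := by
  symm
  calc
    ∑ m ∈ Finset.range (n + 1), DmatC s0 A z m * QmatC s0 A z (n - m)
        = ∑ m ∈ Finset.range (n + 1), ∑ σ : Fin n → {x : ℤ // x ∈ Hs},
            (if condD m (preZ m (fun k => (σ k : ℤ))) ∧ condQ (n - m) (sufZ m (fun k => (σ k : ℤ)))
             then (List.ofFn fun k : Fin n => AstarC s0 A z (σ k : ℤ)).prod else 0) := by
      refine Finset.sum_congr rfl fun m hm => ?_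
      have hmn : m ≤ n := by rw [Finset.mem_range] at hm; omega
      rw [DmatC, QmatC, pathSumC, pathSumC, Finset.sum_mul_sum]
      rw [← Finset.sum_product', Finset.univ_product_univ]
      refine Fintype.sum_bijective _ (glueF_bijective hmn) _ _ ?_
      rintro ⟨σ1, σ2⟩
      dsimp only
      have hpre := preZ_glue hmn (fun x : {x : ℤ // x ∈ Hs} => (x : ℤ)) σ1 σ2
      have hsuf := sufZ_glue hmn (fun x : {x : ℤ // x ∈ Hs} => (x : ℤ)) σ1 σ2
      have hw := ofFn_glue hmn (fun x : {x : ℤ // x ∈ Hs} => AstarC s0 A z (x : ℤ)) σ1 σ2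
      rw [hpre, hsuf, hw, List.prod_append, ite_zero_mul_ite_zero]
    _ = ∑ σ : Fin n → {x : ℤ // x ∈ Hs}, ∑ m ∈ Finset.range (n + 1),
            (if condD m (preZ m (fun k => (σ k : ℤ))) ∧ condQ (n - m) (sufZ m (fun k => (σ k : ℤ)))
             then (List.ofFn fun k : Fin n => AstarC s0 A z (σ k : ℤ)).prod else 0) :=
      Finset.sum_comm
    _ = pathSumC s0 A z n (condL n) := by
      rw [pathSumC]
      refine Finset.sum_congr rfl fun σ _ => ?_
      exact count_first_passage (fun k => (σ k : ℤ)) _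

section Bounds

variable (s0 : ℕ) (A : ℤ → ℤ → Matrix (Fin s0) (Fin s0) ℝ)

lemma AstarR_nonneg (hAnn : ∀ i j : ℤ, ∀ k l, 0 ≤ A i j k l) {r : ℝ} (hr : 0 ≤ r)
    (i : ℤ) (k l : Fin s0) : 0 ≤ AstarR s0 A r i k l := by
  rw [AstarR, Matrix.sum_apply]
  refine Finset.sum_nonneg fun j _ => ?_
  rw [Matrix.smul_apply, smul_eq_mul]
  exact mul_nonneg (zpow_nonneg hr j) (hAnn j i k l)

lemma AstarC_bound (hAnn : ∀ i j : ℤ, ∀ k l, 0 ≤ A i j k l) (z : ℂ) (i : ℤ) (k l : Fin s0) :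
    ‖AstarC s0 A z i k l‖ ≤ AstarR s0 A ‖z‖ i k l := by
  rw [AstarC, AstarR, Matrix.sum_apply, Matrix.sum_apply]
  refine (norm_sum_le _ _).trans (Finset.sum_le_sum fun j _ => ?_)
  rw [Matrix.smul_apply, Matrix.map_apply, smul_eq_mul, Matrix.smul_apply, smul_eq_mul,
    norm_mul, norm_zpow, Complex.norm_real, Real.norm_eq_abs,
    abs_of_nonneg (hAnn j i k l)]

lemma prod_astar_nonneg (hAnn : ∀ i j : ℤ, ∀ k l, 0 ≤ A i j k l) {r : ℝ} (hr : 0 ≤ r) :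
    ∀ (n : ℕ) (g : Fin n → ℤ) (k l : Fin s0),
      0 ≤ (List.ofFn fun i => AstarR s0 A r (g i)).prod k l := by
  intro n
  induction n with
  | zero =>
    intro g k l
    rw [List.ofFn_zero, List.prod_nil, Matrix.one_apply]
    split <;> norm_num
  | succ n ih =>
    intro g k l
    rw [List.ofFn_succ, List.prod_cons, Matrix.mul_apply]
    exact Finset.sum_nonneg fun j _ =>
      mul_nonneg (AstarR_nonneg s0 A hAnn hr _ _ _) (ih _ _ _)

lemma prod_astar_bound (hAnn : ∀ i j : ℤ, ∀ k l, 0 ≤ A i j k l) (z : ℂ) :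
    ∀ (n : ℕ) (g : Fin n → ℤ) (k l : Fin s0),
      ‖(List.ofFn fun i => AstarC s0 A z (g i)).prod k l‖
        ≤ (List.ofFn fun i => AstarR s0 A ‖z‖ (g i)).prod k l := by
  intro n
  induction n with
  | zero =>
    intro g k l
    rw [List.ofFn_zero, List.prod_nil, List.ofFn_zero, List.prod_nil, Matrix.one_apply,
      Matrix.one_apply]
    split <;> simp
  | succ n ih =>
    intro g k l
    rw [List.ofFn_succ, List.prod_cons, List.ofFn_succ, List.prod_cons, Matrix.mul_apply,
      Matrix.mul_apply]
    refine (norm_sum_le _ _).trans (Finset.sum_le_sum fun j _ => ?_)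
    refine (norm_mul_le _ _).trans ?_
    exact mul_le_mul (AstarC_bound s0 A hAnn z _ _ _) (ih _ _ _) (norm_nonneg _)
      (AstarR_nonneg s0 A hAnn (norm_nonneg z) _ _ _)

open Classical in
lemma pathSum_bound (hAnn : ∀ i j : ℤ, ∀ k l, 0 ≤ A i j k l) (z : ℂ) (n : ℕ)
    (cond : (Fin n → ℤ) → Prop) (k l : Fin s0) :
    ‖pathSumC s0 A z n cond k l‖ ≤ pathSumR s0 A ‖z‖ n cond k l := by
  rw [pathSumC, pathSumR, Matrix.sum_apply, Matrix.sum_apply]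
  refine (norm_sum_le _ _).trans (Finset.sum_le_sum fun σ _ => ?_)
  rw [apply_ite (fun M : Matrix (Fin s0) (Fin s0) ℂ => M k l),
    apply_ite (fun M : Matrix (Fin s0) (Fin s0) ℝ => M k l)]
  split_ifs with h
  · exact prod_astar_bound s0 A hAnn z n _ k l
  · simp

lemma CmatC_eq (z w : ℂ) :
    CmatC s0 A z w = w⁻¹ • AstarC s0 A z (-1) + AstarC s0 A z 0 + w • AstarC s0 A z 1 := by
  rw [CmatC, Finset.sum_comm]
  rw [Finset.sum_congr rfl (fun (j : ℤ) (_ : j ∈ Hs) => show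
      ∑ i ∈ Hs, (z ^ i * w ^ j) • (A i j).map Complex.ofReal = w ^ j • AstarC s0 A z j by
    rw [AstarC, Finset.smul_sum]
    refine Finset.sum_congr rfl fun i _ => ?_
    rw [smul_smul, mul_comm])]
  rw [show Hs = ({-1, 0, 1} : Finset ℤ) from rfl]
  rw [Finset.sum_insert (by decide), Finset.sum_insert (by decide), Finset.sum_singleton]
  rw [zpow_neg_one, zpow_zero, zpow_one, one_smul, add_assoc]

end Bounds

section TsumIdentities

variable (s0 : ℕ) (A : ℤ → ℤ → Matrix (Fin s0) (Fin s0) ℝ) (z : ℂ)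

lemma R1C_eq (hQs : ∀ i j, Summable fun n => QmatC s0 A z n i j)
    (hUs : ∀ i j, Summable fun n => UmatC s0 A z n i j) :
    R1C s0 A z = AstarC s0 A z 1 * N1C s0 A z := by
  ext i j
  show (∑' n, UmatC s0 A z n i j) = (AstarC s0 A z 1 * N1C s0 A z) i j
  rw [(hUs i j).tsum_eq_zero_add,
    show UmatC s0 A z 0 = 0 from UmatC_zero s0 A z, Matrix.zero_apply, zero_add,
    Matrix.mul_apply]
  calc (∑' n, UmatC s0 A z (n + 1) i j)
      = ∑' n, ∑ k, AstarC s0 A z 1 i k * QmatC s0 A z n k j := by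
        refine tsum_congr fun n => ?_
        rw [UmatC_succ s0 A z n, Matrix.mul_apply]
    _ = ∑ k, ∑' n, AstarC s0 A z 1 i k * QmatC s0 A z n k j :=
        Summable.tsum_finsetSum fun k _ => (hQs k j).mul_left _
    _ = ∑ k, AstarC s0 A z 1 i k * N1C s0 A z k j := by
        refine Finset.sum_congr rfl fun k _ => ?_
        rw [tsum_mul_left]
        rfl

lemma G1C_eq (hQs : ∀ i j, Summable fun n => QmatC s0 A z n i j)
    (hDs : ∀ i j, Summable fun n => DmatC s0 A z n i j) :
    G1C s0 A z = N1C s0 A z * AstarC s0 A z (-1) := by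
  ext i j
  show (∑' n, DmatC s0 A z n i j) = (N1C s0 A z * AstarC s0 A z (-1)) i j
  rw [(hDs i j).tsum_eq_zero_add,
    show DmatC s0 A z 0 = 0 from DmatC_zero s0 A z, Matrix.zero_apply, zero_add,
    Matrix.mul_apply]
  calc (∑' n, DmatC s0 A z (n + 1) i j)
      = ∑' n, ∑ k, QmatC s0 A z n i k * AstarC s0 A z (-1) k j := by
        refine tsum_congr fun n => ?_
        rw [DmatC_succ s0 A z n, Matrix.mul_apply]
    _ = ∑ k, ∑' n, QmatC s0 A z n i k * AstarC s0 A z (-1) k j :=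
        Summable.tsum_finsetSum fun k _ => (hQs i k).mul_right _
    _ = ∑ k, N1C s0 A z i k * AstarC s0 A z (-1) k j := by
        refine Finset.sum_congr rfl fun k _ => ?_
        rw [tsum_mul_right]
        rfl

lemma Srep (i j : Fin s0) (n : ℕ) :
    (∑ m ∈ Finset.range (n + 1), DmatC s0 A z m * QmatC s0 A z (n - m)) i j
      = ∑ l, ∑ kl ∈ Finset.HasAntidiagonal.antidiagonal n, DmatC s0 A z kl.1 i l * QmatC s0 A z kl.2 l j := by
  rw [Matrix.sum_apply]
  calc ∑ m ∈ Finset.range (n + 1), (DmatC s0 A z m * QmatC s0 A z (n - m)) i j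
      = ∑ m ∈ Finset.range (n + 1), ∑ l, DmatC s0 A z m i l * QmatC s0 A z (n - m) l j :=
        Finset.sum_congr rfl fun m _ => Matrix.mul_apply
    _ = ∑ l, ∑ m ∈ Finset.range (n + 1), DmatC s0 A z m i l * QmatC s0 A z (n - m) l j :=
        Finset.sum_comm
    _ = ∑ l, ∑ kl ∈ Finset.HasAntidiagonal.antidiagonal n, DmatC s0 A z kl.1 i l * QmatC s0 A z kl.2 l j :=
        Finset.sum_congr rfl fun l _ =>
          (Finset.Nat.sum_antidiagonal_eq_sum_range_succ_mk
            (fun kl => DmatC s0 A z kl.1 i l * QmatC s0 A z kl.2 l j) n).symm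

lemma Ssum (hDn : ∀ i j, Summable fun n => ‖DmatC s0 A z n i j‖)
    (hQn : ∀ i j, Summable fun n => ‖QmatC s0 A z n i j‖) (i j : Fin s0) :
    Summable fun n => (∑ m ∈ Finset.range (n + 1), DmatC s0 A z m * QmatC s0 A z (n - m)) i j := by
  refine Summable.congr ?_ fun n => (Srep s0 A z i j n).symm
  exact summable_sum fun l _ =>
    (summable_norm_sum_mul_antidiagonal_of_summable_norm (hDn i l) (hQn l j)).of_norm

lemma GN_eq (hDn : ∀ i j, Summable fun n => ‖DmatC s0 A z n i j‖)
    (hQn : ∀ i j, Summable fun n => ‖QmatC s0 A z n i j‖) (i j : Fin s0) :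
    (G1C s0 A z * N1C s0 A z) i j
      = ∑' n, (∑ m ∈ Finset.range (n + 1), DmatC s0 A z m * QmatC s0 A z (n - m)) i j := by
  rw [Matrix.mul_apply]
  calc ∑ l, G1C s0 A z i l * N1C s0 A z l j
      = ∑ l, ∑' n, ∑ kl ∈ Finset.HasAntidiagonal.antidiagonal n,
          DmatC s0 A z kl.1 i l * QmatC s0 A z kl.2 l j := by
        refine Finset.sum_congr rfl fun l _ => ?_
        exact tsum_mul_tsum_eq_tsum_sum_antidiagonal_of_summable_norm (hDn i l) (hQn l j)
    _ = ∑' n, ∑ l, ∑ kl ∈ Finset.HasAntidiagonal.antidiagonal n,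
          DmatC s0 A z kl.1 i l * QmatC s0 A z kl.2 l j :=
        (Summable.tsum_finsetSum fun l _ =>
          (summable_norm_sum_mul_antidiagonal_of_summable_norm (hDn i l) (hQn l j)).of_norm).symm
    _ = ∑' n, (∑ m ∈ Finset.range (n + 1), DmatC s0 A z m * QmatC s0 A z (n - m)) i j :=
        tsum_congr fun n => (Srep s0 A z i j n).symm

lemma N1C_eq (hQs : ∀ i j, Summable fun n => QmatC s0 A z n i j)
    (hDn : ∀ i j, Summable fun n => ‖DmatC s0 A z n i j‖)
    (hQn : ∀ i j, Summable fun n => ‖QmatC s0 A z n i j‖) :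
    N1C s0 A z = 1 + AstarC s0 A z 0 * N1C s0 A z
      + AstarC s0 A z 1 * (G1C s0 A z * N1C s0 A z) := by
  ext i j
  show (∑' n, QmatC s0 A z n i j) = _
  rw [(hQs i j).tsum_eq_zero_add]
  have h0 : QmatC s0 A z 0 i j = (1 : Matrix (Fin s0) (Fin s0) ℂ) i j := by
    rw [show QmatC s0 A z 0 = 1 from pathSumC_zero_Q s0 A z]
  have hsplit : ∀ n : ℕ, QmatC s0 A z (n + 1) i j
      = (AstarC s0 A z 0 * QmatC s0 A z n) i j
        + (AstarC s0 A z 1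
            * (∑ m ∈ Finset.range (n + 1), DmatC s0 A z m * QmatC s0 A z (n - m))) i j := by
    intro n
    rw [QmatC_succ s0 A z n, pathSumC_condL s0 A z n, Matrix.add_apply]
  have s1 : Summable fun n => (AstarC s0 A z 0 * QmatC s0 A z n) i j :=
    (summable_sum fun k _ => (hQs k j).mul_left _).congr fun n => (Matrix.mul_apply).symm
  have s2 : Summable fun n => (AstarC s0 A z 1
      * (∑ m ∈ Finset.range (n + 1), DmatC s0 A z m * QmatC s0 A z (n - m))) i j :=
    (summable_sum fun k _ => ((Ssum s0 A z hDn hQn k j).mul_left _)).congr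
      fun n => (Matrix.mul_apply).symm
  rw [tsum_congr hsplit, Summable.tsum_add s1 s2, h0]
  have e1 : (∑' n, (AstarC s0 A z 0 * QmatC s0 A z n) i j)
      = (AstarC s0 A z 0 * N1C s0 A z) i j := by
    calc (∑' n, (AstarC s0 A z 0 * QmatC s0 A z n) i j)
        = ∑' n, ∑ k, AstarC s0 A z 0 i k * QmatC s0 A z n k j :=
          tsum_congr fun n => Matrix.mul_apply
      _ = ∑ k, ∑' n, AstarC s0 A z 0 i k * QmatC s0 A z n k j :=
          Summable.tsum_finsetSum fun k _ => (hQs k j).mul_left _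
      _ = ∑ k, AstarC s0 A z 0 i k * N1C s0 A z k j := by
          refine Finset.sum_congr rfl fun k _ => ?_
          rw [tsum_mul_left]
          rfl
      _ = (AstarC s0 A z 0 * N1C s0 A z) i j := (Matrix.mul_apply).symm
  have e2 : (∑' n, (AstarC s0 A z 1
      * (∑ m ∈ Finset.range (n + 1), DmatC s0 A z m * QmatC s0 A z (n - m))) i j)
      = (AstarC s0 A z 1 * (G1C s0 A z * N1C s0 A z)) i j := by
    calc (∑' n, (AstarC s0 A z 1
        * (∑ m ∈ Finset.range (n + 1), DmatC s0 A z m * QmatC s0 A z (n - m))) i j)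
        = ∑' n, ∑ k, AstarC s0 A z 1 i k
            * (∑ m ∈ Finset.range (n + 1), DmatC s0 A z m * QmatC s0 A z (n - m)) k j :=
          tsum_congr fun n => Matrix.mul_apply
      _ = ∑ k, ∑' n, AstarC s0 A z 1 i k
            * (∑ m ∈ Finset.range (n + 1), DmatC s0 A z m * QmatC s0 A z (n - m)) k j :=
          Summable.tsum_finsetSum fun k _ => ((Ssum s0 A z hDn hQn k j).mul_left _)
      _ = ∑ k, AstarC s0 A z 1 i k * (G1C s0 A z * N1C s0 A z) k j := by
          refine Finset.sum_congr rfl fun k _ => ?_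
          rw [tsum_mul_left, GN_eq s0 A z hDn hQn k j]
      _ = (AstarC s0 A z 1 * (G1C s0 A z * N1C s0 A z)) i j := (Matrix.mul_apply).symm
  rw [e1, e2, Matrix.add_apply, Matrix.add_apply, add_assoc]

end TsumIdentities

end QBDSeries

open QBDSeries in
/-- `det(I − C(z,w)) = 0` iff `w` is an eigenvalue of `G1(z)` or
`w⁻¹` is an eigenvalue of `R1(z)`. -/
theorem statement14
    (s0 : ℕ) (hs0 : 1 ≤ s0)
    (A : ℤ → ℤ → Matrix (Fin s0) (Fin s0) ℝ)
    (hAsupp : ∀ i j : ℤ, ¬(i ∈ Hs ∧ j ∈ Hs) → A i j = 0)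
    (hAnn : ∀ i j : ℤ, ∀ k l, 0 ≤ A i j k l)
    (hAst : IsStochastic (∑ i ∈ Hs, ∑ j ∈ Hs, A i j))
    (z : ℂ) (hz : z ≠ 0)
    (hN : ∀ i j, Summable fun n : ℕ => QmatR s0 A ‖z‖ n i j)
    (hG : ∀ i j, Summable fun n : ℕ => DmatR s0 A ‖z‖ n i j)
    (hR : ∀ i j, Summable fun n : ℕ => UmatR s0 A ‖z‖ n i j) :
    ∀ w : ℂ, w ≠ 0 →
      (Matrix.det ((1 : Matrix (Fin s0) (Fin s0) ℂ) - CmatC s0 A z w) = 0 ↔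
        (∃ v : Fin s0 → ℂ, v ≠ 0 ∧ (G1C s0 A z).mulVec v = w • v) ∨
        (∃ v : Fin s0 → ℂ, v ≠ 0 ∧ (R1C s0 A z).mulVec v = w⁻¹ • v)) := by
  intro w hw
  have hQb : ∀ (n : ℕ) (i j : Fin s0),
      ‖QmatC s0 A z n i j‖ ≤ QmatR s0 A ‖z‖ n i j :=
    fun n i j => pathSum_bound s0 A hAnn z n (condQ n) i j
  have hDb : ∀ (n : ℕ) (i j : Fin s0),
      ‖DmatC s0 A z n i j‖ ≤ DmatR s0 A ‖z‖ n i j :=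
    fun n i j => pathSum_bound s0 A hAnn z n (condD n) i j
  have hUb : ∀ (n : ℕ) (i j : Fin s0),
      ‖UmatC s0 A z n i j‖ ≤ UmatR s0 A ‖z‖ n i j :=
    fun n i j => pathSum_bound s0 A hAnn z n (condU n) i j
  have hQs : ∀ i j, Summable fun n => QmatC s0 A z n i j :=
    fun i j => Summable.of_norm_bounded (hN i j) (fun n => hQb n i j)
  have hDs : ∀ i j, Summable fun n => DmatC s0 A z n i j :=
    fun i j => Summable.of_norm_bounded (hG i j) (fun n => hDb n i j)
  have hUs : ∀ i j, Summable fun n => UmatC s0 A z n i j :=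
    fun i j => Summable.of_norm_bounded (hR i j) (fun n => hUb n i j)
  have hQn : ∀ i j, Summable fun n => ‖QmatC s0 A z n i j‖ :=
    fun i j => Summable.of_nonneg_of_le (fun n => norm_nonneg _) (fun n => hQb n i j) (hN i j)
  have hDn : ∀ i j, Summable fun n => ‖DmatC s0 A z n i j‖ :=
    fun i j => Summable.of_nonneg_of_le (fun n => norm_nonneg _) (fun n => hDb n i j) (hG i j)
  have hT1 := R1C_eq s0 A z hQs hUs
  have hT2 := G1C_eq s0 A z hQs hDs
  have hT3 := N1C_eq s0 A z hQs hDn hQn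
  have hHdef : H1C s0 A z
      = AstarC s0 A z 0 + AstarC s0 A z 1 * N1C s0 A z * AstarC s0 A z (-1) := rfl
  have hHN : (1 - H1C s0 A z) * N1C s0 A z = 1 := by
    have hmul : H1C s0 A z * N1C s0 A z
        = AstarC s0 A z 0 * N1C s0 A z + AstarC s0 A z 1 * (G1C s0 A z * N1C s0 A z) := by
      rw [hHdef, hT2]
      noncomm_ring
    rw [sub_mul, one_mul, hmul]
    nth_rewrite 1 [hT3]
    abel
  have hNH : N1C s0 A z * (1 - H1C s0 A z) = 1 := mul_eq_one_comm.mp hHN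
  have hdetH : (1 - H1C s0 A z).det ≠ 0 := by
    have hd := congrArg Matrix.det hHN
    rw [Matrix.det_mul, Matrix.det_one] at hd
    exact left_ne_zero_of_mul_eq_one hd
  have hRH : R1C s0 A z * (1 - H1C s0 A z) = AstarC s0 A z 1 := by
    rw [hT1, mul_assoc, hNH, mul_one]
  have hHG : (1 - H1C s0 A z) * G1C s0 A z = AstarC s0 A z (-1) := by
    rw [hT2, ← mul_assoc, hHN, one_mul]
  have hRA : R1C s0 A z * AstarC s0 A z (-1) = H1C s0 A z - AstarC s0 A z 0 := by
    rw [hT1, hHdef, add_sub_cancel_left, mul_assoc]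
  have hfact : (1 : Matrix (Fin s0) (Fin s0) ℂ) - CmatC s0 A z w
      = (1 - w • R1C s0 A z) * ((1 - H1C s0 A z) * (1 - w⁻¹ • G1C s0 A z)) := by
    have e1 : (1 - H1C s0 A z) * (1 - w⁻¹ • G1C s0 A z)
        = (1 - H1C s0 A z) - w⁻¹ • AstarC s0 A z (-1) := by
      rw [mul_sub, mul_one, mul_smul_comm, hHG]
    have e3 : R1C s0 A z * ((1 - H1C s0 A z) - w⁻¹ • AstarC s0 A z (-1))
        = AstarC s0 A z 1 - w⁻¹ • (H1C s0 A z - AstarC s0 A z 0) := by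
      rw [mul_sub, mul_smul_comm, hRH, hRA]
    rw [e1, sub_mul, one_mul, smul_mul_assoc, e3, smul_sub, smul_smul,
      mul_inv_cancel₀ hw, one_smul, CmatC_eq s0 A z w]
    abel
  have hdet : ((1 : Matrix (Fin s0) (Fin s0) ℂ) - CmatC s0 A z w).det = 0
      ↔ ((1 - w • R1C s0 A z).det = 0 ∨ (1 - w⁻¹ • G1C s0 A z).det = 0) := by
    rw [hfact, Matrix.det_mul, Matrix.det_mul, mul_eq_zero, mul_eq_zero]
    constructor
    · rintro (h | h | h)
      · exact Or.inl h
      · exact absurd h hdetH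
      · exact Or.inr h
    · rintro (h | h)
      · exact Or.inl h
      · exact Or.inr (Or.inr h)
  have hGeig : (1 - w⁻¹ • G1C s0 A z).det = 0
      ↔ ∃ v : Fin s0 → ℂ, v ≠ 0 ∧ (G1C s0 A z).mulVec v = w • v := by
    rw [← Matrix.exists_mulVec_eq_zero_iff]
    constructor
    · rintro ⟨v, hv, hveq⟩
      refine ⟨v, hv, ?_⟩
      rw [Matrix.sub_mulVec, Matrix.one_mulVec, Matrix.smul_mulVec, sub_eq_zero] at hveq
      calc (G1C s0 A z).mulVec v = w • (w⁻¹ • (G1C s0 A z).mulVec v) := by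
            rw [smul_smul, mul_inv_cancel₀ hw, one_smul]
        _ = w • v := by rw [← hveq]
    · rintro ⟨v, hv, hveq⟩
      refine ⟨v, hv, ?_⟩
      rw [Matrix.sub_mulVec, Matrix.one_mulVec, Matrix.smul_mulVec, hveq, smul_smul,
        inv_mul_cancel₀ hw, one_smul, sub_self]
  have hReig : (1 - w • R1C s0 A z).det = 0
      ↔ ∃ v : Fin s0 → ℂ, v ≠ 0 ∧ (R1C s0 A z).mulVec v = w⁻¹ • v := by
    rw [← Matrix.exists_mulVec_eq_zero_iff]
    constructor
    · rintro ⟨v, hv, hveq⟩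
      refine ⟨v, hv, ?_⟩
      rw [Matrix.sub_mulVec, Matrix.one_mulVec, Matrix.smul_mulVec, sub_eq_zero] at hveq
      calc (R1C s0 A z).mulVec v = w⁻¹ • (w • (R1C s0 A z).mulVec v) := by
            rw [smul_smul, inv_mul_cancel₀ hw, one_smul]
        _ = w⁻¹ • v := by rw [← hveq]
    · rintro ⟨v, hv, hveq⟩
      refine ⟨v, hv, ?_⟩
      rw [Matrix.sub_mulVec, Matrix.one_mulVec, Matrix.smul_mulVec, hveq, smul_smul,
        mul_inv_cancel₀ hw, one_smul, sub_self]
  rw [hdet, hGeig, hReig]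
  exact or_comm
end

section
/- Under Assumption (A2): for every z0 ∈ [z̲1*, z̄1*] with ψ1(z0) = 1 and every nonzero nonnegative row vector u with u·C1(z0, G1(z0)) = u, the vector u is entrywise positive and, for every integer k ≥ 0, the row vector u·A¹_{*,1}(z0)·N1(z0)·R1(z0)^k is entrywise positive, where N1(z0) = (I − A_{*,0}(z0) − A_{*,1}(z0)·G1(z0))^{−1} (this inverse exists) and R1(z0) = A_{*,1}(z0)·N1(z0). Symmetrically, for every w0 ∈ [z̲2*, z̄2*] with ψ2(w0) = 1 and every nonzero nonnegative row vector u with u·C2(G2(w0), w0) = u, the vectors u and u·A²_{1,*}(w0)·N2(w0)·R2(w0)^k (k ≥ 0) are entrywise positive, where N2(w0) = (I − A_{0,*}(w0) − A_{1,*}(w0)·G2(w0))^{−1} and R2(w0) = A_{1,*}(w0)·N2(w0). -/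
namespace QBD

/-- The index set `H⁺ = {0, 1}`. -/
def Hps : Finset ℤ := {0, 1}

/-- Transition kernel of the 2D-QBD process on `ℤ₊² × S0`. -/
def qbdKernel (s0 : ℕ) (A A1 A2 A0 : ℤ → ℤ → Matrix (Fin s0) (Fin s0) ℝ) :
    (ℕ × ℕ × Fin s0) → (ℕ × ℕ × Fin s0) → ℝ := fun x y =>
  if 1 ≤ x.1 ∧ 1 ≤ x.2.1 then
    A ((y.1 : ℤ) - (x.1 : ℤ)) ((y.2.1 : ℤ) - (x.2.1 : ℤ)) x.2.2 y.2.2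
  else if 1 ≤ x.1 then
    A1 ((y.1 : ℤ) - (x.1 : ℤ)) ((y.2.1 : ℤ) - (x.2.1 : ℤ)) x.2.2 y.2.2
  else if 1 ≤ x.2.1 then
    A2 ((y.1 : ℤ) - (x.1 : ℤ)) ((y.2.1 : ℤ) - (x.2.1 : ℤ)) x.2.2 y.2.2
  else
    A0 ((y.1 : ℤ) - (x.1 : ℤ)) ((y.2.1 : ℤ) - (x.2.1 : ℤ)) x.2.2 y.2.2

/-- Kernel of the chain on `ℤ × ℤ₊ × S0` with boundary `x2 = 0` governed by `{A¹_{k,l}}`. -/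
def half1Kernel (s0 : ℕ) (A A1 : ℤ → ℤ → Matrix (Fin s0) (Fin s0) ℝ) :
    (ℤ × ℕ × Fin s0) → (ℤ × ℕ × Fin s0) → ℝ := fun x y =>
  if x.2.1 = 0 then A1 (y.1 - x.1) ((y.2.1 : ℤ) - (x.2.1 : ℤ)) x.2.2 y.2.2
  else A (y.1 - x.1) ((y.2.1 : ℤ) - (x.2.1 : ℤ)) x.2.2 y.2.2

/-- Kernel of the chain on `ℤ₊ × ℤ × S0` with boundary `x1 = 0` governed by `{A²_{k,l}}`. -/
def half2Kernel (s0 : ℕ) (A A2 : ℤ → ℤ → Matrix (Fin s0) (Fin s0) ℝ) :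
    (ℕ × ℤ × Fin s0) → (ℕ × ℤ × Fin s0) → ℝ := fun x y =>
  if x.1 = 0 then A2 ((y.1 : ℤ) - (x.1 : ℤ)) (y.2.1 - x.2.1) x.2.2 y.2.2
  else A ((y.1 : ℤ) - (x.1 : ℤ)) (y.2.1 - x.2.1) x.2.2 y.2.2

/-- `s̲1*`. -/
noncomputable def sLow1 (s0 : ℕ) (A : ℤ → ℤ → Matrix (Fin s0) (Fin s0) ℝ) : ℝ :=
  sInf (Prod.fst '' GammaBar s0 A)

/-- `s̄1*`. -/
noncomputable def sUp1 (s0 : ℕ) (A : ℤ → ℤ → Matrix (Fin s0) (Fin s0) ℝ) : ℝ :=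
  sSup (Prod.fst '' GammaBar s0 A)

/-- `s̲2*`. -/
noncomputable def sLow2 (s0 : ℕ) (A : ℤ → ℤ → Matrix (Fin s0) (Fin s0) ℝ) : ℝ :=
  sInf (Prod.snd '' GammaBar s0 A)

/-- `s̄2*`. -/
noncomputable def sUp2 (s0 : ℕ) (A : ℤ → ℤ → Matrix (Fin s0) (Fin s0) ℝ) : ℝ :=
  sSup (Prod.snd '' GammaBar s0 A)

/-- `z̲1* = e^{s̲1*}`. -/
noncomputable def zLow1 (s0 : ℕ) (A : ℤ → ℤ → Matrix (Fin s0) (Fin s0) ℝ) : ℝ :=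
  Real.exp (sLow1 s0 A)

/-- `z̄1* = e^{s̄1*}`. -/
noncomputable def zUp1 (s0 : ℕ) (A : ℤ → ℤ → Matrix (Fin s0) (Fin s0) ℝ) : ℝ :=
  Real.exp (sUp1 s0 A)

/-- `z̲2* = e^{s̲2*}`. -/
noncomputable def zLow2 (s0 : ℕ) (A : ℤ → ℤ → Matrix (Fin s0) (Fin s0) ℝ) : ℝ :=
  Real.exp (sLow2 s0 A)

/-- `z̄2* = e^{s̄2*}`. -/
noncomputable def zUp2 (s0 : ℕ) (A : ℤ → ℤ → Matrix (Fin s0) (Fin s0) ℝ) : ℝ :=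
  Real.exp (sUp2 s0 A)

/-- `ζ̲2(r)`, the smallest positive solution `w` of `χ(r,w) = 1`. -/
noncomputable def zetaLow2 (s0 : ℕ) (A : ℤ → ℤ → Matrix (Fin s0) (Fin s0) ℝ) (r : ℝ) : ℝ :=
  sInf {w : ℝ | 0 < w ∧ chi s0 A r w = 1}

/-- `ζ̄2(r)`, the largest positive solution `w` of `χ(r,w) = 1`. -/
noncomputable def zetaUp2 (s0 : ℕ) (A : ℤ → ℤ → Matrix (Fin s0) (Fin s0) ℝ) (r : ℝ) : ℝ :=
  sSup {w : ℝ | 0 < w ∧ chi s0 A r w = 1}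

/-- `ζ̲1(w)`, the smallest positive solution `z` of `χ(z,w) = 1`. -/
noncomputable def zetaLow1 (s0 : ℕ) (A : ℤ → ℤ → Matrix (Fin s0) (Fin s0) ℝ) (w : ℝ) : ℝ :=
  sInf {z : ℝ | 0 < z ∧ chi s0 A z w = 1}

/-- `ζ̄1(w)`, the largest positive solution `z` of `χ(z,w) = 1`. -/
noncomputable def zetaUp1 (s0 : ℕ) (A : ℤ → ℤ → Matrix (Fin s0) (Fin s0) ℝ) (w : ℝ) : ℝ :=
  sSup {z : ℝ | 0 < z ∧ chi s0 A z w = 1}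

/-- `A_{*,i}(z) = Σ_{j∈H} A_{j,i} z^j`. -/
noncomputable def AstarR (s0 : ℕ) (A : ℤ → ℤ → Matrix (Fin s0) (Fin s0) ℝ) (z : ℝ) (i : ℤ) :
    Matrix (Fin s0) (Fin s0) ℝ := ∑ j ∈ Hs, (z ^ j) • A j i

/-- `A_{i,*}(w) = Σ_{j∈H} A_{i,j} w^j`. -/
noncomputable def ArowR (s0 : ℕ) (A : ℤ → ℤ → Matrix (Fin s0) (Fin s0) ℝ) (w : ℝ) (i : ℤ) :
    Matrix (Fin s0) (Fin s0) ℝ := ∑ j ∈ Hs, (w ^ j) • A i j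

/-- `A¹_{*,i}(z) = Σ_{j∈H} A¹_{j,i} z^j`. -/
noncomputable def A1starR (s0 : ℕ) (A1 : ℤ → ℤ → Matrix (Fin s0) (Fin s0) ℝ) (z : ℝ) (i : ℤ) :
    Matrix (Fin s0) (Fin s0) ℝ := ∑ j ∈ Hs, (z ^ j) • A1 j i

/-- `A²_{i,*}(w) = Σ_{j∈H} A²_{i,j} w^j`. -/
noncomputable def A2rowR (s0 : ℕ) (A2 : ℤ → ℤ → Matrix (Fin s0) (Fin s0) ℝ) (w : ℝ) (i : ℤ) :
    Matrix (Fin s0) (Fin s0) ℝ := ∑ j ∈ Hs, (w ^ j) • A2 i j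

/-- `X` is the minimal nonnegative solution of
`A_{*,-1}(z) + A_{*,0}(z) X + A_{*,1}(z) X² = X`. -/
def IsMinSolG1 (s0 : ℕ) (A : ℤ → ℤ → Matrix (Fin s0) (Fin s0) ℝ) (z : ℝ)
    (X : Matrix (Fin s0) (Fin s0) ℝ) : Prop :=
  (∀ i j, 0 ≤ X i j) ∧
  (AstarR s0 A z (-1) + AstarR s0 A z 0 * X + AstarR s0 A z 1 * (X * X) = X) ∧
  ∀ Y : Matrix (Fin s0) (Fin s0) ℝ, (∀ i j, 0 ≤ Y i j) →
    AstarR s0 A z (-1) + AstarR s0 A z 0 * Y + AstarR s0 A z 1 * (Y * Y) = Y →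
    ∀ i j, X i j ≤ Y i j

/-- `X` is the minimal nonnegative solution of
`A_{-1,*}(w) + A_{0,*}(w) X + A_{1,*}(w) X² = X`. -/
def IsMinSolG2 (s0 : ℕ) (A : ℤ → ℤ → Matrix (Fin s0) (Fin s0) ℝ) (w : ℝ)
    (X : Matrix (Fin s0) (Fin s0) ℝ) : Prop :=
  (∀ i j, 0 ≤ X i j) ∧
  (ArowR s0 A w (-1) + ArowR s0 A w 0 * X + ArowR s0 A w 1 * (X * X) = X) ∧
  ∀ Y : Matrix (Fin s0) (Fin s0) ℝ, (∀ i j, 0 ≤ Y i j) →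
    ArowR s0 A w (-1) + ArowR s0 A w 0 * Y + ArowR s0 A w 1 * (Y * Y) = Y →
    ∀ i j, X i j ≤ Y i j

/-- `C1(z,X) = A¹_{*,0}(z) + A¹_{*,1}(z) X`. -/
noncomputable def C1matR (s0 : ℕ) (A1 : ℤ → ℤ → Matrix (Fin s0) (Fin s0) ℝ) (z : ℝ)
    (X : Matrix (Fin s0) (Fin s0) ℝ) : Matrix (Fin s0) (Fin s0) ℝ :=
  A1starR s0 A1 z 0 + A1starR s0 A1 z 1 * X

/-- `C2(X,w) = A²_{0,*}(w) + A²_{1,*}(w) X`. -/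
noncomputable def C2matR (s0 : ℕ) (A2 : ℤ → ℤ → Matrix (Fin s0) (Fin s0) ℝ)
    (X : Matrix (Fin s0) (Fin s0) ℝ) (w : ℝ) : Matrix (Fin s0) (Fin s0) ℝ :=
  A2rowR s0 A2 w 0 + A2rowR s0 A2 w 1 * X

/-- `ψ1(z) = spr(C1(z, G1(z)))`. -/
noncomputable def psi1 (s0 : ℕ) (A1 : ℤ → ℤ → Matrix (Fin s0) (Fin s0) ℝ)
    (G1 : ℝ → Matrix (Fin s0) (Fin s0) ℝ) (z : ℝ) : ℝ :=
  sprR (C1matR s0 A1 z (G1 z))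

/-- `ψ2(w) = spr(C2(G2(w), w))`. -/
noncomputable def psi2 (s0 : ℕ) (A2 : ℤ → ℤ → Matrix (Fin s0) (Fin s0) ℝ)
    (G2 : ℝ → Matrix (Fin s0) (Fin s0) ℝ) (w : ℝ) : ℝ :=
  sprR (C2matR s0 A2 (G2 w) w)

/-- `θ1 = max{s ∈ [s̲1*, s̄1*] : ψ1(e^s) ≤ 1}`. -/
noncomputable def theta1 (s0 : ℕ) (A A1 : ℤ → ℤ → Matrix (Fin s0) (Fin s0) ℝ)
    (G1 : ℝ → Matrix (Fin s0) (Fin s0) ℝ) : ℝ :=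
  sSup {s : ℝ | sLow1 s0 A ≤ s ∧ s ≤ sUp1 s0 A ∧ psi1 s0 A1 G1 (Real.exp s) ≤ 1}

/-- `η2 = max{s ∈ [s̲2*, s̄2*] : ψ2(e^s) ≤ 1}`. -/
noncomputable def eta2 (s0 : ℕ) (A A2 : ℤ → ℤ → Matrix (Fin s0) (Fin s0) ℝ)
    (G2 : ℝ → Matrix (Fin s0) (Fin s0) ℝ) : ℝ :=
  sSup {s : ℝ | sLow2 s0 A ≤ s ∧ s ≤ sUp2 s0 A ∧ psi2 s0 A2 G2 (Real.exp s) ≤ 1}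

/-- `θ2 = log ζ̲2(e^{θ1})`. -/
noncomputable def theta2 (s0 : ℕ) (A A1 : ℤ → ℤ → Matrix (Fin s0) (Fin s0) ℝ)
    (G1 : ℝ → Matrix (Fin s0) (Fin s0) ℝ) : ℝ :=
  Real.log (zetaLow2 s0 A (Real.exp (theta1 s0 A A1 G1)))

/-- `θ̄2 = log ζ̄2(e^{θ1})`. -/
noncomputable def theta2bar (s0 : ℕ) (A A1 : ℤ → ℤ → Matrix (Fin s0) (Fin s0) ℝ)
    (G1 : ℝ → Matrix (Fin s0) (Fin s0) ℝ) : ℝ :=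
  Real.log (zetaUp2 s0 A (Real.exp (theta1 s0 A A1 G1)))

/-- `η1 = log ζ̲1(e^{η2})`. -/
noncomputable def eta1 (s0 : ℕ) (A A2 : ℤ → ℤ → Matrix (Fin s0) (Fin s0) ℝ)
    (G2 : ℝ → Matrix (Fin s0) (Fin s0) ℝ) : ℝ :=
  Real.log (zetaLow1 s0 A (Real.exp (eta2 s0 A A2 G2)))

/-- `η̄1 = log ζ̄1(e^{η2})`. -/
noncomputable def eta1bar (s0 : ℕ) (A A2 : ℤ → ℤ → Matrix (Fin s0) (Fin s0) ℝ)
    (G2 : ℝ → Matrix (Fin s0) (Fin s0) ℝ) : ℝ :=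
  Real.log (zetaUp1 s0 A (Real.exp (eta2 s0 A A2 G2)))

/-- Product of two (possibly infinite) nonnegative kernels. -/
noncomputable def imul {T : Type*} (M N : T → T → ℝ) : T → T → ℝ :=
  fun x y => ∑' u, M x u * N u y

open Classical in
/-- `n`-th power of an infinite matrix. -/
noncomputable def ipow {T : Type*} (M : T → T → ℝ) : ℕ → T → T → ℝ
  | 0, x, y => if x = y then 1 else 0
  | n + 1, x, y => imul (ipow M n) M x y

/-- Irreducibility of an infinite nonnegative matrix. -/
def InfIrreducible {T : Type*} (M : T → T → ℝ) : Prop :=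
  ∀ x y, ∃ n : ℕ, 1 ≤ n ∧ 0 < ipow M n x y

/-- The block-tridiagonal matrix `A¹ₖ` on `ℤ₊ × S0`. -/
def blkA1 (s0 : ℕ) (A A1 : ℤ → ℤ → Matrix (Fin s0) (Fin s0) ℝ) (k : ℤ) :
    (ℕ × Fin s0) → (ℕ × Fin s0) → ℝ := fun x y =>
  if x.1 = 0 then A1 k (y.1 : ℤ) x.2 y.2
  else A k ((y.1 : ℤ) - (x.1 : ℤ)) x.2 y.2

/-- The block-tridiagonal matrix `A²ₖ` on `ℤ₊ × S0`. -/
def blkA2 (s0 : ℕ) (A A2 : ℤ → ℤ → Matrix (Fin s0) (Fin s0) ℝ) (k : ℤ) :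
    (ℕ × Fin s0) → (ℕ × Fin s0) → ℝ := fun x y =>
  if x.1 = 0 then A2 (y.1 : ℤ) k x.2 y.2
  else A ((y.1 : ℤ) - (x.1 : ℤ)) k x.2 y.2

/-- `R` is the minimal nonnegative solution of `R = R² B_{-1} + R B_0 + B_1`
for an infinite block kernel `B`. -/
def IsMinSolRinf (s0 : ℕ) (B : ℤ → (ℕ × Fin s0) → (ℕ × Fin s0) → ℝ)
    (R : (ℕ × Fin s0) → (ℕ × Fin s0) → ℝ) : Prop :=
  (∀ x y, 0 ≤ R x y) ∧
  (∀ x y, imul (imul R R) (B (-1)) x y + imul R (B 0) x y + B 1 x y = R x y) ∧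
  ∀ R' : (ℕ × Fin s0) → (ℕ × Fin s0) → ℝ, (∀ x y, 0 ≤ R' x y) →
    (∀ x y, imul (imul R' R') (B (-1)) x y + imul R' (B 0) x y + B 1 x y = R' x y) →
    ∀ x y, R x y ≤ R' x y

open Classical in
/-- All eigenvalues of the real matrix `M` (as a complex matrix) are distinct. -/
def EigsDistinct {n : ℕ} (M : Matrix (Fin n) (Fin n) ℝ) : Prop :=
  ((Matrix.charpoly (M.map Complex.ofReal)).roots).toFinset.card = n

end QBD


namespace Aux19

open QBD Matrix

variable {s0 : ℕ}

/-- Entrywise nonnegative matrix. -/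
def Ent (M : Matrix (Fin s0) (Fin s0) ℝ) : Prop := ∀ i j, 0 ≤ M i j

lemma Ent.add {M N : Matrix (Fin s0) (Fin s0) ℝ} (hM : Ent M) (hN : Ent N) : Ent (M + N) :=
  fun i j => by simpa using add_nonneg (hM i j) (hN i j)

lemma Ent.mul {M N : Matrix (Fin s0) (Fin s0) ℝ} (hM : Ent M) (hN : Ent N) : Ent (M * N) := by
  intro i j
  rw [Matrix.mul_apply]
  exact Finset.sum_nonneg fun c _ => mul_nonneg (hM i c) (hN c j)

lemma Ent.one : Ent (1 : Matrix (Fin s0) (Fin s0) ℝ) := by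
  intro i j
  by_cases h : i = j <;> simp [Matrix.one_apply, h]

lemma Ent.pow {M : Matrix (Fin s0) (Fin s0) ℝ} (hM : Ent M) (n : ℕ) : Ent (M ^ n) := by
  induction n with
  | zero => simpa using Ent.one
  | succ n ih => rw [pow_succ]; exact ih.mul hM

lemma mul_entry_le {X Y : Matrix (Fin s0) (Fin s0) ℝ} (hX : Ent X) (hY : Ent Y)
    (a b : Fin s0) (c : Fin s0) : X a c * Y c b ≤ (X * Y) a b := by
  rw [Matrix.mul_apply]
  exact Finset.single_le_sum (fun d _ => mul_nonneg (hX a d) (hY d b)) (Finset.mem_univ c)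

lemma mul_entry_pos {X Y : Matrix (Fin s0) (Fin s0) ℝ} (hX : Ent X) (hY : Ent Y)
    {a b c : Fin s0} (h1 : 0 < X a c) (h2 : 0 < Y c b) : 0 < (X * Y) a b :=
  lt_of_lt_of_le (mul_pos h1 h2) (mul_entry_le hX hY a b c)

lemma mem_Hs {i : ℤ} : i ∈ Hs ↔ i = -1 ∨ i = 0 ∨ i = 1 := by simp [Hs]

lemma mem_Hps {i : ℤ} : i ∈ Hps ↔ i = 0 ∨ i = 1 := by simp [Hps]

section Astar

variable {A : ℤ → ℤ → Matrix (Fin s0) (Fin s0) ℝ} {z0 : ℝ}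

lemma Ent_AstarR (hAnn : ∀ i j : ℤ, ∀ k l, 0 ≤ A i j k l) (hz0 : 0 < z0) (i : ℤ) :
    Ent (AstarR s0 A z0 i) := by
  intro k l
  rw [AstarR, Matrix.sum_apply]
  refine Finset.sum_nonneg fun j _ => ?_
  rw [Matrix.smul_apply, smul_eq_mul]
  exact mul_nonneg (zpow_pos hz0 j).le (hAnn j i k l)

lemma AstarR_entry_pos (hAnn : ∀ i j : ℤ, ∀ k l, 0 ≤ A i j k l) (hz0 : 0 < z0)
    {j i : ℤ} {k l : Fin s0} (hj : j ∈ Hs) (h : 0 < A j i k l) :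
    0 < AstarR s0 A z0 i k l := by
  simp only [AstarR, Matrix.sum_apply, Matrix.smul_apply, smul_eq_mul]
  refine lt_of_lt_of_le (mul_pos (zpow_pos hz0 j) h) ?_
  exact Finset.single_le_sum
    (f := fun j0 => z0 ^ j0 * A j0 i k l)
    (fun j0 _ => mul_nonneg (zpow_pos hz0 j0).le (hAnn j0 i k l)) hj

end Astar

section Paths

variable {S : Type*}

lemma stepN_nonneg {P : S → S → ℝ} (hP : ∀ a b, 0 ≤ P a b) :
    ∀ n x y, 0 ≤ stepN P n x y := by
  intro n
  induction n with
  | zero => intro x y; rw [stepN]; split <;> norm_num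
  | succ n ih =>
      intro x y
      rw [stepN]
      exact tsum_nonneg fun u => mul_nonneg (ih x u) (hP u y)

lemma tsum_pos_elim {ι : Type*} {f : ι → ℝ} (hnn : ∀ i, 0 ≤ f i) (h : 0 < ∑' i, f i) :
    ∃ i, 0 < f i := by
  by_contra hc
  push_neg at hc
  have : f = fun _ => 0 := funext fun i => le_antisymm (hc i) (hnn i)
  rw [this] at h
  simp at h

lemma stepN_pos_path {P : S → S → ℝ} (hP : ∀ a b, 0 ≤ P a b) :
    ∀ n x y, 0 < stepN P n x y →
      ∃ p : ℕ → S, p 0 = x ∧ p n = y ∧ ∀ t, t < n → 0 < P (p t) (p (t + 1)) := by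
  intro n
  induction n with
  | zero =>
      intro x y h
      rw [stepN] at h
      split at h
      · exact ⟨fun _ => x, rfl, by simp [*], fun t ht => absurd ht (by omega)⟩
      · exact absurd h (by norm_num)
  | succ n ih =>
      intro x y h
      rw [stepN] at h
      obtain ⟨u, hu⟩ := tsum_pos_elim
        (fun u => mul_nonneg (stepN_nonneg hP n x u) (hP u y)) h
      have h1 : 0 < stepN P n x u := by
        rcases lt_or_eq_of_le (stepN_nonneg hP n x u) with h' | h'
        · exact h'
        · rw [← h'] at hu; simp at hu
      have h2 : 0 < P u y := by
        rcases lt_or_eq_of_le (hP u y) with h' | h'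
        · exact h'
        · rw [← h'] at hu; simp at hu
      obtain ⟨p, hp0, hpn, hps⟩ := ih x u h1
      refine ⟨fun t => if t ≤ n then p t else y, by simpa using hp0, by simp, ?_⟩
      intro t ht
      by_cases h' : t < n
      · simp only [if_pos (show t ≤ n by omega), if_pos (show t + 1 ≤ n by omega)]
        exact hps t h'
      · have ht' : t = n := by omega
        subst ht'
        simp only [if_pos le_rfl, if_neg (by omega : ¬ t + 1 ≤ t)]
        rw [hpn]
        exact h2

lemma stepN_equiv {T : Type*} (e : S ≃ T) (P : T → T → ℝ) :
    ∀ n x y, stepN (fun a b => P (e a) (e b)) n x y = stepN P n (e x) (e y) := by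
  intro n
  induction n with
  | zero =>
      intro x y
      rw [stepN, stepN]
      by_cases h : x = y
      · subst h; simp
      · rw [if_neg h, if_neg fun hc => h (e.injective hc)]
  | succ n ih =>
      intro x y
      rw [stepN, stepN]
      rw [← e.tsum_eq (fun u => stepN P n (e x) u * P u (e y))]
      exact tsum_congr fun u => by rw [ih]

lemma ChainIrreducible.comp_equiv {T : Type*} (e : S ≃ T) {P : T → T → ℝ}
    (h : ChainIrreducible P) : ChainIrreducible (fun a b => P (e a) (e b)) := by
  intro x y
  obtain ⟨n, hn, hpos⟩ := h (e x) (e y)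
  exact ⟨n, hn, by rw [stepN_equiv]; exact hpos⟩

end Paths

end Aux19

set_option linter.unusedSectionVars false

namespace Aux19

open QBD Matrix

section Core

variable {s0 : ℕ} {A : ℤ → ℤ → Matrix (Fin s0) (Fin s0) ℝ} {z0 : ℝ}
  {G : Matrix (Fin s0) (Fin s0) ℝ}

/-- `B = A_{*,0}(z0) + A_{*,1}(z0) G`. -/
noncomputable def Bmat (A : ℤ → ℤ → Matrix (Fin s0) (Fin s0) ℝ) (z0 : ℝ)
    (G : Matrix (Fin s0) (Fin s0) ℝ) : Matrix (Fin s0) (Fin s0) ℝ :=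
  AstarR s0 A z0 0 + AstarR s0 A z0 1 * G

lemma entG (hG : IsMinSolG1 s0 A z0 G) : Ent G := hG.1

lemma Ent_B (hAnn : ∀ i j : ℤ, ∀ k l, 0 ≤ A i j k l) (hz0 : 0 < z0) (hGnn : Ent G) :
    Ent (Bmat A z0 G) :=
  (Ent_AstarR hAnn hz0 0).add ((Ent_AstarR hAnn hz0 1).mul hGnn)

lemma B_ge_P0 (hAnn : ∀ i j : ℤ, ∀ k l, 0 ≤ A i j k l) (hz0 : 0 < z0) (hGnn : Ent G)
    (k l : Fin s0) : AstarR s0 A z0 0 k l ≤ Bmat A z0 G k l := by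
  have h := ((Ent_AstarR hAnn hz0 1).mul hGnn) k l
  rw [Bmat, Matrix.add_apply]; linarith

lemma B_ge_P1G (hAnn : ∀ i j : ℤ, ∀ k l, 0 ≤ A i j k l) (hz0 : 0 < z0)
    (k l : Fin s0) : (AstarR s0 A z0 1 * G) k l ≤ Bmat A z0 G k l := by
  have h := Ent_AstarR hAnn hz0 (A := A) (z0 := z0) 0 k l
  rw [Bmat, Matrix.add_apply]; linarith

lemma G_ge_Pm (hAnn : ∀ i j : ℤ, ∀ k l, 0 ≤ A i j k l) (hz0 : 0 < z0)
    (hG : IsMinSolG1 s0 A z0 G) (k l : Fin s0) : AstarR s0 A z0 (-1) k l ≤ G k l := by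
  have h1 := ((Ent_AstarR hAnn hz0 0).mul (entG hG)) k l
  have h2 := ((Ent_AstarR hAnn hz0 1).mul ((entG hG).mul (entG hG))) k l
  have h3 := congrFun (congrFun hG.2.1 k) l
  simp only [Matrix.add_apply] at h3
  linarith

lemma G_ge_P0G (hAnn : ∀ i j : ℤ, ∀ k l, 0 ≤ A i j k l) (hz0 : 0 < z0)
    (hG : IsMinSolG1 s0 A z0 G) (k l : Fin s0) : (AstarR s0 A z0 0 * G) k l ≤ G k l := by
  have h1 := (Ent_AstarR hAnn hz0 (A := A) (z0 := z0) (-1)) k l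
  have h2 := ((Ent_AstarR hAnn hz0 1).mul ((entG hG).mul (entG hG))) k l
  have h3 := congrFun (congrFun hG.2.1 k) l
  simp only [Matrix.add_apply] at h3
  linarith

lemma G_ge_P1GG (hAnn : ∀ i j : ℤ, ∀ k l, 0 ≤ A i j k l) (hz0 : 0 < z0)
    (hG : IsMinSolG1 s0 A z0 G) (k l : Fin s0) :
    (AstarR s0 A z0 1 * (G * G)) k l ≤ G k l := by
  have h1 := (Ent_AstarR hAnn hz0 (A := A) (z0 := z0) (-1)) k l
  have h2 := ((Ent_AstarR hAnn hz0 0).mul (entG hG)) k l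
  have h3 := congrFun (congrFun hG.2.1 k) l
  simp only [Matrix.add_apply] at h3
  linarith

lemma G_eq_Pm_add_BG (hG : IsMinSolG1 s0 A z0 G) :
    AstarR s0 A z0 (-1) + Bmat A z0 G * G = G := by
  calc AstarR s0 A z0 (-1) + Bmat A z0 G * G
      = AstarR s0 A z0 (-1) + (AstarR s0 A z0 0 * G + AstarR s0 A z0 1 * (G * G)) := by
        rw [Bmat, add_mul, mul_assoc]
    _ = G := by rw [← add_assoc]; exact hG.2.1

lemma key_identity (hG : IsMinSolG1 s0 A z0 G) : ∀ m : ℕ,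
    (∑ n ∈ Finset.range m, Bmat A z0 G ^ n * AstarR s0 A z0 (-1)) + Bmat A z0 G ^ m * G = G := by
  have hBG : Bmat A z0 G * G = G - AstarR s0 A z0 (-1) :=
    eq_sub_of_add_eq' (G_eq_Pm_add_BG hG)
  intro m
  induction m with
  | zero => rw [Finset.range_zero, Finset.sum_empty, pow_zero, one_mul, zero_add]
  | succ m ih =>
      rw [Finset.sum_range_succ]
      have hpow : Bmat A z0 G ^ (m + 1) * G
          = Bmat A z0 G ^ m * (G - AstarR s0 A z0 (-1)) := by
        rw [pow_succ, mul_assoc, hBG]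
      rw [hpow, mul_sub]
      rw [add_assoc, add_comm (Bmat A z0 G ^ m * AstarR s0 A z0 (-1)) _,
        sub_add_cancel]
      exact ih

lemma partial_sum_le (hAnn : ∀ i j : ℤ, ∀ k l, 0 ≤ A i j k l) (hz0 : 0 < z0)
    (hG : IsMinSolG1 s0 A z0 G) (m : ℕ) (k j : Fin s0) :
    ∑ n ∈ Finset.range m, (Bmat A z0 G ^ n * AstarR s0 A z0 (-1)) k j ≤ G k j := by
  have hk := key_identity hG m
  have h2 : 0 ≤ (Bmat A z0 G ^ m * G) k j :=
    (((Ent_B hAnn hz0 (entG hG)).pow m).mul (entG hG)) k j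
  have h3 := congrFun (congrFun hk k) j
  simp only [Matrix.add_apply, Matrix.sum_apply] at h3
  linarith

end Core

end Aux19

namespace Aux19

open QBD Matrix

section NmatSec

variable {s0 : ℕ} {A : ℤ → ℤ → Matrix (Fin s0) (Fin s0) ℝ} {z0 : ℝ}
  {G : Matrix (Fin s0) (Fin s0) ℝ}

/-- The Neumann series `N = ∑ B^n` (entrywise `tsum`). -/
noncomputable def Nmat (A : ℤ → ℤ → Matrix (Fin s0) (Fin s0) ℝ) (z0 : ℝ)
    (G : Matrix (Fin s0) (Fin s0) ℝ) : Matrix (Fin s0) (Fin s0) ℝ :=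
  Matrix.of fun k l => ∑' n : ℕ, (Bmat A z0 G ^ n) k l

lemma Nmat_apply (k l : Fin s0) : Nmat A z0 G k l = ∑' n : ℕ, (Bmat A z0 G ^ n) k l := rfl

variable (hAnn : ∀ i j : ℤ, ∀ k l, 0 ≤ A i j k l) (hz0 : 0 < z0)
  (hG : IsMinSolG1 s0 A z0 G)
  (hI1 : ∀ l : Fin s0, ∃ r : ℕ, ∃ j : Fin s0,
    0 < (Bmat A z0 G ^ r * AstarR s0 A z0 (-1)) l j)

include hAnn hz0 hG hI1

lemma summable_pow (k l : Fin s0) : Summable fun n : ℕ => (Bmat A z0 G ^ n) k l := by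
  obtain ⟨r, j, hrj⟩ := hI1 l
  set B := Bmat A z0 G with hB
  have hEntB : Ent B := Ent_B hAnn hz0 (entG hG)
  have hEntP : Ent (AstarR s0 A z0 (-1)) := Ent_AstarR hAnn hz0 (-1)
  have hfnn : ∀ n : ℕ, 0 ≤ (B ^ n * AstarR s0 A z0 (-1)) k j :=
    fun n => ((hEntB.pow n).mul hEntP) k j
  refine summable_of_sum_range_le (c := G k j / (B ^ r * AstarR s0 A z0 (-1)) l j)
    (fun n => (hEntB.pow n) k l) ?_
  intro m
  rw [le_div_iff₀ hrj, Finset.sum_mul]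
  have step1 : ∀ n : ℕ, (B ^ n) k l * (B ^ r * AstarR s0 A z0 (-1)) l j
      ≤ (B ^ (n + r) * AstarR s0 A z0 (-1)) k j := by
    intro n
    have h := mul_entry_le (hEntB.pow n) ((hEntB.pow r).mul hEntP) k j l
    calc (B ^ n) k l * (B ^ r * AstarR s0 A z0 (-1)) l j
        ≤ (B ^ n * (B ^ r * AstarR s0 A z0 (-1))) k j := h
      _ = (B ^ (n + r) * AstarR s0 A z0 (-1)) k j := by rw [← mul_assoc, ← pow_add]
  calc ∑ n ∈ Finset.range m, (B ^ n) k l * (B ^ r * AstarR s0 A z0 (-1)) l j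
      ≤ ∑ n ∈ Finset.range m, (B ^ (n + r) * AstarR s0 A z0 (-1)) k j :=
        Finset.sum_le_sum fun n _ => step1 n
    _ ≤ ∑ n ∈ Finset.range (m + r), (B ^ n * AstarR s0 A z0 (-1)) k j := by
        have himg : ∑ n ∈ Finset.range m, (B ^ (n + r) * AstarR s0 A z0 (-1)) k j
            = ∑ i ∈ (Finset.range m).image (· + r), (B ^ i * AstarR s0 A z0 (-1)) k j := by
          rw [Finset.sum_image]
          intro a _ b _ hab
          have hab' : a + r = b + r := hab
          omega
        rw [himg]
        refine Finset.sum_le_sum_of_subset_of_nonneg ?_ fun i _ _ => hfnn i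
        intro i hi
        simp only [Finset.mem_image, Finset.mem_range] at hi ⊢
        obtain ⟨a, ha, rfl⟩ := hi
        omega
    _ ≤ G k j := partial_sum_le hAnn hz0 hG (m + r) k j

lemma Ent_N : Ent (Nmat A z0 G) := by
  intro k l
  rw [Nmat_apply]
  exact tsum_nonneg fun n => ((Ent_B hAnn hz0 (entG hG)).pow n) k l

lemma N_ge_pow (r : ℕ) (k l : Fin s0) : (Bmat A z0 G ^ r) k l ≤ Nmat A z0 G k l := by
  rw [Nmat_apply]
  exact Summable.le_tsum (summable_pow hAnn hz0 hG hI1 k l) r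
    fun n _ => ((Ent_B hAnn hz0 (entG hG)).pow n) k l

lemma BN_apply (k l : Fin s0) :
    (Bmat A z0 G * Nmat A z0 G) k l
      = Nmat A z0 G k l - (1 : Matrix (Fin s0) (Fin s0) ℝ) k l := by
  set B := Bmat A z0 G with hB
  have hsum : ∀ c, Summable fun n : ℕ => B k c * (B ^ n) c l :=
    fun c => (summable_pow hAnn hz0 hG hI1 c l).mul_left _
  have h1 : (B * Nmat A z0 G) k l = ∑ c, ∑' n : ℕ, B k c * (B ^ n) c l := by
    rw [Matrix.mul_apply]
    exact Finset.sum_congr rfl fun c _ => by rw [Nmat_apply, ← tsum_mul_left]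
  have h2 : ∑ c, ∑' n : ℕ, B k c * (B ^ n) c l = ∑' n : ℕ, ∑ c, B k c * (B ^ n) c l :=
    (Summable.tsum_finsetSum fun c _ => hsum c).symm
  have h3 : ∀ n : ℕ, ∑ c, B k c * (B ^ n) c l = (B ^ (n + 1)) k l := by
    intro n
    rw [pow_succ', Matrix.mul_apply]
  have h4 : ∑' n : ℕ, ∑ c, B k c * (B ^ n) c l = ∑' n : ℕ, (B ^ (n + 1)) k l :=
    tsum_congr fun n => h3 n
  have h5 := Summable.tsum_eq_zero_add (summable_pow hAnn hz0 hG hI1 k l)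
  rw [h1, h2, h4, Nmat_apply]
  have : (B ^ 0) k l = (1 : Matrix (Fin s0) (Fin s0) ℝ) k l := by rw [pow_zero]
  rw [h5, ← this]
  ring

lemma NB_apply (k l : Fin s0) :
    (Nmat A z0 G * Bmat A z0 G) k l
      = Nmat A z0 G k l - (1 : Matrix (Fin s0) (Fin s0) ℝ) k l := by
  set B := Bmat A z0 G with hB
  have hsum : ∀ c, Summable fun n : ℕ => (B ^ n) k c * B c l :=
    fun c => (summable_pow hAnn hz0 hG hI1 k c).mul_right _
  have h1 : (Nmat A z0 G * B) k l = ∑ c, ∑' n : ℕ, (B ^ n) k c * B c l := by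
    rw [Matrix.mul_apply]
    exact Finset.sum_congr rfl fun c _ => by rw [Nmat_apply, ← tsum_mul_right]
  have h2 : ∑ c, ∑' n : ℕ, (B ^ n) k c * B c l = ∑' n : ℕ, ∑ c, (B ^ n) k c * B c l :=
    (Summable.tsum_finsetSum fun c _ => hsum c).symm
  have h3 : ∀ n : ℕ, ∑ c, (B ^ n) k c * B c l = (B ^ (n + 1)) k l := by
    intro n
    rw [pow_succ, Matrix.mul_apply]
  have h4 : ∑' n : ℕ, ∑ c, (B ^ n) k c * B c l = ∑' n : ℕ, (B ^ (n + 1)) k l :=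
    tsum_congr fun n => h3 n
  have h5 := Summable.tsum_eq_zero_add (summable_pow hAnn hz0 hG hI1 k l)
  rw [h1, h2, h4, Nmat_apply]
  have : (B ^ 0) k l = (1 : Matrix (Fin s0) (Fin s0) ℝ) k l := by rw [pow_zero]
  rw [h5, ← this]
  ring

lemma N_left_inv : (1 - Bmat A z0 G) * Nmat A z0 G = 1 := by
  ext k l
  rw [sub_mul, one_mul, Matrix.sub_apply, BN_apply hAnn hz0 hG hI1]
  ring

lemma N_right_inv : Nmat A z0 G * (1 - Bmat A z0 G) = 1 := by
  ext k l
  rw [mul_sub, mul_one, Matrix.sub_apply, NB_apply hAnn hz0 hG hI1]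
  ring

end NmatSec

end Aux19

namespace Aux19

open QBD Matrix

section PathsCore

variable {s0 : ℕ} {A : ℤ → ℤ → Matrix (Fin s0) (Fin s0) ℝ} {z0 : ℝ}
  {G : Matrix (Fin s0) (Fin s0) ℝ}

/-- One positive interior step of a path. -/
def IStep (A : ℤ → ℤ → Matrix (Fin s0) (Fin s0) ℝ) (p : ℕ → ℤ × ℤ × Fin s0) (t : ℕ) : Prop :=
  0 < A ((p (t + 1)).1 - (p t).1) ((p (t + 1)).2.1 - (p t).2.1) (p t).2.2 (p (t + 1)).2.2

lemma istep_pos {p : ℕ → ℤ × ℤ × Fin s0} {t : ℕ} (h : IStep A p t) :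
    0 < A ((p (t + 1)).1 - (p t).1) ((p (t + 1)).2.1 - (p t).2.1) (p t).2.2 (p (t + 1)).2.2 := h

lemma pos_entry_mem (hAsupp : ∀ i j : ℤ, ¬(i ∈ Hs ∧ j ∈ Hs) → A i j = 0)
    {i j : ℤ} {k l : Fin s0} (h : 0 < A i j k l) : i ∈ Hs ∧ j ∈ Hs := by
  by_contra hc
  rw [hAsupp i j hc] at h
  simp at h

lemma pos_entry_mem1 {A1 : ℤ → ℤ → Matrix (Fin s0) (Fin s0) ℝ}
    (hA1supp : ∀ i j : ℤ, ¬(i ∈ Hs ∧ j ∈ Hps) → A1 i j = 0)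
    {i j : ℤ} {k l : Fin s0} (h : 0 < A1 i j k l) : i ∈ Hs ∧ j ∈ Hps := by
  by_contra hc
  rw [hA1supp i j hc] at h
  simp at h

lemma descend (hAsupp : ∀ i j : ℤ, ¬(i ∈ Hs ∧ j ∈ Hs) → A i j = 0)
    (hAnn : ∀ i j : ℤ, ∀ k l, 0 ≤ A i j k l) (hz0 : 0 < z0)
    (hG : IsMinSolG1 s0 A z0 G) :
    ∀ fuel : ℕ, ∀ (p : ℕ → ℤ × ℤ × Fin s0) (a b : ℕ) (H : ℤ),
      b - a ≤ fuel → a < b →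
      (∀ t, a ≤ t → t < b → IStep A p t) →
      (∀ t, a ≤ t → t < b → H ≤ (p t).2.1) →
      (p a).2.1 = H → (p b).2.1 = H - 1 →
      0 < G (p a).2.2 (p b).2.2 := by
  intro fuel
  induction fuel with
  | zero => intro p a b H hf hab _ _ _ _; omega
  | succ fuel ih =>
    intro p a b H hf hab hstep hge ha hb
    classical
    have hs := hstep a le_rfl hab
    obtain ⟨hx1, hh1⟩ := pos_entry_mem hAsupp hs
    rw [mem_Hs] at hh1
    rcases hh1 with h | h | h
    · -- down step
      have hb' : b = a + 1 := by
        by_contra hne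
        have h1 := hge (a + 1) (by omega) (by omega)
        omega
      subst hb'
      have hApos : 0 < A ((p (a + 1)).1 - (p a).1) (-1) (p a).2.2 (p (a + 1)).2.2 := by
          have hs2 := istep_pos hs; rwa [h] at hs2
      exact lt_of_lt_of_le (AstarR_entry_pos hAnn hz0 hx1 hApos)
        (G_ge_Pm hAnn hz0 hG _ _)
    · -- level step
      have h1 : a + 1 < b := by
        rcases Nat.lt_or_ge (a + 1) b with h' | h'
        · exact h'
        · exfalso
          have he : a + 1 = b := by omega
          rw [he] at h
          omega
      have hGrec : 0 < G (p (a + 1)).2.2 (p b).2.2 :=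
        ih p (a + 1) b H (by omega) h1
          (fun t ht1 ht2 => hstep t (by omega) ht2)
          (fun t ht1 ht2 => hge t (by omega) ht2)
          (by omega) hb
      have hApos : 0 < A ((p (a + 1)).1 - (p a).1) 0 (p a).2.2 (p (a + 1)).2.2 := by
          have hs2 := istep_pos hs; rwa [h] at hs2
      have hP0 := AstarR_entry_pos hAnn hz0 hx1 hApos
      exact lt_of_lt_of_le
        (mul_entry_pos (Ent_AstarR hAnn hz0 0) (entG hG) hP0 hGrec)
        (G_ge_P0G hAnn hz0 hG _ _)
    · -- up step
      have hPex : ∃ t, a < t ∧ t ≤ b ∧ (p t).2.1 ≤ H := ⟨b, hab, le_rfl, by omega⟩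
      set τ := Nat.find hPex with hτdef
      obtain ⟨hτ1, hτ2, hτ3⟩ := Nat.find_spec hPex
      rw [← hτdef] at hτ1 hτ2 hτ3
      have hmin : ∀ t, a < t → t < τ → H + 1 ≤ (p t).2.1 := by
        intro t ht1 ht2
        have h' := Nat.find_min hPex ht2
        by_contra hc
        exact h' ⟨ht1, by omega, by omega⟩
      have hτa2 : a + 2 ≤ τ := by
        by_contra hc
        have hτe : τ = a + 1 := by omega
        rw [hτe] at hτ3
        omega
      have hτeq : (p τ).2.1 = H := by
        have hst := hstep (τ - 1) (by omega) (by omega)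
        obtain ⟨_, hh2⟩ := pos_entry_mem hAsupp hst
        rw [mem_Hs] at hh2
        have hmid := hmin (τ - 1) (by omega) (by omega)
        have heq : τ - 1 + 1 = τ := by omega
        rw [heq] at hh2
        omega
      have hGseg1 : 0 < G (p (a + 1)).2.2 (p τ).2.2 :=
        ih p (a + 1) τ (H + 1) (by omega) (by omega)
          (fun t ht1 ht2 => hstep t (by omega) (by omega))
          (fun t ht1 ht2 => hmin t (by omega) ht2)
          (by omega) (by omega)
      have hτb : τ < b := by
        rcases Nat.lt_or_ge τ b with h' | h'
        · exact h'
        · exfalso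
          have : τ = b := by omega
          rw [this] at hτeq
          omega
      have hGseg2 : 0 < G (p τ).2.2 (p b).2.2 :=
        ih p τ b H (by omega) hτb
          (fun t ht1 ht2 => hstep t (by omega) ht2)
          (fun t ht1 ht2 => hge t (by omega) ht2)
          hτeq hb
      have hApos : 0 < A ((p (a + 1)).1 - (p a).1) 1 (p a).2.2 (p (a + 1)).2.2 := by
          have hs2 := istep_pos hs; rwa [h] at hs2
      have hP1 := AstarR_entry_pos hAnn hz0 hx1 hApos
      have hGG : 0 < (G * G) (p (a + 1)).2.2 (p b).2.2 :=
        mul_entry_pos (entG hG) (entG hG) hGseg1 hGseg2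
      exact lt_of_lt_of_le
        (mul_entry_pos (Ent_AstarR hAnn hz0 1) ((entG hG).mul (entG hG)) hP1 hGG)
        (G_ge_P1GG hAnn hz0 hG _ _)

lemma levelReturn (hAsupp : ∀ i j : ℤ, ¬(i ∈ Hs ∧ j ∈ Hs) → A i j = 0)
    (hAnn : ∀ i j : ℤ, ∀ k l, 0 ≤ A i j k l) (hz0 : 0 < z0)
    (hG : IsMinSolG1 s0 A z0 G) :
    ∀ fuel : ℕ, ∀ (p : ℕ → ℤ × ℤ × Fin s0) (a b : ℕ) (H : ℤ),
      b - a ≤ fuel → a ≤ b →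
      (∀ t, a ≤ t → t < b → IStep A p t) →
      (∀ t, a ≤ t → t ≤ b → H ≤ (p t).2.1) →
      (p a).2.1 = H → (p b).2.1 = H →
      ∃ r : ℕ, 0 < (Bmat A z0 G ^ r) (p a).2.2 (p b).2.2 := by
  intro fuel
  induction fuel with
  | zero =>
    intro p a b H hf hab _ _ _ _
    have hba : a = b := by omega
    subst hba
    exact ⟨0, by rw [pow_zero]; simp [Matrix.one_apply]⟩
  | succ fuel ih =>
    intro p a b H hf hab hstep hge ha hb
    classical
    rcases Nat.eq_or_lt_of_le hab with hba | hab'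
    · subst hba
      exact ⟨0, by rw [pow_zero]; simp [Matrix.one_apply]⟩
    · have hs := hstep a le_rfl hab'
      obtain ⟨hx1, hh1⟩ := pos_entry_mem hAsupp hs
      rw [mem_Hs] at hh1
      rcases hh1 with h | h | h
      · -- down step impossible
        exfalso
        have := hge (a + 1) (by omega) (by omega)
        omega
      · -- level step
        obtain ⟨r, hr⟩ := ih p (a + 1) b H (by omega) (by omega)
          (fun t ht1 ht2 => hstep t (by omega) ht2)
          (fun t ht1 ht2 => hge t (by omega) ht2)
          (by omega) hb
        have hApos : 0 < A ((p (a + 1)).1 - (p a).1) 0 (p a).2.2 (p (a + 1)).2.2 := by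
          have hs2 := istep_pos hs; rwa [h] at hs2
        have hP0 := AstarR_entry_pos hAnn hz0 hx1 hApos
        have hBpos : 0 < Bmat A z0 G (p a).2.2 (p (a + 1)).2.2 :=
          lt_of_lt_of_le hP0 (B_ge_P0 hAnn hz0 (entG hG) _ _)
        refine ⟨r + 1, ?_⟩
        rw [pow_succ']
        exact mul_entry_pos (Ent_B hAnn hz0 (entG hG))
          ((Ent_B hAnn hz0 (entG hG)).pow r) hBpos hr
      · -- up step
        have hPex : ∃ t, a < t ∧ t ≤ b ∧ (p t).2.1 ≤ H := ⟨b, hab', le_rfl, by omega⟩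
        set τ := Nat.find hPex with hτdef
        obtain ⟨hτ1, hτ2, hτ3⟩ := Nat.find_spec hPex
        rw [← hτdef] at hτ1 hτ2 hτ3
        have hmin : ∀ t, a < t → t < τ → H + 1 ≤ (p t).2.1 := by
          intro t ht1 ht2
          have h' := Nat.find_min hPex ht2
          by_contra hc
          exact h' ⟨ht1, by omega, by omega⟩
        have hτa2 : a + 2 ≤ τ := by
          by_contra hc
          have hτe : τ = a + 1 := by omega
          rw [hτe] at hτ3
          omega
        have hτeq : (p τ).2.1 = H := by
          have hst := hstep (τ - 1) (by omega) (by omega)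
          obtain ⟨_, hh2⟩ := pos_entry_mem hAsupp hst
          rw [mem_Hs] at hh2
          have hmid := hmin (τ - 1) (by omega) (by omega)
          have heq : τ - 1 + 1 = τ := by omega
          rw [heq] at hh2
          omega
        have hGseg1 : 0 < G (p (a + 1)).2.2 (p τ).2.2 :=
          descend hAsupp hAnn hz0 hG (τ - (a + 1)) p (a + 1) τ (H + 1) le_rfl (by omega)
            (fun t ht1 ht2 => hstep t (by omega) (by omega))
            (fun t ht1 ht2 => hmin t (by omega) ht2)
            (by omega) (by omega)
        obtain ⟨r, hr⟩ := ih p τ b H (by omega) (by omega)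
          (fun t ht1 ht2 => hstep t (by omega) ht2)
          (fun t ht1 ht2 => hge t (by omega) ht2)
          hτeq hb
        have hApos : 0 < A ((p (a + 1)).1 - (p a).1) 1 (p a).2.2 (p (a + 1)).2.2 := by
          have hs2 := istep_pos hs; rwa [h] at hs2
        have hP1 := AstarR_entry_pos hAnn hz0 hx1 hApos
        have hP1G : 0 < (AstarR s0 A z0 1 * G) (p a).2.2 (p τ).2.2 :=
          mul_entry_pos (Ent_AstarR hAnn hz0 1) (entG hG) hP1 hGseg1
        have hBpos : 0 < Bmat A z0 G (p a).2.2 (p τ).2.2 :=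
          lt_of_lt_of_le hP1G (B_ge_P1G hAnn hz0 _ _)
        refine ⟨r + 1, ?_⟩
        rw [pow_succ']
        exact mul_entry_pos (Ent_B hAnn hz0 (entG hG))
          ((Ent_B hAnn hz0 (entG hG)).pow r) hBpos hr

end PathsCore

end Aux19

namespace Aux19

open QBD Matrix

section Climb

variable {s0 : ℕ} {A : ℤ → ℤ → Matrix (Fin s0) (Fin s0) ℝ} {z0 : ℝ}
  {G : Matrix (Fin s0) (Fin s0) ℝ}

lemma climb (hAsupp : ∀ i j : ℤ, ¬(i ∈ Hs ∧ j ∈ Hs) → A i j = 0)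
    (hAnn : ∀ i j : ℤ, ∀ k l, 0 ≤ A i j k l) (hz0 : 0 < z0)
    (hG : IsMinSolG1 s0 A z0 G)
    (hI1 : ∀ l : Fin s0, ∃ r : ℕ, ∃ j : Fin s0,
      0 < (Bmat A z0 G ^ r * AstarR s0 A z0 (-1)) l j) :
    ∀ (k : ℕ) (p : ℕ → ℤ × ℤ × Fin s0) (a b : ℕ) (H : ℤ),
      a ≤ b →
      (∀ t, a ≤ t → t < b → IStep A p t) →
      (∀ t, a ≤ t → t ≤ b → H ≤ (p t).2.1) →
      (p a).2.1 = H → (p b).2.1 = H + (k : ℤ) →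
      0 < (Nmat A z0 G * (AstarR s0 A z0 1 * Nmat A z0 G) ^ k) (p a).2.2 (p b).2.2 := by
  intro k
  induction k with
  | zero =>
    intro p a b H hab hstep hge ha hb
    obtain ⟨r, hr⟩ := levelReturn hAsupp hAnn hz0 hG (b - a) p a b H le_rfl hab hstep hge ha
      (by rw [hb]; simp)
    rw [pow_zero, mul_one]
    exact lt_of_lt_of_le hr (N_ge_pow hAnn hz0 hG hI1 r _ _)
  | succ k ih =>
    intro p a b H hab hstep hge ha hb
    classical
    set P : ℕ → Prop := fun t => a ≤ t ∧ (p t).2.1 = H with hPdef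
    have hPa : P a := ⟨le_rfl, ha⟩
    set τ := Nat.findGreatest P b with hτdef
    have hτle : τ ≤ b := Nat.findGreatest_le b
    have haτ : a ≤ τ := Nat.le_findGreatest hab hPa
    have hτspec : P τ := Nat.findGreatest_spec hab hPa
    have hτH : (p τ).2.1 = H := hτspec.2
    have hup : ∀ t, τ < t → t ≤ b → H + 1 ≤ (p t).2.1 := by
      intro t h1 h2
      have hne : (p t).2.1 ≠ H := fun he =>
        (Nat.findGreatest_is_greatest h1 h2) ⟨by omega, he⟩
      have := hge t (by omega) h2
      omega
    have hτb : τ < b := by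
      rcases Nat.lt_or_ge τ b with h' | h'
      · exact h'
      · exfalso
        have hτe : τ = b := by omega
        rw [hτe] at hτH
        rw [hb] at hτH
        omega
    -- the step at τ goes up to H+1
    have hs := hstep τ haτ hτb
    obtain ⟨hx1, hh1⟩ := pos_entry_mem hAsupp hs
    rw [mem_Hs] at hh1
    have hup1 : H + 1 ≤ (p (τ + 1)).2.1 := hup (τ + 1) (by omega) (by omega)
    have hτ1H : (p (τ + 1)).2.1 = H + 1 := by
      have hs2 := istep_pos hs
      rcases hh1 with h | h | h <;> omega
    have hP1 : 0 < AstarR s0 A z0 1 (p τ).2.2 (p (τ + 1)).2.2 := by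
      have hs2 := istep_pos hs
      have hΔ : (p (τ + 1)).2.1 - (p τ).2.1 = 1 := by omega
      rw [hΔ] at hs2
      exact AstarR_entry_pos hAnn hz0 hx1 hs2
    -- segment [a, τ] : level return
    obtain ⟨r, hr⟩ := levelReturn hAsupp hAnn hz0 hG (τ - a) p a τ H le_rfl haτ
      (fun t ht1 ht2 => hstep t ht1 (by omega))
      (fun t ht1 ht2 => hge t ht1 (by omega)) ha hτH
    have hN1 : 0 < Nmat A z0 G (p a).2.2 (p τ).2.2 :=
      lt_of_lt_of_le hr (N_ge_pow hAnn hz0 hG hI1 r _ _)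
    -- segment [τ+1, b] : induction
    have hIH : 0 < (Nmat A z0 G * (AstarR s0 A z0 1 * Nmat A z0 G) ^ k)
        (p (τ + 1)).2.2 (p b).2.2 :=
      ih p (τ + 1) b (H + 1) (by omega)
        (fun t ht1 ht2 => hstep t (by omega) ht2)
        (fun t ht1 ht2 => hup t (by omega) ht2)
        hτ1H
        (by rw [hb]; push_cast; ring)
    -- combine
    have hEntN : Ent (Nmat A z0 G) := Ent_N hAnn hz0 hG hI1
    have hEntP1 : Ent (AstarR s0 A z0 1) := Ent_AstarR hAnn hz0 1
    have hEntX : Ent (Nmat A z0 G * (AstarR s0 A z0 1 * Nmat A z0 G) ^ k) :=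
      hEntN.mul ((hEntP1.mul hEntN).pow k)
    have hrw : Nmat A z0 G * (AstarR s0 A z0 1 * Nmat A z0 G) ^ (k + 1)
        = Nmat A z0 G * (AstarR s0 A z0 1
            * (Nmat A z0 G * (AstarR s0 A z0 1 * Nmat A z0 G) ^ k)) := by
      rw [pow_succ', mul_assoc (AstarR s0 A z0 1) (Nmat A z0 G)
        ((AstarR s0 A z0 1 * Nmat A z0 G) ^ k)]
    rw [hrw]
    exact mul_entry_pos hEntN (hEntP1.mul hEntX) hN1
      (mul_entry_pos hEntP1 hEntX hP1 hIH)

end Climb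

end Aux19

namespace Aux19

open QBD Matrix

section Boundary

variable {s0 : ℕ} {A A1 : ℤ → ℤ → Matrix (Fin s0) (Fin s0) ℝ} {z0 : ℝ}
  {G : Matrix (Fin s0) (Fin s0) ℝ}

lemma A1starR_eq (i : ℤ) : A1starR s0 A1 z0 i = AstarR s0 A1 z0 i := rfl

lemma C1_ge_Q0 (hA1nn : ∀ i j : ℤ, ∀ k l, 0 ≤ A1 i j k l) (hz0 : 0 < z0)
    (hGnn : Ent G) (k l : Fin s0) :
    AstarR s0 A1 z0 0 k l ≤ C1matR s0 A1 z0 G k l := by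
  have h := ((Ent_AstarR hA1nn hz0 1).mul hGnn) k l
  rw [C1matR, A1starR_eq, A1starR_eq, Matrix.add_apply]
  linarith

lemma C1_ge_Q1G (hA1nn : ∀ i j : ℤ, ∀ k l, 0 ≤ A1 i j k l) (hz0 : 0 < z0)
    (hGnn : Ent G) (k l : Fin s0) :
    (AstarR s0 A1 z0 1 * G) k l ≤ C1matR s0 A1 z0 G k l := by
  have h := Ent_AstarR hA1nn hz0 (A := A1) (z0 := z0) 0 k l
  rw [C1matR, A1starR_eq, A1starR_eq, Matrix.add_apply]
  linarith

lemma Ent_C1 (hA1nn : ∀ i j : ℤ, ∀ k l, 0 ≤ A1 i j k l) (hz0 : 0 < z0)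
    (hGnn : Ent G) : Ent (C1matR s0 A1 z0 G) := by
  have : C1matR s0 A1 z0 G = AstarR s0 A1 z0 0 + AstarR s0 A1 z0 1 * G := rfl
  rw [this]
  exact (Ent_AstarR hA1nn hz0 0).add ((Ent_AstarR hA1nn hz0 1).mul hGnn)

/-- map a half-plane path into a `ℤ`-heights path -/
def liftq (p : ℕ → ℤ × ℕ × Fin s0) : ℕ → ℤ × ℤ × Fin s0 :=
  fun t => ((p t).1, ((p t).2.1 : ℤ), (p t).2.2)

lemma boundary_return (hAsupp : ∀ i j : ℤ, ¬(i ∈ Hs ∧ j ∈ Hs) → A i j = 0)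
    (hA1supp : ∀ i j : ℤ, ¬(i ∈ Hs ∧ j ∈ Hps) → A1 i j = 0)
    (hAnn : ∀ i j : ℤ, ∀ k l, 0 ≤ A i j k l)
    (hA1nn : ∀ i j : ℤ, ∀ k l, 0 ≤ A1 i j k l) (hz0 : 0 < z0)
    (hG : IsMinSolG1 s0 A z0 G) :
    ∀ fuel : ℕ, ∀ (p : ℕ → ℤ × ℕ × Fin s0) (a b : ℕ),
      b - a ≤ fuel → a < b →
      (∀ t, a ≤ t → t < b → 0 < half1Kernel s0 A A1 (p t) (p (t + 1))) →
      (p a).2.1 = 0 → (p b).2.1 = 0 →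
      ∃ m : ℕ, 0 < (C1matR s0 A1 z0 G ^ m) (p a).2.2 (p b).2.2 := by
  intro fuel
  induction fuel with
  | zero => intro p a b hf hab _ _ _; omega
  | succ fuel ih =>
    intro p a b hf hab hstep ha hb
    classical
    have hk := hstep a le_rfl hab
    rw [half1Kernel, if_pos ha] at hk
    obtain ⟨hx1, hh1⟩ := pos_entry_mem1 hA1supp hk
    rw [mem_Hps] at hh1
    have hEntC : Ent (C1matR s0 A1 z0 G) := Ent_C1 hA1nn hz0 (entG hG)
    rcases hh1 with h | h
    · -- stays at the boundary
      have hnext : (p (a + 1)).2.1 = 0 := by omega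
      have hΔ : ((p (a + 1)).2.1 : ℤ) - ((p a).2.1 : ℤ) = 0 := by omega
      rw [hΔ] at hk
      have hQ0 : 0 < AstarR s0 A1 z0 0 (p a).2.2 (p (a + 1)).2.2 :=
        AstarR_entry_pos hA1nn hz0 hx1 hk
      have hC : 0 < C1matR s0 A1 z0 G (p a).2.2 (p (a + 1)).2.2 :=
        lt_of_lt_of_le hQ0 (C1_ge_Q0 hA1nn hz0 (entG hG) _ _)
      rcases Nat.eq_or_lt_of_le (show a + 1 ≤ b by omega) with he | hlt
      · refine ⟨1, ?_⟩
        rw [pow_one, ← he]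
        exact hC
      · obtain ⟨m, hm⟩ := ih p (a + 1) b (by omega) hlt
          (fun t ht1 ht2 => hstep t (by omega) ht2) hnext hb
        refine ⟨m + 1, ?_⟩
        rw [pow_succ']
        exact mul_entry_pos hEntC (hEntC.pow m) hC hm
    · -- jumps to level 1
      have hnext : (p (a + 1)).2.1 = 1 := by omega
      have hΔ : ((p (a + 1)).2.1 : ℤ) - ((p a).2.1 : ℤ) = 1 := by omega
      rw [hΔ] at hk
      have hQ1 : 0 < AstarR s0 A1 z0 1 (p a).2.2 (p (a + 1)).2.2 :=
        AstarR_entry_pos hA1nn hz0 hx1 hk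
      -- first return to the boundary
      have hPex : ∃ t, a < t ∧ t ≤ b ∧ (p t).2.1 = 0 := ⟨b, hab, le_rfl, hb⟩
      set τ := Nat.find hPex with hτdef
      obtain ⟨hτ1, hτ2, hτ3⟩ := Nat.find_spec hPex
      rw [← hτdef] at hτ1 hτ2 hτ3
      have hmin : ∀ t, a < t → t < τ → 1 ≤ (p t).2.1 := by
        intro t ht1 ht2
        have h' := Nat.find_min hPex ht2
        by_contra hc
        exact h' ⟨ht1, by omega, by omega⟩
      have hτa2 : a + 2 ≤ τ := by
        by_contra hc
        have hτe : τ = a + 1 := by omega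
        rw [hτe] at hτ3
        omega
      -- interior steps between a+1 and τ
      have histq : ∀ t, a + 1 ≤ t → t < τ → IStep A (liftq p) t := by
        intro t ht1 ht2
        have hk' := hstep t (by omega) (by omega)
        have hne : ¬ (p t).2.1 = 0 := by
          have := hmin t (by omega) ht2
          omega
        rw [half1Kernel, if_neg hne] at hk'
        exact hk'
      have hdesc : 0 < G (p (a + 1)).2.2 (p τ).2.2 := by
        have := descend hAsupp hAnn hz0 hG (τ - (a + 1)) (liftq p) (a + 1) τ 1 le_rfl
          (by omega) histq
          (fun t ht1 ht2 => by
            have := hmin t (by omega) ht2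
            show (1 : ℤ) ≤ ((p t).2.1 : ℤ)
            omega)
          (by show ((p (a + 1)).2.1 : ℤ) = 1; omega)
          (by show ((p τ).2.1 : ℤ) = 1 - 1; omega)
        exact this
      have hC : 0 < C1matR s0 A1 z0 G (p a).2.2 (p τ).2.2 := by
        refine lt_of_lt_of_le ?_ (C1_ge_Q1G hA1nn hz0 (entG hG) _ _)
        exact mul_entry_pos (Ent_AstarR hA1nn hz0 1) (entG hG) hQ1 hdesc
      rcases Nat.eq_or_lt_of_le hτ2 with he | hlt
      · refine ⟨1, ?_⟩
        rw [pow_one, ← he]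
        exact hC
      · obtain ⟨m, hm⟩ := ih p τ b (by omega) hlt
          (fun t ht1 ht2 => hstep t (by omega) ht2) hτ3 hb
        refine ⟨m + 1, ?_⟩
        rw [pow_succ']
        exact mul_entry_pos hEntC (hEntC.pow m) hC hm

end Boundary

end Aux19

namespace Aux19

open QBD Matrix

theorem mainHalf (s0 : ℕ) (hs0 : 1 ≤ s0)
    (A A1 : ℤ → ℤ → Matrix (Fin s0) (Fin s0) ℝ)
    (hAsupp : ∀ i j : ℤ, ¬(i ∈ Hs ∧ j ∈ Hs) → A i j = 0)
    (hA1supp : ∀ i j : ℤ, ¬(i ∈ Hs ∧ j ∈ Hps) → A1 i j = 0)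
    (hAnn : ∀ i j : ℤ, ∀ k l, 0 ≤ A i j k l)
    (hA1nn : ∀ i j : ℤ, ∀ k l, 0 ≤ A1 i j k l)
    (hfull_i : ChainIrreducible (fullKernel s0 A))
    (hh1_i : ChainIrreducible (half1Kernel s0 A A1))
    (z0 : ℝ) (hz0 : 0 < z0)
    (G1z : Matrix (Fin s0) (Fin s0) ℝ) (hG : IsMinSolG1 s0 A z0 G1z)
    (u : Fin s0 → ℝ) (hune : u ≠ 0) (hunn : ∀ i, 0 ≤ u i)
    (hufix : Matrix.vecMul u (C1matR s0 A1 z0 G1z) = u) :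
    IsUnit (1 - AstarR s0 A z0 0 - AstarR s0 A z0 1 * G1z) ∧
    (∀ i, 0 < u i) ∧
    (∀ k : ℕ, ∀ i, 0 <
      Matrix.vecMul u
        (A1starR s0 A1 z0 1 * (1 - AstarR s0 A z0 0 - AstarR s0 A z0 1 * G1z)⁻¹ *
          (AstarR s0 A z0 1 * (1 - AstarR s0 A z0 0 - AstarR s0 A z0 1 * G1z)⁻¹) ^ k) i) := by
  classical
  have hkerfull : ∀ a b, 0 ≤ fullKernel s0 A a b := fun a b => hAnn _ _ _ _
  have hkerh1 : ∀ a b, 0 ≤ half1Kernel s0 A A1 a b := by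
    intro a b
    rw [half1Kernel]
    split
    · exact hA1nn _ _ _ _
    · exact hAnn _ _ _ _
  -- (I1): from every phase one can eventually descend
  have hI1 : ∀ l : Fin s0, ∃ r : ℕ, ∃ j : Fin s0,
      0 < (Bmat A z0 G1z ^ r * AstarR s0 A z0 (-1)) l j := by
    intro l
    obtain ⟨n, hn1, hnpos⟩ := hfull_i (0, 1, l) (0, 0, l)
    obtain ⟨p, hp0, hpn, hps⟩ := stepN_pos_path hkerfull n _ _ hnpos
    have hist : ∀ t, t < n → IStep A p t := fun t ht => hps t ht
    have hPex : ∃ t, t ≤ n ∧ (p t).2.1 ≤ 0 := ⟨n, le_rfl, by rw [hpn]⟩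
    set τ := Nat.find hPex with hτdef
    obtain ⟨hτn, hτ0⟩ := Nat.find_spec hPex
    rw [← hτdef] at hτn hτ0
    have hmin : ∀ t, t < τ → 1 ≤ (p t).2.1 := by
      intro t ht
      have h' := Nat.find_min hPex ht
      by_contra hc
      exact h' ⟨by omega, by omega⟩
    have hτ1 : 1 ≤ τ := by
      by_contra hc
      have hτe : τ = 0 := by omega
      rw [hτe] at hτ0
      rw [hp0] at hτ0
      simp at hτ0
    have hst := hist (τ - 1) (by omega)
    have hs2 := istep_pos hst
    obtain ⟨hx1, hh⟩ := pos_entry_mem hAsupp hs2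
    rw [mem_Hs] at hh
    have heq1 : τ - 1 + 1 = τ := by omega
    rw [heq1] at hs2 hh hx1
    have hmid : 1 ≤ (p (τ - 1)).2.1 := hmin (τ - 1) (by omega)
    have hτeq : (p τ).2.1 = 0 := by rcases hh with h | h | h <;> omega
    have hprev : (p (τ - 1)).2.1 = 1 := by rcases hh with h | h | h <;> omega
    obtain ⟨r, hr⟩ := levelReturn hAsupp hAnn hz0 hG (τ - 1) p 0 (τ - 1) 1 le_rfl
      (by omega)
      (fun t ht1 ht2 => hist t (by omega))
      (fun t ht1 ht2 => hmin t (by omega))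
      (by rw [hp0]) hprev
    have hΔ : (p τ).2.1 - (p (τ - 1)).2.1 = -1 := by omega
    rw [hΔ] at hs2
    have hPm : 0 < AstarR s0 A z0 (-1) (p (τ - 1)).2.2 (p τ).2.2 :=
      AstarR_entry_pos hAnn hz0 hx1 hs2
    refine ⟨r, (p τ).2.2, ?_⟩
    rw [hp0] at hr
    exact mul_entry_pos ((Ent_B hAnn hz0 (entG hG)).pow r)
      (Ent_AstarR hAnn hz0 (-1)) hr hPm
  -- the Neumann inverse
  have hNl := N_left_inv hAnn hz0 hG hI1
  have hNr := N_right_inv hAnn hz0 hG hI1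
  have hBeq : (1 : Matrix (Fin s0) (Fin s0) ℝ) - AstarR s0 A z0 0 - AstarR s0 A z0 1 * G1z
      = 1 - Bmat A z0 G1z := by
    rw [Bmat, sub_sub]
  have hUnit : IsUnit (1 - AstarR s0 A z0 0 - AstarR s0 A z0 1 * G1z) := by
    rw [hBeq]
    exact ⟨⟨1 - Bmat A z0 G1z, Nmat A z0 G1z, hNl, hNr⟩, rfl⟩
  have hInv : (1 - AstarR s0 A z0 0 - AstarR s0 A z0 1 * G1z)⁻¹ = Nmat A z0 G1z := by
    rw [hBeq]
    exact Matrix.inv_eq_right_inv hNl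
  -- u is positive
  have hEntC : Ent (C1matR s0 A1 z0 G1z) := Ent_C1 hA1nn hz0 (entG hG)
  have hfixpow : ∀ m : ℕ, Matrix.vecMul u (C1matR s0 A1 z0 G1z ^ m) = u := by
    intro m
    induction m with
    | zero => rw [pow_zero, Matrix.vecMul_one]
    | succ m ih => rw [pow_succ, ← Matrix.vecMul_vecMul, ih, hufix]
  obtain ⟨k0, hk0⟩ := Function.ne_iff.mp hune
  have hk0pos : 0 < u k0 := lt_of_le_of_ne (hunn k0) (Ne.symm hk0)
  have hupos : ∀ i, 0 < u i := by
    intro i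
    obtain ⟨n, hn1, hnpos⟩ := hh1_i (0, 0, k0) (0, 0, i)
    obtain ⟨p, hp0, hpn, hps⟩ := stepN_pos_path hkerh1 n _ _ hnpos
    obtain ⟨m, hm⟩ := boundary_return hAsupp hA1supp hAnn hA1nn hz0 hG n p 0 n
      (by omega) (by omega) (fun t _ ht2 => hps t ht2)
      (by rw [hp0]) (by rw [hpn])
    rw [hp0, hpn] at hm
    have := hfixpow m
    have hui : u i = ∑ j, u j * (C1matR s0 A1 z0 G1z ^ m) j i := by
      conv_lhs => rw [← this]
      rfl
    rw [hui]
    refine Finset.sum_pos' (fun j _ => mul_nonneg (hunn j) ((hEntC.pow m) j i)) ?_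
    exact ⟨k0, Finset.mem_univ k0, mul_pos hk0pos hm⟩
  refine ⟨hUnit, hupos, ?_⟩
  -- positivity of u A1*1 N (P1 N)^k
  intro k i
  obtain ⟨n, hn1, hnpos⟩ := hh1_i (0, 0, ⟨0, hs0⟩) (0, k + 1, i)
  obtain ⟨p, hp0, hpn, hps⟩ := stepN_pos_path hkerh1 n _ _ hnpos
  have h0h : (p 0).2.1 = 0 := by rw [hp0]
  have hnh : (p n).2.1 = k + 1 := by rw [hpn]
  -- last boundary visit
  set P : ℕ → Prop := fun t => (p t).2.1 = 0 with hPdef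
  set τ := Nat.findGreatest P n with hτdef
  have hτle : τ ≤ n := Nat.findGreatest_le n
  have hτspec : P τ := Nat.findGreatest_spec (Nat.zero_le n) h0h
  have hup : ∀ t, τ < t → t ≤ n → 1 ≤ (p t).2.1 := by
    intro t h1 h2
    have hne : ¬ P t := Nat.findGreatest_is_greatest h1 h2
    rw [hPdef] at hne
    omega
  have hτn : τ < n := by
    rcases Nat.lt_or_ge τ n with h' | h'
    · exact h'
    · exfalso
      have hτe : τ = n := by omega
      rw [hτe] at hτspec
      rw [hPdef] at hτspec
      omega
  -- the boundary step at τ goes up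
  have hk1 := hps τ hτn
  rw [half1Kernel, if_pos hτspec] at hk1
  obtain ⟨hx1, hh1⟩ := pos_entry_mem1 hA1supp hk1
  rw [mem_Hps] at hh1
  have hτ1h : (p (τ + 1)).2.1 = 1 := by
    have := hup (τ + 1) (by omega) (by omega)
    have hτ0 : (p τ).2.1 = 0 := hτspec
    rcases hh1 with h | h <;> omega
  have hΔ : ((p (τ + 1)).2.1 : ℤ) - ((p τ).2.1 : ℤ) = 1 := by
    have hτ0 : (p τ).2.1 = 0 := hτspec
    omega
  rw [hΔ] at hk1
  have hQ1 : 0 < AstarR s0 A1 z0 1 (p τ).2.2 (p (τ + 1)).2.2 :=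
    AstarR_entry_pos hA1nn hz0 hx1 hk1
  -- interior climb from τ+1 to n
  have histq : ∀ t, τ + 1 ≤ t → t < n → IStep A (liftq p) t := by
    intro t ht1 ht2
    have hk' := hps t ht2
    have hne : ¬ (p t).2.1 = 0 := by
      have := hup t (by omega) (by omega)
      omega
    rw [half1Kernel, if_neg hne] at hk'
    exact hk'
  have hclimb : 0 < (Nmat A z0 G1z * (AstarR s0 A z0 1 * Nmat A z0 G1z) ^ k)
      (p (τ + 1)).2.2 (p n).2.2 := by
    have := climb hAsupp hAnn hz0 hG hI1 k (liftq p) (τ + 1) n 1 (by omega) histq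
      (fun t ht1 ht2 => by
        have := hup t (by omega) ht2
        show (1 : ℤ) ≤ ((p t).2.1 : ℤ)
        omega)
      (by show ((p (τ + 1)).2.1 : ℤ) = 1; omega)
      (by show ((p n).2.1 : ℤ) = 1 + (k : ℤ); omega)
    exact this
  -- assemble the row-vector positivity
  have hEntN : Ent (Nmat A z0 G1z) := Ent_N hAnn hz0 hG hI1
  have hEntP1 : Ent (AstarR s0 A z0 1) := Ent_AstarR hAnn hz0 1
  have hEntQ1 : Ent (AstarR s0 A1 z0 1) := Ent_AstarR hA1nn hz0 1
  have hEntX : Ent (Nmat A z0 G1z * (AstarR s0 A z0 1 * Nmat A z0 G1z) ^ k) :=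
    hEntN.mul ((hEntP1.mul hEntN).pow k)
  have hMpos : 0 < (AstarR s0 A1 z0 1
      * (Nmat A z0 G1z * (AstarR s0 A z0 1 * Nmat A z0 G1z) ^ k)) (p τ).2.2 (p n).2.2 :=
    mul_entry_pos hEntQ1 hEntX hQ1 hclimb
  have hMrw : A1starR s0 A1 z0 1 * (1 - AstarR s0 A z0 0 - AstarR s0 A z0 1 * G1z)⁻¹ *
      (AstarR s0 A z0 1 * (1 - AstarR s0 A z0 0 - AstarR s0 A z0 1 * G1z)⁻¹) ^ k
      = AstarR s0 A1 z0 1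
        * (Nmat A z0 G1z * (AstarR s0 A z0 1 * Nmat A z0 G1z) ^ k) := by
    rw [hInv, A1starR_eq, mul_assoc]
  rw [hMrw]
  have hvm : Matrix.vecMul u (AstarR s0 A1 z0 1
      * (Nmat A z0 G1z * (AstarR s0 A z0 1 * Nmat A z0 G1z) ^ k)) i
      = ∑ j, u j * (AstarR s0 A1 z0 1
        * (Nmat A z0 G1z * (AstarR s0 A z0 1 * Nmat A z0 G1z) ^ k)) j i := rfl
  rw [hvm]
  refine Finset.sum_pos' (fun j _ => mul_nonneg (hunn j)
    ((hEntQ1.mul hEntX) j i)) ?_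
  refine ⟨(p τ).2.2, Finset.mem_univ _, mul_pos (hupos _) ?_⟩
  have hpn2 : (p n).2.2 = i := by rw [hpn]
  rw [← hpn2]
  exact hMpos

end Aux19

open QBD in
/-- positivity of the invariant row vector `u` of `C1(z0, G1(z0))` (resp.
`C2(G2(w0), w0)`) and of `u A¹_{*,1}(z0) N1(z0) R1(z0)^k` (resp.
`u A²_{1,*}(w0) N2(w0) R2(w0)^k`), together with existence of the inverse defining
`N1(z0)` (resp. `N2(w0)`). -/
theorem statement19
    (s0 : ℕ) (hs0 : 1 ≤ s0)
    (A A1 A2 : ℤ → ℤ → Matrix (Fin s0) (Fin s0) ℝ)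
    (hAsupp : ∀ i j : ℤ, ¬(i ∈ Hs ∧ j ∈ Hs) → A i j = 0)
    (hA1supp : ∀ i j : ℤ, ¬(i ∈ Hs ∧ j ∈ Hps) → A1 i j = 0)
    (hA2supp : ∀ i j : ℤ, ¬(i ∈ Hps ∧ j ∈ Hs) → A2 i j = 0)
    (hAnn : ∀ i j : ℤ, ∀ k l, 0 ≤ A i j k l)
    (hA1nn : ∀ i j : ℤ, ∀ k l, 0 ≤ A1 i j k l)
    (hA2nn : ∀ i j : ℤ, ∀ k l, 0 ≤ A2 i j k l)
    (hAst : IsStochastic (∑ i ∈ Hs, ∑ j ∈ Hs, A i j))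
    (hA1st : IsStochastic (∑ i ∈ Hs, ∑ j ∈ Hps, A1 i j))
    (hA2st : IsStochastic (∑ i ∈ Hps, ∑ j ∈ Hs, A2 i j))
    -- Assumption (A2)
    (hfull_i : ChainIrreducible (fullKernel s0 A))
    (hfull_a : ChainAperiodic (fullKernel s0 A))
    (hh1_i : ChainIrreducible (half1Kernel s0 A A1))
    (hh1_a : ChainAperiodic (half1Kernel s0 A A1))
    (hh2_i : ChainIrreducible (half2Kernel s0 A A2))
    (hh2_a : ChainAperiodic (half2Kernel s0 A A2)) :
    (∀ z0 ∈ Set.Icc (zLow1 s0 A) (zUp1 s0 A),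
      ∀ G1z : Matrix (Fin s0) (Fin s0) ℝ, IsMinSolG1 s0 A z0 G1z →
      sprR (C1matR s0 A1 z0 G1z) = 1 →
      ∀ u : Fin s0 → ℝ, u ≠ 0 → (∀ i, 0 ≤ u i) →
      Matrix.vecMul u (C1matR s0 A1 z0 G1z) = u →
      IsUnit (1 - AstarR s0 A z0 0 - AstarR s0 A z0 1 * G1z) ∧
      (∀ i, 0 < u i) ∧
      (∀ k : ℕ, ∀ i, 0 <
        Matrix.vecMul u
          (A1starR s0 A1 z0 1 * (1 - AstarR s0 A z0 0 - AstarR s0 A z0 1 * G1z)⁻¹ *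
            (AstarR s0 A z0 1 * (1 - AstarR s0 A z0 0 - AstarR s0 A z0 1 * G1z)⁻¹) ^ k) i)) ∧
    (∀ w0 ∈ Set.Icc (zLow2 s0 A) (zUp2 s0 A),
      ∀ G2w : Matrix (Fin s0) (Fin s0) ℝ, IsMinSolG2 s0 A w0 G2w →
      sprR (C2matR s0 A2 G2w w0) = 1 →
      ∀ u : Fin s0 → ℝ, u ≠ 0 → (∀ i, 0 ≤ u i) →
      Matrix.vecMul u (C2matR s0 A2 G2w w0) = u →
      IsUnit (1 - ArowR s0 A w0 0 - ArowR s0 A w0 1 * G2w) ∧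
      (∀ i, 0 < u i) ∧
      (∀ k : ℕ, ∀ i, 0 <
        Matrix.vecMul u
          (A2rowR s0 A2 w0 1 * (1 - ArowR s0 A w0 0 - ArowR s0 A w0 1 * G2w)⁻¹ *
            (ArowR s0 A w0 1 * (1 - ArowR s0 A w0 0 - ArowR s0 A w0 1 * G2w)⁻¹) ^ k) i)) := by
  constructor
  · intro z0 hz0 G1z hG _hspr u hune hunn hufix
    exact Aux19.mainHalf s0 hs0 A A1 hAsupp hA1supp hAnn hA1nn hfull_i hh1_i z0
      (lt_of_lt_of_le (Real.exp_pos _) hz0.1) G1z hG u hune hunn hufix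
  · intro w0 hw0 G2w hG2 _hspr u hune hunn hufix
    have hw0pos : (0 : ℝ) < w0 := lt_of_lt_of_le (Real.exp_pos _) hw0.1
    have hfull' : ChainIrreducible (fullKernel s0 (fun i j => A j i)) :=
      Aux19.ChainIrreducible.comp_equiv
        (⟨fun x => (x.2.1, x.1, x.2.2), fun x => (x.2.1, x.1, x.2.2),
          fun _ => rfl, fun _ => rfl⟩ : (ℤ × ℤ × Fin s0) ≃ (ℤ × ℤ × Fin s0)) hfull_i
    have hh1' : ChainIrreducible (half1Kernel s0 (fun i j => A j i) (fun i j => A2 j i)) :=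
      Aux19.ChainIrreducible.comp_equiv
        (⟨fun x => (x.2.1, x.1, x.2.2), fun y => (y.2.1, y.1, y.2.2),
          fun _ => rfl, fun _ => rfl⟩ : (ℤ × ℕ × Fin s0) ≃ (ℕ × ℤ × Fin s0)) hh2_i
    exact Aux19.mainHalf s0 hs0 (fun i j => A j i) (fun i j => A2 j i)
      (fun i j h => hAsupp j i fun hc => h ⟨hc.2, hc.1⟩)
      (fun i j h => hA2supp j i fun hc => h ⟨hc.2, hc.1⟩)
      (fun i j k l => hAnn j i k l)
      (fun i j k l => hA2nn j i k l)
      hfull' hh1' w0 hw0pos G2w hG2 u hune hunn hufix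
end
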